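/- arXiv:1301.3262 — 11 statements merged into one kernel-verified Lean document; each statement's English description precedes it below -/
import Mathlib

section
/- Let p>1, let 0<L<p, and set λ_p=(1−L/p)^p. Let (a_n)_{n≥1} and (b_n)_{n≥1} be positive real sequences with a_1=b_1. Suppose that for every integer n≥1 the following condition holds: (λ_p^{1−1/p}·a_{n+1}/b_{n+1} + 1 − λ_p^{1−1/p})^{1/(p−1)} · ( (λ_p^{1−1/p}·a_n/b_n + 1 − λ_p − λ_p^{1−1/p})^{1/(p−1)} + (a_n/b_{n+1})^{p/(p−1)} ) ≤ (a_{n+1}/b_{n+1})^{p/(p−1)} · (λ_p^{1−1/p}·a_n/b_n + 1 − λ_p − λ_p^{1−1/p})^{1/(p−1)}. Then for every nonnegative real sequence (x_n)_{n≥1} with Σ_{n=1}^∞ x_n^p < ∞, one has Σ_{n=1}^∞ ( (1/a_n) Σ_{k=1}^n b_k x_k )^p ≤ (p/(p−L))^p Σ_{n=1}^∞ x_n^p. -/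
open Finset Real

/-- Partial sum bound from a Schur-type weight sequence. -/
lemma factorable_partial_bound (p lp : ℝ) (hp : 1 < p) (hlp0 : 0 < lp)
    (a b x P : ℕ → ℝ)
    (ha : ∀ n, 1 ≤ n → 0 < a n) (hb : ∀ n, 1 ≤ n → 0 < b n)
    (hx : ∀ n, 1 ≤ n → 0 ≤ x n) (hP : ∀ n, 1 ≤ n → 0 < P n)
    (hkey : ∀ n, 1 ≤ n →
      (∑ k ∈ Finset.Icc 1 n, b k ^ (p / (p - 1)) * P k ^ (1 / (p - 1))) ^ (p - 1)
        ≤ a n ^ p * ((P n - P (n + 1)) / lp)) :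
    ∀ N : ℕ, ∑ n ∈ Finset.Icc 1 N, ((1 / a n) * ∑ k ∈ Finset.Icc 1 n, b k * x k) ^ p
      ≤ (1 / lp) * ∑ k ∈ Finset.Icc 1 N, x k ^ p := by
  have hp0 : (0:ℝ) < p := lt_trans one_pos hp
  have hp1 : (0:ℝ) < p - 1 := by linarith
  set r : ℝ := p / (p - 1) with hr
  have hrq : p⁻¹ + r⁻¹ = 1 := by
    rw [hr, inv_div]
    field_simp
    ring
  have hpq : p.HolderConjugate r := Real.holderConjugate_iff.mpr ⟨hp, hrq⟩
  -- T n
  set T : ℕ → ℝ := fun n => ∑ k ∈ Finset.Icc 1 n, x k ^ p / P k with hT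
  have hTnonneg : ∀ n, 0 ≤ T n := by
    intro n
    apply Finset.sum_nonneg
    intro k hk
    have hk1 : 1 ≤ k := (Finset.mem_Icc.mp hk).1
    exact div_nonneg (Real.rpow_nonneg (hx k hk1) p) (hP k hk1).le
  -- per-n Hölder bound
  have hHolder : ∀ n, 1 ≤ n →
      ((1 / a n) * ∑ k ∈ Finset.Icc 1 n, b k * x k) ^ p
        ≤ ((P n - P (n + 1)) / lp) * T n := by
    intro n hn
    have han := ha n hn
    -- Hölder
    have hfg : ∀ k ∈ Finset.Icc 1 n, b k * x k
        = (x k / P k ^ (1/p)) * (b k * P k ^ (1/p)) := by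
      intro k hk
      have hk1 : 1 ≤ k := (Finset.mem_Icc.mp hk).1
      have hPk : (0:ℝ) < P k ^ (1/p) := Real.rpow_pos_of_pos (hP k hk1) _
      field_simp
    have hHold := Real.inner_le_Lp_mul_Lq_of_nonneg (s := Finset.Icc 1 n)
      (f := fun k => x k / P k ^ (1/p)) (g := fun k => b k * P k ^ (1/p)) hpq
      (fun k hk => div_nonneg (hx k (Finset.mem_Icc.mp hk).1)
        (Real.rpow_nonneg (hP k (Finset.mem_Icc.mp hk).1).le _))
      (fun k hk => mul_nonneg (hb k (Finset.mem_Icc.mp hk).1).le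
        (Real.rpow_nonneg (hP k (Finset.mem_Icc.mp hk).1).le _))
    rw [← Finset.sum_congr rfl hfg] at hHold
    -- identify the two sums
    have hfp : ∀ k ∈ Finset.Icc 1 n, (x k / P k ^ (1/p)) ^ p = x k ^ p / P k := by
      intro k hk
      have hk1 : 1 ≤ k := (Finset.mem_Icc.mp hk).1
      rw [Real.div_rpow (hx k hk1) (Real.rpow_nonneg (hP k hk1).le _),
        ← Real.rpow_mul (hP k hk1).le]
      rw [one_div, inv_mul_cancel₀ (ne_of_gt hp0), Real.rpow_one]
    have hgr : ∀ k ∈ Finset.Icc 1 n, (b k * P k ^ (1/p)) ^ r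
        = b k ^ r * P k ^ (1/(p-1)) := by
      intro k hk
      have hk1 : 1 ≤ k := (Finset.mem_Icc.mp hk).1
      rw [Real.mul_rpow (hb k hk1).le (Real.rpow_nonneg (hP k hk1).le _),
        ← Real.rpow_mul (hP k hk1).le]
      congr 1
      rw [hr]
      field_simp
    rw [Finset.sum_congr rfl hfp, Finset.sum_congr rfl hgr] at hHold
    -- raise to p-th power
    have hsum_bx : (0:ℝ) ≤ ∑ k ∈ Finset.Icc 1 n, b k * x k := by
      apply Finset.sum_nonneg
      intro k hk
      exact mul_nonneg (hb k (Finset.mem_Icc.mp hk).1).le (hx k (Finset.mem_Icc.mp hk).1)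
    have hA : (0:ℝ) ≤ T n := hTnonneg n
    have hB : (0:ℝ) ≤ ∑ k ∈ Finset.Icc 1 n, b k ^ r * P k ^ (1/(p-1)) := by
      apply Finset.sum_nonneg
      intro k hk
      exact mul_nonneg (Real.rpow_nonneg (hb k (Finset.mem_Icc.mp hk).1).le _)
        (Real.rpow_nonneg (hP k (Finset.mem_Icc.mp hk).1).le _)
    have hpow : (∑ k ∈ Finset.Icc 1 n, b k * x k) ^ p
        ≤ T n * (∑ k ∈ Finset.Icc 1 n, b k ^ r * P k ^ (1/(p-1))) ^ (p-1) := by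
      have h1 := Real.rpow_le_rpow hsum_bx hHold hp0.le
      refine le_trans h1 ?_
      rw [Real.mul_rpow (Real.rpow_nonneg hA _) (Real.rpow_nonneg hB _),
        ← Real.rpow_mul hA, ← Real.rpow_mul hB]
      rw [one_div, inv_mul_cancel₀ (ne_of_gt hp0), Real.rpow_one]
      have : 1 / r * p = p - 1 := by rw [hr]; field_simp
      rw [this]
    -- combine with hkey
    have hkeyn := hkey n hn
    have hap : (0:ℝ) < a n ^ p := Real.rpow_pos_of_pos han _
    have expand : ((1 / a n) * ∑ k ∈ Finset.Icc 1 n, b k * x k) ^ p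
        = (∑ k ∈ Finset.Icc 1 n, b k * x k) ^ p / a n ^ p := by
      rw [one_div, inv_mul_eq_div, Real.div_rpow hsum_bx han.le]
    rw [expand]
    rw [div_le_iff₀ hap]
    calc (∑ k ∈ Finset.Icc 1 n, b k * x k) ^ p
        ≤ T n * (∑ k ∈ Finset.Icc 1 n, b k ^ r * P k ^ (1/(p-1))) ^ (p-1) := hpow
      _ ≤ T n * (a n ^ p * ((P n - P (n + 1)) / lp)) := by
          exact mul_le_mul_of_nonneg_left hkeyn hA
      _ = (P n - P (n + 1)) / lp * T n * a n ^ p := by ring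
  -- telescoping
  have htel : ∀ N : ℕ, ∑ n ∈ Finset.Icc 1 N, (P n - P (n + 1)) * T n + P (N + 1) * T N
      ≤ ∑ k ∈ Finset.Icc 1 N, x k ^ p := by
    intro N
    induction N with
    | zero => simp [hT]
    | succ N ih =>
      rw [Finset.sum_Icc_succ_top (by omega : 1 ≤ N + 1),
        Finset.sum_Icc_succ_top (by omega : 1 ≤ N + 1)]
      have hTsucc : T (N + 1) = T N + x (N + 1) ^ p / P (N + 1) :=
        Finset.sum_Icc_succ_top (by omega : 1 ≤ N + 1) _
      have hPn1 : (0:ℝ) < P (N + 1) := hP (N + 1) (by omega)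
      have hPT : P (N + 1) * (x (N + 1) ^ p / P (N + 1)) = x (N + 1) ^ p := by
        field_simp
      nlinarith [ih, hTsucc, hPT]
  -- combine
  intro N
  have step1 : ∑ n ∈ Finset.Icc 1 N, ((1 / a n) * ∑ k ∈ Finset.Icc 1 n, b k * x k) ^ p
      ≤ ∑ n ∈ Finset.Icc 1 N, (P n - P (n + 1)) / lp * T n := by
    apply Finset.sum_le_sum
    intro n hn
    exact hHolder n (Finset.mem_Icc.mp hn).1
  refine le_trans step1 ?_
  have : ∀ n ∈ Finset.Icc 1 N, (P n - P (n + 1)) / lp * T n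
      = (1 / lp) * ((P n - P (n + 1)) * T n) := by
    intro n _
    field_simp
  rw [Finset.sum_congr rfl this, ← Finset.mul_sum]
  apply mul_le_mul_of_nonneg_left _ (by positivity)
  have hPT : 0 ≤ P (N + 1) * T N := mul_nonneg (hP (N+1) (by omega)).le (hTnonneg N)
  linarith [htel N]


private noncomputable def facLam (p lp : ℝ) (a b : ℕ → ℝ) (n : ℕ) : ℝ :=
  lp ^ (1 - 1/p) * (a n / b n) + 1 - lp ^ (1 - 1/p)

private noncomputable def facP (p lp : ℝ) (a b : ℕ → ℝ) (n : ℕ) : ℝ :=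
  ∏ m ∈ Finset.Ico 1 n, ((facLam p lp a b m - lp) / facLam p lp a b m)

set_option maxHeartbeats 1000000 in
lemma factorable_construction (p L lp : ℝ) (hp : 1 < p) (hL0 : 0 < L) (hLp : L < p)
    (hlp : lp = (1 - L / p) ^ p)
    (a b : ℕ → ℝ) (ha : ∀ n, 1 ≤ n → 0 < a n) (hb : ∀ n, 1 ≤ n → 0 < b n)
    (hab : a 1 = b 1)
    (hcond : ∀ n, 1 ≤ n →
      (lp ^ (1 - 1 / p) * (a (n + 1) / b (n + 1)) + 1 - lp ^ (1 - 1 / p)) ^ (1 / (p - 1)) *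
        ((lp ^ (1 - 1 / p) * (a n / b n) + 1 - lp - lp ^ (1 - 1 / p)) ^ (1 / (p - 1)) +
          (a n / b (n + 1)) ^ (p / (p - 1)))
      ≤ (a (n + 1) / b (n + 1)) ^ (p / (p - 1)) *
          (lp ^ (1 - 1 / p) * (a n / b n) + 1 - lp - lp ^ (1 - 1 / p)) ^ (1 / (p - 1))) :
    ∃ P : ℕ → ℝ, (∀ n, 1 ≤ n → 0 < P n) ∧ (∀ n, 1 ≤ n →
      (∑ k ∈ Finset.Icc 1 n, b k ^ (p / (p - 1)) * P k ^ (1 / (p - 1))) ^ (p - 1)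
        ≤ a n ^ p * ((P n - P (n + 1)) / lp)) := by
  have hp0 : (0:ℝ) < p := lt_trans one_pos hp
  have hp1 : (0:ℝ) < p - 1 := by linarith
  have hbase0 : (0:ℝ) < 1 - L / p := by
    rw [sub_pos, div_lt_one hp0]; exact hLp
  have hbase1 : 1 - L / p < 1 := by
    have : 0 < L / p := div_pos hL0 hp0
    linarith
  have hlp0 : (0:ℝ) < lp := by rw [hlp]; exact Real.rpow_pos_of_pos hbase0 p
  have hlp1 : lp < 1 := by
    rw [hlp]
    exact Real.rpow_lt_one hbase0.le hbase1 hp0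
  have hexp0 : (0:ℝ) < 1 - 1/p := by
    rw [sub_pos, div_lt_one hp0]; exact hp
  have hmu0 : (0:ℝ) < lp ^ (1 - 1/p) := Real.rpow_pos_of_pos hlp0 _
  have hmu1 : lp ^ (1 - 1/p) < 1 := Real.rpow_lt_one hlp0.le hlp1 hexp0
  set r : ℝ := p / (p - 1) with hr
  set q' : ℝ := 1 / (p - 1) with hq'
  set Λ : ℕ → ℝ := facLam p lp a b with hΛdef
  set P : ℕ → ℝ := facP p lp a b with hPdef
  have hΛeq : ∀ n, Λ n = lp ^ (1 - 1/p) * (a n / b n) + 1 - lp ^ (1 - 1/p) := by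
    intro n; rw [hΛdef]; rfl
  have hΛpos : ∀ n, 1 ≤ n → 0 < Λ n := by
    intro n hn
    rw [hΛeq]
    have : 0 < a n / b n := div_pos (ha n hn) (hb n hn)
    nlinarith [hmu0, hmu1]
  have hΛ1 : Λ 1 = 1 := by
    rw [hΛeq, hab, div_self (hb 1 le_rfl).ne']
    ring
  have hP1 : P 1 = 1 := by
    simp [hPdef, facP]
  have hPsucc : ∀ n, 1 ≤ n → P (n + 1) = P n * ((Λ n - lp) / Λ n) := by
    intro n hn
    rw [hPdef]
    unfold facP
    rw [Finset.prod_Ico_succ_top hn]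
  -- the rewritten hcond
  have hcond' : ∀ n, 1 ≤ n →
      Λ (n+1) ^ q' * ((Λ n - lp) ^ q' + (a n / b (n+1)) ^ r)
        ≤ (a (n+1) / b (n+1)) ^ r * (Λ n - lp) ^ q' := by
    intro n hn
    have h := hcond n hn
    have e1 : lp ^ (1 - 1 / p) * (a n / b n) + 1 - lp - lp ^ (1 - 1 / p) = Λ n - lp := by
      rw [hΛeq]; ring
    rw [e1] at h
    rw [← hΛeq (n+1)] at h
    exact h
  -- main invariant by induction
  have main : ∀ n, 1 ≤ n → (0 < Λ n - lp ∧ 0 < P n ∧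
      (∑ k ∈ Finset.Icc 1 n, b k ^ r * P k ^ q') ≤ a n ^ r * (P n / Λ n) ^ q') := by
    intro n hn
    induction n, hn using Nat.le_induction with
    | base =>
      refine ⟨by rw [hΛ1]; linarith, by rw [hP1]; norm_num, ?_⟩
      rw [Finset.Icc_self, Finset.sum_singleton, hP1, hΛ1, hab]
      simp [Real.one_rpow]
    | succ n hn ih =>
      obtain ⟨hM, hPn, hS⟩ := ih
      have hbn1 : 0 < b (n+1) := hb (n+1) (by omega)
      have han1 : 0 < a (n+1) := ha (n+1) (by omega)
      have han : 0 < a n := ha n hn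
      have hbn : 0 < b n := hb n hn
      have hΛn1 : 0 < Λ (n+1) := hΛpos (n+1) (by omega)
      have hq'0 : (0:ℝ) < q' := by rw [hq']; positivity
      have hr0 : (0:ℝ) < r := by rw [hr]; positivity
      have hA : (0:ℝ) < Λ (n+1) ^ q' := Real.rpow_pos_of_pos hΛn1 _
      have hB : (0:ℝ) < (Λ n - lp) ^ q' := Real.rpow_pos_of_pos hM _
      have hbr : (0:ℝ) < b (n+1) ^ r := Real.rpow_pos_of_pos hbn1 _
      have hCb : (a n / b (n+1)) ^ r * b (n+1) ^ r = a n ^ r := by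
        rw [← Real.mul_rpow (div_nonneg han.le hbn1.le) hbn1.le,
          div_mul_cancel₀ _ hbn1.ne']
      have hDb : (a (n+1) / b (n+1)) ^ r * b (n+1) ^ r = a (n+1) ^ r := by
        rw [← Real.mul_rpow (div_nonneg han1.le hbn1.le) hbn1.le,
          div_mul_cancel₀ _ hbn1.ne']
      -- the key consequence (C')
      have hC' : b (n+1) ^ r + a n ^ r / (Λ n - lp) ^ q'
          ≤ a (n+1) ^ r / Λ (n+1) ^ q' := by
        have h2 : Λ (n+1) ^ q' * ((Λ n - lp) ^ q' + (a n / b (n+1)) ^ r) * b (n+1) ^ r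
            ≤ (a (n+1) / b (n+1)) ^ r * (Λ n - lp) ^ q' * b (n+1) ^ r :=
          mul_le_mul_of_nonneg_right (hcond' n hn) hbr.le
        have e : b (n+1) ^ r + a n ^ r / (Λ n - lp) ^ q'
            = (b (n+1) ^ r * (Λ n - lp) ^ q' + a n ^ r) / (Λ n - lp) ^ q' := by
          field_simp
        rw [e, div_le_div_iff₀ hB hA]
        nlinarith [h2, hCb, hDb]
      -- positivity of Λ (n+1) - lp
      have harpos : (0:ℝ) < a n ^ r / (Λ n - lp) ^ q' :=
        div_pos (Real.rpow_pos_of_pos han _) hB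
      have hAb : Λ (n+1) ^ q' * b (n+1) ^ r < a (n+1) ^ r := by
        have h3 : b (n+1) ^ r < a (n+1) ^ r / Λ (n+1) ^ q' := by linarith
        calc Λ (n+1) ^ q' * b (n+1) ^ r < Λ (n+1) ^ q' * (a (n+1) ^ r / Λ (n+1) ^ q') :=
              mul_lt_mul_of_pos_left h3 hA
          _ = a (n+1) ^ r := by field_simp
      have htgt : Λ (n+1) < (a (n+1) / b (n+1)) ^ p := by
        have h4 : Λ (n+1) ^ q' < (a (n+1) / b (n+1)) ^ r := by
          rw [Real.div_rpow han1.le hbn1.le, lt_div_iff₀ hbr]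
          exact hAb
        have h5 := Real.rpow_lt_rpow hA.le h4 hp1
        rw [← Real.rpow_mul hΛn1.le, ← Real.rpow_mul (div_nonneg han1.le hbn1.le)] at h5
        have e1 : q' * (p - 1) = 1 := by rw [hq']; field_simp
        have e2 : r * (p - 1) = p := by rw [hr]; field_simp
        rw [e1, e2, Real.rpow_one] at h5
        exact h5
      have ht1 : 1 < a (n+1) / b (n+1) := by
        by_contra hcon
        push_neg at hcon
        have ht0 : 0 < a (n+1) / b (n+1) := div_pos han1 hbn1
        have h6 : (a (n+1) / b (n+1)) ^ p ≤ (a (n+1) / b (n+1)) ^ (1:ℝ) :=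
          Real.rpow_le_rpow_of_exponent_ge ht0 hcon (by linarith)
        rw [Real.rpow_one] at h6
        have h7 : a (n+1) / b (n+1) ≤ Λ (n+1) := by
          rw [hΛeq]
          nlinarith [hmu0, hmu1, ht0]
        linarith
      have hM1 : 0 < Λ (n+1) - lp := by
        have : 1 < Λ (n+1) := by
          rw [hΛeq]
          nlinarith [hmu0]
        linarith
      -- positivity of P (n+1)
      have hPn1 : 0 < P (n+1) := by
        rw [hPsucc n hn]
        exact mul_pos hPn (div_pos hM (hΛpos n hn))
      -- the sum bound
      refine ⟨hM1, hPn1, ?_⟩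
      have hSsucc : (∑ k ∈ Finset.Icc 1 (n+1), b k ^ r * P k ^ q')
          = (∑ k ∈ Finset.Icc 1 n, b k ^ r * P k ^ q') + b (n+1) ^ r * P (n+1) ^ q' :=
        Finset.sum_Icc_succ_top (by omega) _
      have hfrac : P n / Λ n = P (n+1) / (Λ n - lp) := by
        rw [hPsucc n hn]
        field_simp [hM.ne', (hΛpos n hn).ne']
      have hPq : (0:ℝ) < P (n+1) ^ q' := Real.rpow_pos_of_pos hPn1 _
      have hre : a n ^ r * (P n / Λ n) ^ q'
          = (a n ^ r / (Λ n - lp) ^ q') * P (n+1) ^ q' := by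
        rw [hfrac, Real.div_rpow hPn1.le hM.le]
        ring
      have hre2 : a (n+1) ^ r * (P (n+1) / Λ (n+1)) ^ q'
          = (a (n+1) ^ r / Λ (n+1) ^ q') * P (n+1) ^ q' := by
        rw [Real.div_rpow hPn1.le hΛn1.le]
        ring
      rw [hSsucc, hre2]
      calc (∑ k ∈ Finset.Icc 1 n, b k ^ r * P k ^ q') + b (n+1) ^ r * P (n+1) ^ q'
          ≤ a n ^ r * (P n / Λ n) ^ q' + b (n+1) ^ r * P (n+1) ^ q' := by linarith
        _ = (b (n+1) ^ r + a n ^ r / (Λ n - lp) ^ q') * P (n+1) ^ q' := by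
            rw [hre]; ring
        _ ≤ (a (n+1) ^ r / Λ (n+1) ^ q') * P (n+1) ^ q' :=
            mul_le_mul_of_nonneg_right hC' hPq.le
  -- package
  refine ⟨P, fun n hn => (main n hn).2.1, fun n hn => ?_⟩
  obtain ⟨hM, hPn, hS⟩ := main n hn
  have han : 0 < a n := ha n hn
  have hΛn : 0 < Λ n := hΛpos n hn
  have hSnn : (0:ℝ) ≤ ∑ k ∈ Finset.Icc 1 n, b k ^ r * P k ^ q' := by
    apply Finset.sum_nonneg
    intro k hk
    exact mul_nonneg (Real.rpow_nonneg (hb k (Finset.mem_Icc.mp hk).1).le _)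
      (Real.rpow_nonneg ((main k (Finset.mem_Icc.mp hk).1).2.1).le _)
  have h1 := Real.rpow_le_rpow hSnn hS hp1.le
  have e3 : (a n ^ r * (P n / Λ n) ^ q') ^ (p - 1) = a n ^ p * (P n / Λ n) := by
    rw [Real.mul_rpow (Real.rpow_nonneg han.le _) (Real.rpow_nonneg (div_nonneg hPn.le hΛn.le) _),
      ← Real.rpow_mul han.le, ← Real.rpow_mul (div_nonneg hPn.le hΛn.le)]
    have e1 : q' * (p - 1) = 1 := by rw [hq']; field_simp
    have e2 : r * (p - 1) = p := by rw [hr]; field_simp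
    rw [e1, e2, Real.rpow_one]
  have e4 : P n / Λ n = (P n - P (n+1)) / lp := by
    rw [hPsucc n hn]
    field_simp
    ring
  rw [e3, e4] at h1
  exact h1


/-- Theorem (mainthm) on l^p norms of factorable matrices. -/
theorem stmt_0 (p L lp : ℝ) (hp : 1 < p) (hL0 : 0 < L) (hLp : L < p)
    (hlp : lp = (1 - L / p) ^ p)
    (a b : ℕ → ℝ) (ha : ∀ n, 1 ≤ n → 0 < a n) (hb : ∀ n, 1 ≤ n → 0 < b n)
    (hab : a 1 = b 1)
    (hcond : ∀ n, 1 ≤ n →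
      (lp ^ (1 - 1 / p) * (a (n + 1) / b (n + 1)) + 1 - lp ^ (1 - 1 / p)) ^ (1 / (p - 1)) *
        ((lp ^ (1 - 1 / p) * (a n / b n) + 1 - lp - lp ^ (1 - 1 / p)) ^ (1 / (p - 1)) +
          (a n / b (n + 1)) ^ (p / (p - 1)))
      ≤ (a (n + 1) / b (n + 1)) ^ (p / (p - 1)) *
          (lp ^ (1 - 1 / p) * (a n / b n) + 1 - lp - lp ^ (1 - 1 / p)) ^ (1 / (p - 1)))
    (x : ℕ → ℝ) (hx : ∀ n, 1 ≤ n → 0 ≤ x n)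
    (hxsum : Summable fun n : ℕ => x (n + 1) ^ p) :
    ∑' n : ℕ, ENNReal.ofReal (((1 / a (n + 1)) * ∑ k ∈ Finset.Icc 1 (n + 1), b k * x k) ^ p)
      ≤ ENNReal.ofReal ((p / (p - L)) ^ p) * ∑' n : ℕ, ENNReal.ofReal (x (n + 1) ^ p) := by
  have hp0 : (0:ℝ) < p := lt_trans one_pos hp
  have hbase0 : (0:ℝ) < 1 - L / p := by rw [sub_pos, div_lt_one hp0]; exact hLp
  have hlp0 : (0:ℝ) < lp := by rw [hlp]; exact Real.rpow_pos_of_pos hbase0 p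
  -- constant identity
  have hconst : (p / (p - L)) ^ p = 1 / lp := by
    have e0 : 1 - L / p = (p - L) / p := by field_simp
    have e1 : p / (p - L) = ((p - L) / p)⁻¹ := by rw [inv_div]
    rw [hlp, e0, e1, Real.inv_rpow (div_nonneg (by linarith) hp0.le), one_div]
  -- get the weight sequence and the partial sum bound
  obtain ⟨P, hP, hkey⟩ := factorable_construction p L lp hp hL0 hLp hlp a b ha hb hab hcond
  have hpartial := factorable_partial_bound p lp hp hlp0 a b x P ha hb hx hP hkey
  -- nonnegativity of x powers
  have hxp : ∀ k, 1 ≤ k → 0 ≤ x k ^ p := fun k hk => Real.rpow_nonneg (hx k hk) p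
  -- RHS tsum as ofReal
  have hRHS : (∑' n : ℕ, ENNReal.ofReal (x (n + 1) ^ p))
      = ENNReal.ofReal (∑' n : ℕ, x (n + 1) ^ p) :=
    (ENNReal.ofReal_tsum_of_nonneg (fun n => hxp (n+1) (by omega)) hxsum).symm
  -- partial sums of x^p are below tsum
  have htsum_nonneg : (0:ℝ) ≤ ∑' n : ℕ, x (n + 1) ^ p :=
    tsum_nonneg fun n => hxp (n+1) (by omega)
  -- main bound via finite partial sums
  rw [hconst, hRHS, ← ENNReal.ofReal_mul (one_div_nonneg.mpr hlp0.le)]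
  refine Summable.tsum_le_of_sum_le ENNReal.summable ?_
  intro s
  obtain ⟨N, hsN⟩ := s.exists_nat_subset_range
  have hmono : ∑ n ∈ s, ENNReal.ofReal (((1 / a (n + 1)) * ∑ k ∈ Finset.Icc 1 (n + 1), b k * x k) ^ p)
      ≤ ∑ n ∈ Finset.range N, ENNReal.ofReal (((1 / a (n + 1)) * ∑ k ∈ Finset.Icc 1 (n + 1), b k * x k) ^ p) :=
    Finset.sum_le_sum_of_subset hsN
  refine le_trans hmono ?_
  have hAnn : ∀ n : ℕ, 0 ≤ ((1 / a (n + 1)) * ∑ k ∈ Finset.Icc 1 (n + 1), b k * x k) ^ p := by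
    intro n
    apply Real.rpow_nonneg
    apply mul_nonneg (one_div_nonneg.mpr (ha (n+1) (by omega)).le)
    · apply Finset.sum_nonneg
      intro k hk
      exact mul_nonneg (hb k (Finset.mem_Icc.mp hk).1).le (hx k (Finset.mem_Icc.mp hk).1)
  rw [← ENNReal.ofReal_sum_of_nonneg (fun n _ => hAnn n)]
  apply ENNReal.ofReal_le_ofReal
  -- reindex range N to Icc 1 N
  have hreindex : ∑ n ∈ Finset.range N, ((1 / a (n + 1)) * ∑ k ∈ Finset.Icc 1 (n + 1), b k * x k) ^ p
      = ∑ n ∈ Finset.Icc 1 N, ((1 / a n) * ∑ k ∈ Finset.Icc 1 n, b k * x k) ^ p := by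
    rw [← Finset.Ico_add_one_right_eq_Icc, Finset.sum_Ico_eq_sum_range]
    simp only [Nat.add_sub_cancel]
    apply Finset.sum_congr rfl
    intro i _
    rw [add_comm 1 i]
  rw [hreindex]
  refine le_trans (hpartial N) ?_
  apply mul_le_mul_of_nonneg_left _ (by positivity)
  have hreindex2 : ∑ k ∈ Finset.Icc 1 N, x k ^ p = ∑ n ∈ Finset.range N, x (n + 1) ^ p := by
    rw [← Finset.Ico_add_one_right_eq_Icc, Finset.sum_Ico_eq_sum_range]
    simp only [Nat.add_sub_cancel]
    apply Finset.sum_congr rfl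
    intro i _
    rw [add_comm 1 i]
  rw [hreindex2]
  exact Summable.sum_le_tsum (Finset.range N) (fun n _ => hxp (n+1) (by omega)) hxsum
end

section
/- Let (λ_n)_{n≥1} be a positive real sequence with partial sums Λ_n = Σ_{k=1}^n λ_k, and let 0<L<2. Suppose that for every integer n≥1 one has Λ_{n+1}/λ_{n+1} − Λ_n/λ_n ≤ L + (L^2/4)·((1+L/2)/(1−L/2))·1/(Λ_{n+1}/λ_{n+1} + L/2). Then for every nonnegative real sequence (x_n)_{n≥1} with Σ_{n=1}^∞ x_n^2 < ∞, one has Σ_{n=1}^∞ ( (1/Λ_n) Σ_{k=1}^n λ_k x_k )^2 ≤ (2/(2−L))^2 Σ_{n=1}^∞ x_n^2. -/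
set_option maxHeartbeats 1000000 in
/-- Auxiliary purely algebraic step inequality. -/
theorem step_aux (L m a p μ B s t Y : ℝ)
    (hmL : m = 2 - L) (hm0 : 0 < m) (hm2 : m < 2)
    (hp : 0 < p) (hμ : 0 < μ) (hpa : p ≤ a) (hμB : μ ≤ B)
    (hBA : B = a + μ)
    (hBY : B * Y = a * s + μ * t)
    (hc : B / μ - a / p ≤ L + L ^ 2 / 4 * ((1 + L / 2) / (1 - L / 2)) * (1 / (B / μ + L / 2))) :
    (1 + (2 * m * (B - μ) + (4 - m ^ 2) * μ) / (μ * m ^ 2)) * Y ^ 2 ≤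
      (2 * m * (a - p) + (4 - m ^ 2) * p) / (p * m ^ 2) * s ^ 2 + 4 / m ^ 2 * t ^ 2 := by
  have hLm : L = 2 - m := by rw [hmL]; ring
  subst hBA
  have ha : 0 < a := lt_of_lt_of_le hp hpa
  have hB : 0 < a + μ := by linarith
  have h4m : 0 < 4 - m ^ 2 := by nlinarith [mul_pos hm0 (sub_pos.mpr hm2)]
  rw [hLm] at hc
  have hv : (1 : ℝ) ≤ (a + μ) / μ := (one_le_div hμ).mpr hμB
  have hb : (1 : ℝ) ≤ a / p := (one_le_div hp).mpr hpa
  have hD : 0 < (a + μ) / μ + (2 - m) / 2 := by linarith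
  have h1 : ((a + μ) / μ - a / p - (2 - m)) * ((a + μ) / μ + (2 - m) / 2) ≤
      (2 - m) ^ 2 / 4 * ((1 + (2 - m) / 2) / (1 - (2 - m) / 2)) := by
    rw [mul_one_div] at hc
    exact (le_div_iff₀ hD).mp (by linarith)
  have h2 : (2 - m) ^ 2 / 4 * ((1 + (2 - m) / 2) / (1 - (2 - m) / 2)) =
      (2 - m) ^ 2 * (4 - m) / (4 * m) := by
    rw [show (1 : ℝ) + (2 - m) / 2 = (4 - m) / 2 by ring,
      show (1 : ℝ) - (2 - m) / 2 = m / 2 by ring]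
    rw [div_div_div_comm]
    field_simp
  rw [h2] at h1
  have h4 : 4 * m * (((a + μ) / μ - a / p - (2 - m)) * ((a + μ) / μ + (2 - m) / 2)) ≤
      4 * m * ((2 - m) ^ 2 * (4 - m) / (4 * m)) :=
    mul_le_mul_of_nonneg_left h1 (by positivity)
  have h5 : 4 * m * ((2 - m) ^ 2 * (4 - m) / (4 * m)) = (2 - m) ^ 2 * (4 - m) := by
    field_simp
  have h6 : 2 * m * (2 * ((a + μ) / μ) + 2 - m) * (a / p - (a + μ) / μ + 2 - m) =
      -(4 * m * (((a + μ) / μ - a / p - (2 - m)) * ((a + μ) / μ + (2 - m) / 2))) := by ring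
  have hQn : 0 ≤ 2 * m * (2 * ((a + μ) / μ) + 2 - m) * (a / p - (a + μ) / μ + 2 - m) +
      (2 - m) ^ 2 * (4 - m) := by
    rw [h6]; linarith
  have hQp : 0 ≤ 2 * m * (2 * (a + μ) + (2 - m) * μ) * (a * μ - (a + μ) * p + (2 - m) * p * μ) +
      (2 - m) ^ 2 * (4 - m) * p * μ ^ 2 := by
    have e : 2 * m * (2 * (a + μ) + (2 - m) * μ) * (a * μ - (a + μ) * p + (2 - m) * p * μ) +
        (2 - m) ^ 2 * (4 - m) * p * μ ^ 2 =
        (p * μ ^ 2) * (2 * m * (2 * ((a + μ) / μ) + 2 - m) * (a / p - (a + μ) / μ + 2 - m) +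
          (2 - m) ^ 2 * (4 - m)) := by
      field_simp
      ring
    rw [e]
    exact mul_nonneg (by positivity) hQn
  have hW1 : 0 < 2 * m * (a - p) + (4 - m ^ 2) * p := by
    have h7 : 0 ≤ 2 * m * (a - p) := mul_nonneg (by linarith) (by linarith)
    nlinarith [mul_pos h4m hp]
  have hN1 : 0 < 2 * m * a + 4 * μ := by nlinarith [mul_pos hm0 ha]
  have hX : 0 ≤ 4 * (2 * m * (a - p) + (4 - m ^ 2) * p) * (a + μ) ^ 2 * μ -
      (2 * m * a + 4 * μ) * (4 * a ^ 2 * p + (2 * m * (a - p) + (4 - m ^ 2) * p) * μ ^ 2) := by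
    have hid : 4 * (2 * m * (a - p) + (4 - m ^ 2) * p) * (a + μ) ^ 2 * μ -
        (2 * m * a + 4 * μ) * (4 * a ^ 2 * p + (2 * m * (a - p) + (4 - m ^ 2) * p) * μ ^ 2) =
        2 * a * (2 * m * (2 * (a + μ) + (2 - m) * μ) * (a * μ - (a + μ) * p + (2 - m) * p * μ) +
          (2 - m) ^ 2 * (4 - m) * p * μ ^ 2) := by ring
    rw [hid]
    exact mul_nonneg (by positivity) hQp
  have hT : 0 ≤ (2 * m * (a - p) + (4 - m ^ 2) * p) * μ * (a + μ) ^ 2 * s ^ 2 +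
      4 * p * μ * (a + μ) ^ 2 * t ^ 2 - (2 * m * a + 4 * μ) * p * (a * s + μ * t) ^ 2 := by
    have hprod1 : 0 ≤ (p * ((2 * m * (a - p) + (4 - m ^ 2) * p) * s ^ 2 + 4 * p * t ^ 2)) *
        (4 * (2 * m * (a - p) + (4 - m ^ 2) * p) * (a + μ) ^ 2 * μ -
          (2 * m * a + 4 * μ) * (4 * a ^ 2 * p + (2 * m * (a - p) + (4 - m ^ 2) * p) * μ ^ 2)) := by
      apply mul_nonneg _ hX
      have h8 : 0 ≤ (2 * m * (a - p) + (4 - m ^ 2) * p) * s ^ 2 := mul_nonneg hW1.le (sq_nonneg s)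
      have h9 : 0 ≤ 4 * p * t ^ 2 := by positivity
      exact mul_nonneg hp.le (by linarith)
    have hprod2 : 0 ≤ ((2 * m * a + 4 * μ) * p) *
        (4 * a * p * t - (2 * m * (a - p) + (4 - m ^ 2) * p) * μ * s) ^ 2 :=
      mul_nonneg (mul_nonneg hN1.le hp.le) (sq_nonneg _)
    have hid2 : (4 * p * (2 * m * (a - p) + (4 - m ^ 2) * p)) *
        ((2 * m * (a - p) + (4 - m ^ 2) * p) * μ * (a + μ) ^ 2 * s ^ 2 +
          4 * p * μ * (a + μ) ^ 2 * t ^ 2 - (2 * m * a + 4 * μ) * p * (a * s + μ * t) ^ 2) =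
        (p * ((2 * m * (a - p) + (4 - m ^ 2) * p) * s ^ 2 + 4 * p * t ^ 2)) *
          (4 * (2 * m * (a - p) + (4 - m ^ 2) * p) * (a + μ) ^ 2 * μ -
            (2 * m * a + 4 * μ) * (4 * a ^ 2 * p + (2 * m * (a - p) + (4 - m ^ 2) * p) * μ ^ 2)) +
          ((2 * m * a + 4 * μ) * p) *
            (4 * a * p * t - (2 * m * (a - p) + (4 - m ^ 2) * p) * μ * s) ^ 2 := by
      ring
    have hc4 : 0 < 4 * p * (2 * m * (a - p) + (4 - m ^ 2) * p) := by positivity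
    nlinarith [hprod1, hprod2, hid2, hc4]
  have hY : Y = (a * s + μ * t) / (a + μ) := by
    rw [eq_div_iff hB.ne']
    linarith [hBY]
  rw [hY]
  rw [← sub_nonneg]
  have e2 : (2 * m * (a - p) + (4 - m ^ 2) * p) / (p * m ^ 2) * s ^ 2 + 4 / m ^ 2 * t ^ 2 -
      (1 + (2 * m * (a + μ - μ) + (4 - m ^ 2) * μ) / (μ * m ^ 2)) * ((a * s + μ * t) / (a + μ)) ^ 2 =
      ((2 * m * (a - p) + (4 - m ^ 2) * p) * μ * (a + μ) ^ 2 * s ^ 2 +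
        4 * p * μ * (a + μ) ^ 2 * t ^ 2 - (2 * m * a + 4 * μ) * p * (a * s + μ * t) ^ 2) /
        (p * μ * m ^ 2 * (a + μ) ^ 2) := by
    field_simp
    ring
  rw [e2]
  exact div_nonneg hT (by positivity)

set_option maxHeartbeats 1000000 in
/-- Corollary for l^2 norms of weighted mean matrices. -/
theorem stmt_1 (L : ℝ) (hL0 : 0 < L) (hL2 : L < 2)
    (l : ℕ → ℝ) (hl : ∀ n, 1 ≤ n → 0 < l n)
    (Λ : ℕ → ℝ) (hΛ : ∀ n, Λ n = ∑ k ∈ Finset.Icc 1 n, l k)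
    (hcond : ∀ n, 1 ≤ n →
      Λ (n + 1) / l (n + 1) - Λ n / l n
        ≤ L + (L ^ 2 / 4) * ((1 + L / 2) / (1 - L / 2)) *
            (1 / (Λ (n + 1) / l (n + 1) + L / 2)))
    (x : ℕ → ℝ) (hx : ∀ n, 1 ≤ n → 0 ≤ x n)
    (hxsum : Summable fun n : ℕ => x (n + 1) ^ 2) :
    ∑' n : ℕ, ENNReal.ofReal (((1 / Λ (n + 1)) * ∑ k ∈ Finset.Icc 1 (n + 1), l k * x k) ^ 2)
      ≤ ENNReal.ofReal ((2 / (2 - L)) ^ 2) * ∑' n : ℕ, ENNReal.ofReal (x (n + 1) ^ 2) := by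
  have hm0 : (0 : ℝ) < 2 - L := by linarith
  set m : ℝ := 2 - L with hm
  have hm2 : m < 2 := by rw [hm]; linarith
  -- positivity facts
  have hΛpos : ∀ n, 1 ≤ n → 0 < Λ n := by
    intro n hn
    rw [hΛ]
    apply Finset.sum_pos
    · intro i hi
      exact hl i (Finset.mem_Icc.mp hi).1
    · exact ⟨1, Finset.mem_Icc.mpr ⟨le_refl 1, hn⟩⟩
  have hΛge : ∀ n, 1 ≤ n → l n ≤ Λ n := by
    intro n hn
    rw [hΛ]
    exact Finset.single_le_sum (fun i hi => (hl i (Finset.mem_Icc.mp hi).1).le)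
      (Finset.mem_Icc.mpr ⟨hn, le_refl n⟩)
  have hΛsucc : ∀ n : ℕ, Λ (n + 1) = Λ n + l (n + 1) := by
    intro n
    rw [hΛ, hΛ, Finset.sum_Icc_succ_top (by omega : 1 ≤ n + 1)]
  set y : ℕ → ℝ := fun n => 1 / Λ n * ∑ k ∈ Finset.Icc 1 n, l k * x k with hy
  set ω : ℕ → ℝ := fun n => (2 * m * (Λ n - l n) + (4 - m ^ 2) * l n) / (l n * m ^ 2) with hω
  set K : ℝ := 4 / m ^ 2 with hK
  have hKpos : 0 < K := by rw [hK]; positivity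
  have hωpos : ∀ n, 1 ≤ n → 0 < ω n := by
    intro n hn
    have h1 := hl n hn
    have h2 := hΛge n hn
    have h4m : 0 < 4 - m ^ 2 := by nlinarith [mul_pos hm0 (sub_pos.mpr hm2)]
    simp only [hω]
    have hnum : 0 < 2 * m * (Λ n - l n) + (4 - m ^ 2) * l n := by
      have h7 : 0 ≤ 2 * m * (Λ n - l n) := mul_nonneg (by linarith) (by linarith)
      nlinarith [mul_pos h4m h1]
    exact div_pos hnum (by positivity)
  have hΛy : ∀ n, 1 ≤ n → Λ n * y n = ∑ k ∈ Finset.Icc 1 n, l k * x k := by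
    intro n hn
    simp only [hy]
    rw [one_div, ← mul_assoc, mul_inv_cancel₀ (hΛpos n hn).ne', one_mul]
  -- step inequality
  have step : ∀ n, 1 ≤ n →
      (1 + ω (n + 1)) * y (n + 1) ^ 2 ≤ ω n * y n ^ 2 + K * x (n + 1) ^ 2 := by
    intro n hn
    have hp : 0 < l n := hl n hn
    have hμ : 0 < l (n + 1) := hl (n + 1) (by omega)
    have hpa : l n ≤ Λ n := hΛge n hn
    have hμB : l (n + 1) ≤ Λ (n + 1) := hΛge (n + 1) (by omega)
    have hBY : Λ (n + 1) * y (n + 1) = Λ n * y n + l (n + 1) * x (n + 1) := by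
      rw [hΛy (n + 1) (by omega), hΛy n hn,
        Finset.sum_Icc_succ_top (by omega : 1 ≤ n + 1)]
    have := step_aux L m (Λ n) (l n) (l (n + 1)) (Λ (n + 1)) (y n) (x (n + 1)) (y (n + 1))
      hm hm0 hm2 hp hμ hpa hμB (hΛsucc n) hBY (hcond n hn)
    simp only [hω, hK]
    exact this
  -- main induction
  have key : ∀ N, 1 ≤ N →
      (∑ n ∈ Finset.Icc 1 N, y n ^ 2) + ω N * y N ^ 2 ≤ K * ∑ n ∈ Finset.Icc 1 N, x n ^ 2 := by
    intro N hN
    induction N, hN using Nat.le_induction with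
    | base =>
      have hΛ1 : Λ 1 = l 1 := by
        rw [hΛ]
        simp
      have hy1 : y 1 = x 1 := by
        simp only [hy, Finset.Icc_self, Finset.sum_singleton, hΛ1]
        rw [one_div, ← mul_assoc, inv_mul_cancel₀ (hl 1 le_rfl).ne', one_mul]
      have hω1 : ω 1 = K - 1 := by
        simp only [hω, hK]
        rw [hΛ1]
        have h1 : l 1 ≠ 0 := (hl 1 le_rfl).ne'
        have h2 : m ≠ 0 := by positivity
        field_simp
        ring
      simp only [Finset.Icc_self, Finset.sum_singleton]
      rw [hy1, hω1]
      have : x 1 ^ 2 + (K - 1) * x 1 ^ 2 = K * x 1 ^ 2 := by ring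
      linarith
    | succ N hN ih =>
      rw [Finset.sum_Icc_succ_top (by omega : 1 ≤ N + 1),
        Finset.sum_Icc_succ_top (by omega : 1 ≤ N + 1)]
      have hs := step N hN
      linarith
  -- real partial sum bound against the tsum of x
  set S : ℝ := ∑' n : ℕ, x (n + 1) ^ 2 with hS
  have hSx : ∀ N : ℕ, ∑ n ∈ Finset.range N, x (n + 1) ^ 2 ≤ S :=
    fun N => Summable.sum_le_tsum (Finset.range N) (fun i _ => sq_nonneg _) hxsum
  have hrange : ∀ (f : ℕ → ℝ) (N : ℕ),
      ∑ n ∈ Finset.range N, f (n + 1) = ∑ n ∈ Finset.Icc 1 N, f n := by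
    intro f N
    induction N with
    | zero => simp
    | succ N ih =>
      rw [Finset.sum_range_succ, ih, Finset.sum_Icc_succ_top (by omega : 1 ≤ N + 1)]
  have hpartial : ∀ N : ℕ, ∑ n ∈ Finset.range N, y (n + 1) ^ 2 ≤ K * S := by
    intro N
    rcases Nat.eq_zero_or_pos N with h0 | hNpos
    · subst h0
      simp only [Finset.range_zero, Finset.sum_empty]
      exact mul_nonneg hKpos.le (tsum_nonneg fun n => sq_nonneg _)
    · have h1 := key N hNpos
      have h3 : 0 ≤ ω N * y N ^ 2 := mul_nonneg (hωpos N hNpos).le (sq_nonneg _)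
      have h4 : K * ∑ n ∈ Finset.Icc 1 N, x n ^ 2 ≤ K * S := by
        apply mul_le_mul_of_nonneg_left _ hKpos.le
        rw [← hrange (fun n => x n ^ 2) N]
        exact hSx N
      rw [hrange (fun n => y n ^ 2) N]
      linarith
  -- pass to ENNReal
  have hKS : 0 ≤ S := tsum_nonneg fun n => sq_nonneg _
  have hgoalK : ENNReal.ofReal ((2 / (2 - L)) ^ 2) = ENNReal.ofReal K := by
    rw [hK, hm, div_pow]
    norm_num
  have hgoalf : ∀ n : ℕ,
      (1 / Λ (n + 1) * ∑ k ∈ Finset.Icc 1 (n + 1), l k * x k) ^ 2 = y (n + 1) ^ 2 := by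
    intro n
    rw [hy]
  rw [hgoalK]
  simp only [hgoalf]
  have hxts : ENNReal.ofReal S = ∑' n : ℕ, ENNReal.ofReal (x (n + 1) ^ 2) := by
    rw [hS]
    exact ENNReal.ofReal_tsum_of_nonneg (fun n => sq_nonneg _) hxsum
  rw [← hxts, ← ENNReal.ofReal_mul hKpos.le]
  rw [ENNReal.tsum_eq_iSup_sum]
  apply iSup_le
  intro s
  calc ∑ n ∈ s, ENNReal.ofReal (y (n + 1) ^ 2)
      = ENNReal.ofReal (∑ n ∈ s, y (n + 1) ^ 2) :=
        (ENNReal.ofReal_sum_of_nonneg fun i _ => sq_nonneg _).symm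
    _ ≤ ENNReal.ofReal (K * S) := by
        apply ENNReal.ofReal_le_ofReal
        calc ∑ n ∈ s, y (n + 1) ^ 2
            ≤ ∑ n ∈ Finset.range (s.sup id + 1), y (n + 1) ^ 2 := by
              apply Finset.sum_le_sum_of_subset_of_nonneg
              · intro i hi
                have h := Finset.le_sup (f := id) hi
                simp only [id] at h
                exact Finset.mem_range.mpr (by omega)
              · intro i _ _
                exact sq_nonneg _
          _ ≤ K * S := hpartial _
end

section
/- Let p>1 and 0<L<p. Let (a_n)_{n≥1} and (b_n)_{n≥1} be positive real sequences with a_1=b_1. Suppose that for every integer n≥1 one has Σ_{k=1}^n (b_k/a_n) · Π_{i=k}^n ( (a_i/b_{i+1} + 1 − L/p) / (a_i/b_i) )^{1/(p−1)} ≤ p/(p−L). Then for every nonnegative real sequence (x_n)_{n≥1} with Σ_{n=1}^∞ x_n^p < ∞, one has Σ_{n=1}^∞ ( (1/a_n) Σ_{k=1}^n b_k x_k )^p ≤ (p/(p−L))^p Σ_{n=1}^∞ x_n^p. -/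
/-- Theorem 3.1' on l^p norms of factorable matrices. -/
theorem stmt_2 (p L : ℝ) (hp : 1 < p) (hL0 : 0 < L) (hLp : L < p)
    (a b : ℕ → ℝ) (ha : ∀ n, 1 ≤ n → 0 < a n) (hb : ∀ n, 1 ≤ n → 0 < b n)
    (hab : a 1 = b 1)
    (hcond : ∀ n, 1 ≤ n →
      ∑ k ∈ Finset.Icc 1 n, (b k / a n) *
        ∏ i ∈ Finset.Icc k n, ((a i / b (i + 1) + 1 - L / p) / (a i / b i)) ^ (1 / (p - 1))
      ≤ p / (p - L))
    (x : ℕ → ℝ) (hx : ∀ n, 1 ≤ n → 0 ≤ x n)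
    (hxsum : Summable fun n : ℕ => x (n + 1) ^ p) :
    ∑' n : ℕ, ENNReal.ofReal (((1 / a (n + 1)) * ∑ k ∈ Finset.Icc 1 (n + 1), b k * x k) ^ p)
      ≤ ENNReal.ofReal ((p / (p - L)) ^ p) * ∑' n : ℕ, ENNReal.ofReal (x (n + 1) ^ p) := by
  have hp0 : (0:ℝ) < p := by linarith
  have hpL : (0:ℝ) < p - L := by linarith
  have hp1 : (0:ℝ) < p - 1 := by linarith
  obtain ⟨C, hCdef⟩ : ∃ C : ℝ, C = p / (p - L) := ⟨_, rfl⟩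
  rw [← hCdef]
  have hC : 0 < C := hCdef ▸ div_pos hp0 hpL
  have hc : 0 < 1 - L / p := by
    rw [sub_pos, div_lt_one hp0]; exact hLp
  -- the inverse factors
  obtain ⟨r, hrdef⟩ : ∃ r : ℕ → ℝ,
      r = fun i => (a i / b i) / (a i / b (i + 1) + 1 - L / p) := ⟨_, rfl⟩
  have hbase' : ∀ i, 1 ≤ i → 0 < a i / b (i + 1) + 1 - L / p := by
    intro i hi
    have h1 : 0 < a i / b (i + 1) := div_pos (ha i hi) (hb _ (by omega))
    linarith
  have hbase : ∀ i, 1 ≤ i → 0 < (a i / b (i + 1) + 1 - L / p) / (a i / b i) := by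
    intro i hi
    exact div_pos (hbase' i hi) (div_pos (ha i hi) (hb i hi))
  have hr : ∀ i, 1 ≤ i → 0 < r i := by
    intro i hi
    rw [hrdef]
    exact div_pos (div_pos (ha i hi) (hb i hi)) (hbase' i hi)
  -- the weights
  obtain ⟨D, hDdef⟩ : ∃ D : ℕ → ℕ → ℝ, D = fun n k =>
      ∏ i ∈ Finset.Icc k n, ((a i / b (i + 1) + 1 - L / p) / (a i / b i)) ^ (1 / (p - 1)) :=
    ⟨_, rfl⟩
  have hDpos : ∀ n k, 1 ≤ k → 0 < D n k := by
    intro n k hk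
    rw [hDdef]
    exact Finset.prod_pos fun i hi =>
      Real.rpow_pos_of_pos (hbase i (le_trans hk (Finset.mem_Icc.mp hi).1)) _
  have hcond' : ∀ n, 1 ≤ n → ∑ k ∈ Finset.Icc 1 n, (b k / a n) * D n k ≤ C := by
    intro n hn
    rw [hDdef, hCdef]
    exact hcond n hn
  have hDinv : ∀ n k, 1 ≤ k → D n k ^ (1 - p) = ∏ i ∈ Finset.Icc k n, r i := by
    intro n k hk
    have hnn : ∀ i ∈ Finset.Icc k n, 0 ≤ (a i / b (i + 1) + 1 - L / p) / (a i / b i) :=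
      fun i hi => (hbase i (le_trans hk (Finset.mem_Icc.mp hi).1)).le
    rw [hDdef]
    simp only
    rw [Real.finset_prod_rpow _ _ hnn _,
      ← Real.rpow_mul (Finset.prod_nonneg hnn)]
    have he : 1 / (p - 1) * (1 - p) = -1 := by
      field_simp
      ring
    rw [he, Real.rpow_neg_one, ← Finset.prod_inv_distrib]
    refine Finset.prod_congr rfl fun i hi => ?_
    rw [hrdef, inv_div]
  -- scalar telescoping identity
  have hscal : ∀ m, 1 ≤ m →
      (1 / a m) * r m = C * (1 / b m - (1 / b (m + 1)) * r m) := by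
    intro m hm
    have ham := (ha m hm).ne'
    have hbm := (hb m hm).ne'
    have hbm1 := (hb (m + 1) (by omega)).ne'
    have hE2 : a m * p + b (m + 1) * (p - L) ≠ 0 :=
      (add_pos (mul_pos (ha m hm) hp0) (mul_pos (hb _ (by omega)) hpL)).ne'
    have hEeq : a m / b (m + 1) + 1 - L / p
        = (a m * p + b (m + 1) * (p - L)) / (b (m + 1) * p) := by
      field_simp
      ring
    have hrm : r m = a m * b (m + 1) * p / (b m * (a m * p + b (m + 1) * (p - L))) := by
      rw [hrdef]
      simp only
      rw [hEeq]
      field_simp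
    rw [hrm, hCdef]
    field_simp
    ring
  -- telescoping sum
  have tele : ∀ k, 1 ≤ k → ∀ N, k ≤ N →
      ∑ n ∈ Finset.Icc k N, (b k / a n) * ∏ i ∈ Finset.Icc k n, r i
        = C * (1 - (b k / b (N + 1)) * ∏ i ∈ Finset.Icc k N, r i) := by
    intro k hk
    refine Nat.le_induction ?_ ?_
    · simp only [Finset.Icc_self, Finset.sum_singleton, Finset.prod_singleton]
      have h1 := hscal k hk
      have hbk := (hb k hk).ne'
      rw [show (1:ℝ) = b k / b k from (div_self hbk).symm]
      linear_combination (b k) * h1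
    · intro N hN ih
      rw [Finset.sum_Icc_succ_top (by omega), ih,
        Finset.prod_Icc_succ_top (by omega)]
      have h1 := hscal (N + 1) (by omega)
      linear_combination (b k * ∏ i ∈ Finset.Icc k N, r i) * h1
  have key2 : ∀ k N, 1 ≤ k → k ≤ N →
      ∑ n ∈ Finset.Icc k N, (b k / a n) * ∏ i ∈ Finset.Icc k n, r i ≤ C := by
    intro k N hk hkN
    rw [tele k hk N hkN]
    have hR : 0 ≤ (b k / b (N + 1)) * ∏ i ∈ Finset.Icc k N, r i := by
      refine mul_nonneg (div_nonneg (hb k hk).le (hb _ (by omega)).le) ?_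
      exact Finset.prod_nonneg fun i hi =>
        (hr i (le_trans hk (Finset.mem_Icc.mp hi).1)).le
    nlinarith
  -- Hölder step
  have key1 : ∀ n, 1 ≤ n →
      ((1 / a n) * ∑ k ∈ Finset.Icc 1 n, b k * x k) ^ p
        ≤ C ^ (p - 1) *
          ∑ k ∈ Finset.Icc 1 n, (b k / a n) * ((∏ i ∈ Finset.Icc k n, r i) * x k ^ p) := by
    intro n hn
    have han := ha n hn
    have h1an : (0:ℝ) < 1 / a n := one_div_pos.mpr han
    have hq0 : (0:ℝ) < p / (p - 1) := div_pos hp0 hp1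
    have hpq : p.HolderConjugate (p / (p - 1)) := Real.HolderConjugate.conjExponent hp
    have he1 : 1 / p + 1 / (p / (p - 1)) = 1 := by
      field_simp
      ring
    have he2 : (1 - p) * (1 / p) + 1 / (p / (p - 1)) = 0 := by
      field_simp
      ring
    have holder := Real.inner_le_Lp_mul_Lq (Finset.Icc 1 n)
      (fun k => (b k * D n k ^ (1 - p)) ^ (1 / p) * x k)
      (fun k => (b k * D n k) ^ (1 / (p / (p - 1)))) hpq
    have e1 : ∑ k ∈ Finset.Icc 1 n,
        ((b k * D n k ^ (1 - p)) ^ (1 / p) * x k) * ((b k * D n k) ^ (1 / (p / (p - 1))))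
        = ∑ k ∈ Finset.Icc 1 n, b k * x k := by
      refine Finset.sum_congr rfl fun k hk => ?_
      have hk1 : 1 ≤ k := (Finset.mem_Icc.mp hk).1
      have hbk := hb k hk1
      have hd := hDpos n k hk1
      rw [Real.mul_rpow hbk.le (Real.rpow_nonneg hd.le _), Real.mul_rpow hbk.le hd.le,
        ← Real.rpow_mul hd.le]
      have h3 : b k ^ (1 / p) * b k ^ (1 / (p / (p - 1))) = b k := by
        rw [← Real.rpow_add hbk, he1, Real.rpow_one]
      have h4 : D n k ^ ((1 - p) * (1 / p)) * D n k ^ (1 / (p / (p - 1))) = 1 := by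
        rw [← Real.rpow_add hd, he2, Real.rpow_zero]
      linear_combination (D n k ^ ((1 - p) * (1 / p)) * D n k ^ (1 / (p / (p - 1))) * x k) * h3
        + (b k * x k) * h4
    have e2 : ∑ k ∈ Finset.Icc 1 n,
        |(b k * D n k) ^ (1 / (p / (p - 1)))| ^ (p / (p - 1))
        = ∑ k ∈ Finset.Icc 1 n, b k * D n k := by
      refine Finset.sum_congr rfl fun k hk => ?_
      have hk1 : 1 ≤ k := (Finset.mem_Icc.mp hk).1
      have hbd : (0:ℝ) ≤ b k * D n k := (mul_pos (hb k hk1) (hDpos n k hk1)).le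
      rw [abs_of_nonneg (Real.rpow_nonneg hbd _), ← Real.rpow_mul hbd,
        one_div_mul_cancel hq0.ne', Real.rpow_one]
    have e3 : ∑ k ∈ Finset.Icc 1 n,
        |(b k * D n k ^ (1 - p)) ^ (1 / p) * x k| ^ p
        = ∑ k ∈ Finset.Icc 1 n, b k * D n k ^ (1 - p) * x k ^ p := by
      refine Finset.sum_congr rfl fun k hk => ?_
      have hk1 : 1 ≤ k := (Finset.mem_Icc.mp hk).1
      have hbd : (0:ℝ) ≤ b k * D n k ^ (1 - p) :=
        mul_nonneg (hb k hk1).le (Real.rpow_nonneg (hDpos n k hk1).le _)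
      rw [abs_of_nonneg (mul_nonneg (Real.rpow_nonneg hbd _) (hx k hk1)),
        Real.mul_rpow (Real.rpow_nonneg hbd _) (hx k hk1),
        ← Real.rpow_mul hbd, one_div_mul_cancel hp0.ne', Real.rpow_one]
    rw [e1, e2, e3] at holder
    have hS0 : 0 ≤ ∑ k ∈ Finset.Icc 1 n, b k * x k :=
      Finset.sum_nonneg fun k hk =>
        mul_nonneg (hb k (Finset.mem_Icc.mp hk).1).le (hx k (Finset.mem_Icc.mp hk).1)
    have hA0 : 0 ≤ ∑ k ∈ Finset.Icc 1 n, b k * D n k :=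
      Finset.sum_nonneg fun k hk =>
        (mul_pos (hb k (Finset.mem_Icc.mp hk).1) (hDpos n k (Finset.mem_Icc.mp hk).1)).le
    have hB0 : 0 ≤ ∑ k ∈ Finset.Icc 1 n, b k * D n k ^ (1 - p) * x k ^ p :=
      Finset.sum_nonneg fun k hk =>
        mul_nonneg (mul_nonneg (hb k (Finset.mem_Icc.mp hk).1).le
          (Real.rpow_nonneg (hDpos n k (Finset.mem_Icc.mp hk).1).le _))
          (Real.rpow_nonneg (hx k (Finset.mem_Icc.mp hk).1) p)
    have step1 : (∑ k ∈ Finset.Icc 1 n, b k * x k) ^ p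
        ≤ ((∑ k ∈ Finset.Icc 1 n, b k * D n k ^ (1 - p) * x k ^ p) ^ (1 / p) *
            (∑ k ∈ Finset.Icc 1 n, b k * D n k) ^ (1 / (p / (p - 1)))) ^ p :=
      Real.rpow_le_rpow hS0 holder hp0.le
    have step2 : ((∑ k ∈ Finset.Icc 1 n, b k * D n k ^ (1 - p) * x k ^ p) ^ (1 / p) *
            (∑ k ∈ Finset.Icc 1 n, b k * D n k) ^ (1 / (p / (p - 1)))) ^ p
        = (∑ k ∈ Finset.Icc 1 n, b k * D n k ^ (1 - p) * x k ^ p) *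
            (∑ k ∈ Finset.Icc 1 n, b k * D n k) ^ (p - 1) := by
      rw [Real.mul_rpow (Real.rpow_nonneg hB0 _) (Real.rpow_nonneg hA0 _),
        ← Real.rpow_mul hB0, ← Real.rpow_mul hA0, one_div_mul_cancel hp0.ne',
        Real.rpow_one]
      congr 1
      rw [show 1 / (p / (p - 1)) * p = p - 1 from by field_simp]
    have hpow : (1 / a n) ^ p = (1 / a n) ^ (p - 1) * (1 / a n) := by
      have h := Real.rpow_add_one h1an.ne' (p - 1)
      rw [show p - 1 + 1 = p from by ring] at h
      exact h
    calc ((1 / a n) * ∑ k ∈ Finset.Icc 1 n, b k * x k) ^ p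
        = ((1 / a n) ^ (p - 1) * (1 / a n)) * (∑ k ∈ Finset.Icc 1 n, b k * x k) ^ p := by
          rw [Real.mul_rpow h1an.le hS0, hpow]
      _ ≤ ((1 / a n) ^ (p - 1) * (1 / a n)) *
            ((∑ k ∈ Finset.Icc 1 n, b k * D n k ^ (1 - p) * x k ^ p) *
              (∑ k ∈ Finset.Icc 1 n, b k * D n k) ^ (p - 1)) := by
          refine mul_le_mul_of_nonneg_left ?_
            (mul_nonneg (Real.rpow_nonneg h1an.le _) h1an.le)
          rw [← step2]
          exact step1
      _ = ((1 / a n) * ∑ k ∈ Finset.Icc 1 n, b k * D n k) ^ (p - 1) *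
            ((1 / a n) * ∑ k ∈ Finset.Icc 1 n, b k * D n k ^ (1 - p) * x k ^ p) := by
          rw [Real.mul_rpow h1an.le hA0]
          ring
      _ ≤ C ^ (p - 1) *
            ((1 / a n) * ∑ k ∈ Finset.Icc 1 n, b k * D n k ^ (1 - p) * x k ^ p) := by
          refine mul_le_mul_of_nonneg_right ?_ (mul_nonneg h1an.le hB0)
          refine Real.rpow_le_rpow (mul_nonneg h1an.le hA0) ?_ (by linarith)
          calc (1 / a n) * ∑ k ∈ Finset.Icc 1 n, b k * D n k
              = ∑ k ∈ Finset.Icc 1 n, (b k / a n) * D n k := by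
                rw [Finset.mul_sum]
                exact Finset.sum_congr rfl fun k _ => by ring
            _ ≤ C := hcond' n hn
      _ = C ^ (p - 1) *
            ∑ k ∈ Finset.Icc 1 n, (b k / a n) * ((∏ i ∈ Finset.Icc k n, r i) * x k ^ p) := by
          congr 1
          rw [Finset.mul_sum]
          refine Finset.sum_congr rfl fun k hk => ?_
          rw [← hDinv n k (Finset.mem_Icc.mp hk).1]
          ring
  -- reindexing
  have reindex : ∀ (f : ℕ → ℝ) (N : ℕ),
      ∑ i ∈ Finset.range N, f (i + 1) = ∑ k ∈ Finset.Icc 1 N, f k := by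
    intro f N
    induction N with
    | zero => simp
    | succ m ih => rw [Finset.sum_range_succ, ih, Finset.sum_Icc_succ_top (by omega)]
  -- the finite bound
  obtain ⟨T, hT⟩ : ∃ T : ℝ, T = ∑' n : ℕ, x (n + 1) ^ p := ⟨_, rfl⟩
  have hxnn : ∀ i : ℕ, 0 ≤ x (i + 1) ^ p :=
    fun i => Real.rpow_nonneg (hx (i + 1) (by omega)) p
  have key3 : ∀ N : ℕ,
      ∑ n ∈ Finset.Icc 1 N, ((1 / a n) * ∑ k ∈ Finset.Icc 1 n, b k * x k) ^ p
        ≤ C ^ p * T := by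
    intro N
    have swap :
        ∑ n ∈ Finset.Icc 1 N, ∑ k ∈ Finset.Icc 1 n,
            (b k / a n) * ((∏ i ∈ Finset.Icc k n, r i) * x k ^ p)
          = ∑ k ∈ Finset.Icc 1 N, ∑ n ∈ Finset.Icc k N,
            (b k / a n) * ((∏ i ∈ Finset.Icc k n, r i) * x k ^ p) := by
      refine Finset.sum_comm' fun m j => ?_
      simp only [Finset.mem_Icc]
      omega
    calc ∑ n ∈ Finset.Icc 1 N, ((1 / a n) * ∑ k ∈ Finset.Icc 1 n, b k * x k) ^ p
        ≤ ∑ n ∈ Finset.Icc 1 N, C ^ (p - 1) *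
            ∑ k ∈ Finset.Icc 1 n, (b k / a n) * ((∏ i ∈ Finset.Icc k n, r i) * x k ^ p) :=
          Finset.sum_le_sum fun n hn => key1 n (Finset.mem_Icc.mp hn).1
      _ = C ^ (p - 1) * ∑ n ∈ Finset.Icc 1 N, ∑ k ∈ Finset.Icc 1 n,
            (b k / a n) * ((∏ i ∈ Finset.Icc k n, r i) * x k ^ p) := by
          rw [Finset.mul_sum]
      _ = C ^ (p - 1) * ∑ k ∈ Finset.Icc 1 N,
            (∑ n ∈ Finset.Icc k N, (b k / a n) * ∏ i ∈ Finset.Icc k n, r i) * x k ^ p := by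
          rw [swap]
          congr 1
          refine Finset.sum_congr rfl fun k _ => ?_
          rw [Finset.sum_mul]
          exact Finset.sum_congr rfl fun m _ => by ring
      _ ≤ C ^ (p - 1) * ∑ k ∈ Finset.Icc 1 N, C * x k ^ p := by
          refine mul_le_mul_of_nonneg_left ?_ (Real.rpow_nonneg hC.le _)
          refine Finset.sum_le_sum fun k hk => ?_
          obtain ⟨hk1, hkN⟩ := Finset.mem_Icc.mp hk
          refine mul_le_mul_of_nonneg_right (key2 k N hk1 hkN)
            (Real.rpow_nonneg (hx k hk1) p)
      _ = C ^ p * ∑ k ∈ Finset.Icc 1 N, x k ^ p := by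
          rw [← Finset.mul_sum, ← mul_assoc]
          congr 1
          rw [← Real.rpow_add_one hC.ne' (p - 1)]
          norm_num
      _ ≤ C ^ p * T := by
          refine mul_le_mul_of_nonneg_left ?_ (Real.rpow_nonneg hC.le _)
          rw [hT, ← reindex (fun k => x k ^ p) N]
          exact Summable.sum_le_tsum (Finset.range N) (fun i _ => hxnn i) hxsum
  -- conclusion
  rw [show (∑' n : ℕ, ENNReal.ofReal (x (n + 1) ^ p)) = ENNReal.ofReal T from by
      rw [hT]; exact (ENNReal.ofReal_tsum_of_nonneg hxnn hxsum).symm,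
    ← ENNReal.ofReal_mul (Real.rpow_nonneg hC.le p)]
  refine Summable.tsum_le_of_sum_le ENNReal.summable fun s => ?_
  obtain ⟨N, hN⟩ := s.exists_nat_subset_range
  have hgnn : ∀ m : ℕ, 0 ≤ ((1 / a (m + 1)) * ∑ k ∈ Finset.Icc 1 (m + 1), b k * x k) ^ p := by
    intro m
    refine Real.rpow_nonneg (mul_nonneg ?_ ?_) p
    · exact (one_div_pos.mpr (ha (m + 1) (by omega))).le
    · exact Finset.sum_nonneg fun k hk =>
        mul_nonneg (hb k (Finset.mem_Icc.mp hk).1).le (hx k (Finset.mem_Icc.mp hk).1)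
  calc ∑ m ∈ s, ENNReal.ofReal (((1 / a (m + 1)) * ∑ k ∈ Finset.Icc 1 (m + 1), b k * x k) ^ p)
      ≤ ∑ m ∈ Finset.range N,
          ENNReal.ofReal (((1 / a (m + 1)) * ∑ k ∈ Finset.Icc 1 (m + 1), b k * x k) ^ p) :=
        Finset.sum_le_sum_of_subset hN
    _ = ENNReal.ofReal (∑ m ∈ Finset.range N,
          ((1 / a (m + 1)) * ∑ k ∈ Finset.Icc 1 (m + 1), b k * x k) ^ p) :=
        (ENNReal.ofReal_sum_of_nonneg fun m _ => hgnn m).symm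
    _ = ENNReal.ofReal (∑ n ∈ Finset.Icc 1 N,
          ((1 / a n) * ∑ k ∈ Finset.Icc 1 n, b k * x k) ^ p) := by
        rw [reindex (fun n => ((1 / a n) * ∑ k ∈ Finset.Icc 1 n, b k * x k) ^ p) N]
    _ ≤ ENNReal.ofReal (C ^ p * T) := ENNReal.ofReal_le_ofReal (key3 N)
end

section
/- Let p>1 and let (λ_n)_{n≥1} be a positive real sequence with Λ_n = Σ_{k=1}^n λ_k. Let L = sup_{n≥1} ( Λ_{n+1}/λ_{n+1} − Λ_n/λ_n ) and assume L < p/(p−1). Then for every positive real sequence (x_n)_{n≥1} for which all the series below converge, setting A^T_n = λ_n Σ_{k=n}^∞ x_k/Λ_k, one has Σ_{n=1}^∞ (A^T_n)^p ≤ ( p/(p−(p−1)L) ) Σ_{n=1}^∞ x_n (A^T_n)^{p−1}. -/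
private lemma young_aux (p : ℝ) (hp : 1 < p) (a b : ℝ) (ha : 0 ≤ a) (hb : 0 ≤ b) :
    a * b ^ (p - 1) ≤ a ^ p / p + (p - 1) / p * b ^ p := by
  have hp1 : (0:ℝ) < p - 1 := by linarith
  have hpq : p.HolderConjugate (p / (p - 1)) :=
    (Real.holderConjugate_iff_eq_conjExponent hp).2 rfl
  have h := Real.young_inequality_of_nonneg ha (Real.rpow_nonneg hb (p - 1)) hpq
  rw [← Real.rpow_mul hb] at h
  have he : (p - 1) * (p / (p - 1)) = p := by field_simp
  rw [he] at h
  have he2 : b ^ p / (p / (p - 1)) = (p - 1) / p * b ^ p := by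
    rw [div_div_eq_mul_div]; ring
  linarith [h, he2.le, he2.ge]

private lemma small_aux (a : ℕ → ℝ) (ha : Summable a) (hpos : ∀ n, 0 ≤ a n)
    (ε : ℝ) (hε : 0 < ε) (M : ℕ) : ∃ N, M ≤ N ∧ (N : ℝ) * a N < ε := by
  by_contra hcon
  push_neg at hcon
  have hM : Summable fun n : ℕ => a (n + (M + 1)) := (summable_nat_add_iff (M + 1)).2 ha
  have hcomp : Summable fun n : ℕ => ε * (1 / ((n : ℝ) + (M + 1))) := by
    apply Summable.of_nonneg_of_le (fun n => by positivity) _ hM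
    intro n
    have hn : (0:ℝ) < (n : ℝ) + (M + 1) := by positivity
    have h1 := hcon (n + (M + 1)) (by omega)
    push_cast at h1
    rw [mul_one_div, div_le_iff₀ hn]
    nlinarith [hpos (n + (M + 1))]
  have h2 : Summable fun n : ℕ => (1 / ((n : ℝ) + (M + 1))) :=
    (summable_mul_left_iff (ne_of_gt hε)).mp hcomp
  have h3 : Summable fun n : ℕ => (1 / ((n : ℝ))) := by
    apply (summable_nat_add_iff (f := fun n : ℕ => 1 / (n : ℝ)) (M + 1)).1
    convert h2 using 2 with n
    · rfl
    push_cast; ring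
  exact Real.not_summable_one_div_natCast h3

set_option maxHeartbeats 1000000 in
/-- inequality (1.07) for the transpose weighted mean average. -/
theorem stmt_3 (p : ℝ) (hp : 1 < p)
    (l x : ℕ → ℝ) (hl : ∀ n, 1 ≤ n → 0 < l n) (hx : ∀ n, 1 ≤ n → 0 < x n)
    (Λ : ℕ → ℝ) (hΛ : ∀ n, Λ n = ∑ k ∈ Finset.Icc 1 n, l k)
    (L : ℝ)
    (hL : IsLUB (Set.range fun n : ℕ => Λ (n + 2) / l (n + 2) - Λ (n + 1) / l (n + 1)) L)
    (hLp : L < p / (p - 1))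
    (A : ℕ → ℝ) (hA : ∀ n, 1 ≤ n → A n = l n * ∑' k : ℕ, x (n + k) / Λ (n + k))
    (hst : ∀ n, 1 ≤ n → Summable fun k : ℕ => x (n + k) / Λ (n + k))
    (hs1 : Summable fun n : ℕ => A (n + 1) ^ p)
    (hs2 : Summable fun n : ℕ => x (n + 1) * A (n + 1) ^ (p - 1)) :
    ∑' n : ℕ, A (n + 1) ^ p
      ≤ (p / (p - (p - 1) * L)) * ∑' n : ℕ, x (n + 1) * A (n + 1) ^ (p - 1) := by
  have hp0 : (0:ℝ) < p := by linarith
  have hp1 : (0:ℝ) < p - 1 := by linarith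
  set c : ℕ → ℝ := fun n => Λ n / l n with hc
  have hcdef : ∀ m, c m = Λ m / l m := fun _ => rfl
  -- basic positivity
  have hΛpos : ∀ n, 1 ≤ n → 0 < Λ n := by
    intro n hn
    rw [hΛ]
    apply Finset.sum_pos (fun i hi => hl i (Finset.mem_Icc.1 hi).1)
    exact ⟨1, Finset.mem_Icc.2 ⟨le_refl 1, hn⟩⟩
  have hΛstep : ∀ n, 1 ≤ n → Λ (n + 1) = Λ n + l (n + 1) := by
    intro n hn
    rw [hΛ, hΛ, Finset.sum_Icc_succ_top (by omega)]
  have hApos : ∀ n, 1 ≤ n → 0 < A n := by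
    intro n hn
    rw [hA n hn]
    apply mul_pos (hl n hn)
    apply Summable.tsum_pos (hst n hn) _ 0
    · simp only [Nat.add_zero]
      exact div_pos (hx n hn) (hΛpos n hn)
    · intro k
      exact le_of_lt (div_pos (hx _ (by omega)) (hΛpos _ (by omega)))
  -- recurrence
  have hrec : ∀ n, 1 ≤ n → A n / l n = x n / Λ n + A (n + 1) / l (n + 1) := by
    intro n hn
    have e1 : A n / l n = ∑' k : ℕ, x (n + k) / Λ (n + k) := by
      rw [hA n hn, mul_comm, mul_div_assoc, div_self (ne_of_gt (hl n hn)), mul_one]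
    have e2 : A (n + 1) / l (n + 1) = ∑' k : ℕ, x (n + 1 + k) / Λ (n + 1 + k) := by
      rw [hA (n + 1) (by omega), mul_comm, mul_div_assoc,
        div_self (ne_of_gt (hl (n + 1) (by omega))), mul_one]
    have e3 : (∑' k : ℕ, x (n + (k + 1)) / Λ (n + (k + 1)))
        = ∑' k : ℕ, x (n + 1 + k) / Λ (n + 1 + k) :=
      tsum_congr fun k => by congr 2 <;> omega
    rw [e1, e2, Summable.tsum_eq_zero_add (hst n hn), e3]
    norm_num
  have hxid : ∀ n, 1 ≤ n → x n = c n * A n - (c (n + 1) - 1) * A (n + 1) := by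
    intro n hn
    have h1 := hrec n hn
    have hln1 : (0:ℝ) < l (n + 1) := hl (n + 1) (by omega)
    have hc1 : c (n + 1) - 1 = Λ n / l (n + 1) := by
      rw [hcdef, hΛstep n hn]
      field_simp
      ring
    rw [hc1, hcdef]
    have hΛn : (0:ℝ) < Λ n := hΛpos n hn
    have hln : (0:ℝ) < l n := hl n hn
    field_simp at h1 ⊢
    nlinarith [h1]
  -- L facts
  have hcd : ∀ n : ℕ, c (n + 2) - c (n + 1) ≤ L := fun n => hL.1 ⟨n, rfl⟩
  have hc1 : c 1 = 1 := by
    rw [hcdef, hΛ, Finset.Icc_self, Finset.sum_singleton]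
    exact div_self (ne_of_gt (hl 1 le_rfl))
  have hL0 : 0 < L := by
    have h0 := hcd 0
    norm_num at h0
    have hΛ1 : Λ 1 = l 1 := by rw [hΛ, Finset.Icc_self, Finset.sum_singleton]
    have h2 : c 2 = (l 1 + l 2) / l 2 := by
      rw [hcdef, hΛstep 1 le_rfl, hΛ1]
    have hl2 := hl 2 (by omega)
    have hl1 := hl 1 le_rfl
    rw [hc1, h2] at h0
    have h3 : (l 1 + l 2) / l 2 - 1 = l 1 / l 2 := by field_simp; ring
    nlinarith [div_pos hl1 hl2]
  have hcb : ∀ N : ℕ, c (N + 1) - 1 ≤ N * L := by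
    intro N
    induction N with
    | zero => simp [hc1]
    | succ N ih =>
      have := hcd N
      push_cast
      nlinarith
  -- the constant
  set K : ℝ := (p - (p - 1) * L) / p with hK
  have hLpp : L * (p - 1) < p := by
    rw [lt_div_iff₀ hp1] at hLp
    linarith
  have hKpos : 0 < K := by
    rw [hK]
    apply div_pos _ hp0
    nlinarith
  -- per-term inequality
  have hstep : ∀ n, 1 ≤ n →
      K * A n ^ p + (1 / p) * (c n - 1) * A n ^ p - (1 / p) * (c (n + 1) - 1) * A (n + 1) ^ p
        ≤ x n * A n ^ (p - 1) := by
    intro n hn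
    have hAn := hApos n hn
    have hAn1 := hApos (n + 1) (by omega)
    have hxA : x n * A n ^ (p - 1)
        = c n * A n ^ p - (c (n + 1) - 1) * (A (n + 1) * A n ^ (p - 1)) := by
      rw [hxid n hn]
      have hpow : A n * A n ^ (p - 1) = A n ^ p := by
        nth_rewrite 1 [← Real.rpow_one (A n)]
        rw [← Real.rpow_add hAn]
        ring_nf
      linear_combination c n * hpow
    rw [hxA]
    have hcn1 : 0 ≤ c (n + 1) - 1 := by
      have heq : c (n + 1) - 1 = Λ n / l (n + 1) := by
        have hln1 : l (n + 1) ≠ 0 := ne_of_gt (hl (n + 1) (by omega))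
        rw [hcdef, hΛstep n hn]
        field_simp
        ring
      rw [heq]
      exact le_of_lt (div_pos (hΛpos n hn) (hl (n + 1) (by omega)))
    have hyoung := young_aux p hp (A (n + 1)) (A n) (le_of_lt hAn1) (le_of_lt hAn)
    have hdiff : c (n + 1) - c n ≤ L := by
      rcases Nat.exists_eq_add_of_le hn with ⟨m, rfl⟩
      have := hcd m
      convert this using 3 <;> omega
    have hAp : 0 ≤ A n ^ p := le_of_lt (Real.rpow_pos_of_pos hAn p)
    have hAp1 : 0 ≤ A (n + 1) ^ p := le_of_lt (Real.rpow_pos_of_pos hAn1 p)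
    have h1 : (c (n + 1) - 1) * (A (n + 1) * A n ^ (p - 1))
        ≤ (c (n + 1) - 1) * (A (n + 1) ^ p / p + (p - 1) / p * A n ^ p) :=
      mul_le_mul_of_nonneg_left hyoung hcn1
    have hdiff2 : (p - 1) * (c (n + 1) - c n) ≤ (p - 1) * L :=
      mul_le_mul_of_nonneg_left hdiff (le_of_lt hp1)
    have hcoefeq : K + (1 / p) * (c n - 1) + (p - 1) / p * (c (n + 1) - 1)
        = (p - (p - 1) * L + (c n - 1) + (p - 1) * (c (n + 1) - 1)) / p := by
      rw [hK]; field_simp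
    have hcoef : K + (1 / p) * (c n - 1) + (p - 1) / p * (c (n + 1) - 1) ≤ c n := by
      rw [hcoefeq, div_le_iff₀ hp0]
      nlinarith [hdiff2]
    calc K * A n ^ p + (1 / p) * (c n - 1) * A n ^ p
          - (1 / p) * (c (n + 1) - 1) * A (n + 1) ^ p
        ≤ c n * A n ^ p - (p - 1) / p * (c (n + 1) - 1) * A n ^ p
          - (1 / p) * (c (n + 1) - 1) * A (n + 1) ^ p := by
            have hm := mul_le_mul_of_nonneg_right hcoef hAp
            nlinarith [hm]
      _ ≤ c n * A n ^ p - (c (n + 1) - 1) * (A (n + 1) * A n ^ (p - 1)) := by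
          ring_nf at h1 ⊢
          linarith
  -- partial sum bound by induction
  have hmain : ∀ N : ℕ, K * ∑ n ∈ Finset.range N, A (n + 1) ^ p
      ≤ (∑ n ∈ Finset.range N, x (n + 1) * A (n + 1) ^ (p - 1))
        + (1 / p) * (c (N + 1) - 1) * A (N + 1) ^ p := by
    intro N
    induction N with
    | zero => simp [hc1]
    | succ N ih =>
      rw [Finset.sum_range_succ, Finset.sum_range_succ, mul_add]
      linarith [hstep (N + 1) (by omega), ih]
  -- tsum facts
  set T : ℝ := ∑' n : ℕ, x (n + 1) * A (n + 1) ^ (p - 1) with hT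
  have hterm2 : ∀ n : ℕ, 0 ≤ x (n + 1) * A (n + 1) ^ (p - 1) := by
    intro n
    exact le_of_lt (mul_pos (hx (n + 1) (by omega))
      (Real.rpow_pos_of_pos (hApos (n + 1) (by omega)) _))
  have hterm1 : ∀ n : ℕ, 0 ≤ A (n + 1) ^ p :=
    fun n => le_of_lt (Real.rpow_pos_of_pos (hApos (n + 1) (by omega)) _)
  have hsumT : ∀ N, ∑ n ∈ Finset.range N, x (n + 1) * A (n + 1) ^ (p - 1) ≤ T :=
    fun N => hs2.sum_le_tsum _ (fun i _ => hterm2 i)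
  -- main bound with tail
  have hbound : ∀ N : ℕ, K * ∑ n ∈ Finset.range N, A (n + 1) ^ p
      ≤ T + (L / p) * ((N : ℝ) * A (N + 1) ^ p) := by
    intro N
    have h1 := hmain N
    have h2 := hsumT N
    have h3 : (1 / p) * (c (N + 1) - 1) * A (N + 1) ^ p
        ≤ (L / p) * ((N : ℝ) * A (N + 1) ^ p) := by
      have hm := mul_le_mul_of_nonneg_left
        (mul_le_mul_of_nonneg_right (hcb N) (hterm1 N))
        (le_of_lt (show (0:ℝ) < 1 / p by positivity))
      ring_nf at hm ⊢
      linarith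
    linarith
  -- conclude K * tsum ≤ T
  set S : ℝ := ∑' n : ℕ, A (n + 1) ^ p with hS
  have hfinal : K * S ≤ T := by
    apply le_of_forall_pos_le_add
    intro ε hε
    have htend : Filter.Tendsto (fun N => K * ∑ n ∈ Finset.range N, A (n + 1) ^ p)
        Filter.atTop (nhds (K * S)) := (hs1.hasSum.tendsto_sum_nat).const_mul K
    have hev : ∀ᶠ N in Filter.atTop,
        K * S - ε / 2 < K * ∑ n ∈ Finset.range N, A (n + 1) ^ p :=
      htend.eventually_const_lt (by linarith)
    rcases Filter.eventually_atTop.1 hev with ⟨M0, hM0⟩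
    have hε' : (0:ℝ) < (ε / 2) * p / L := by positivity
    rcases small_aux (fun n => A (n + 1) ^ p) hs1 hterm1 _ hε' M0 with ⟨N, hNM, hNs⟩
    have h1 := hbound N
    have h2 := hM0 N hNM
    have h3 : (L / p) * ((N : ℝ) * A (N + 1) ^ p) < ε / 2 := by
      rw [div_mul_eq_mul_div, div_lt_iff₀ hp0]
      calc L * ((N : ℝ) * A (N + 1) ^ p) < L * ((ε / 2) * p / L) := by
            apply mul_lt_mul_of_pos_left hNs hL0
        _ = ε / 2 * p := by field_simp [ne_of_gt hL0]
    have h4 : K * S < K * (∑ n ∈ Finset.range N, A (n + 1) ^ p) + ε / 2 := by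
      linarith [h2]
    linarith
  -- final algebra
  have hgoal : p / (p - (p - 1) * L) = K⁻¹ := by rw [hK, inv_div]
  rw [hgoal, inv_mul_eq_div, le_div_iff₀ hKpos]
  nlinarith [hfinal]
end

section
/- Let p>1 and let c be a real number with 1 < c ≤ p. Let (λ_n)_{n≥1} be a positive real sequence with Λ_n = Σ_{k=1}^n λ_k, and let (x_n)_{n≥1} be a positive real sequence. Setting A_n = (1/Λ_n) Σ_{k=1}^n λ_k x_k and assuming the series on the right-hand side converges, one has Σ_{n=1}^∞ λ_n Λ_n^{p−c} A_n^p ≤ ( p/(c−1) ) Σ_{n=1}^∞ λ_n Λ_n^{p−c} x_n A_n^{p−1}. -/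
open Finset

private lemma young_aux_s5 {p : ℝ} (hp : 1 < p) {u v : ℝ} (hu : 0 ≤ u) (hv : 0 ≤ v) :
    p * (u ^ (p - 1) * v) ≤ (p - 1) * u ^ p + v ^ p := by
  have hp0 : (0:ℝ) < p := lt_trans one_pos hp
  have hp1 : (0:ℝ) < p - 1 := sub_pos.mpr hp
  have hconj : (p / (p - 1)).HolderConjugate p :=
    (Real.HolderConjugate.conjExponent hp).symm
  have h := Real.young_inequality_of_nonneg (Real.rpow_nonneg hu (p - 1)) hv hconj
  have hup : (u ^ (p - 1)) ^ (p / (p - 1)) = u ^ p := by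
    rw [← Real.rpow_mul hu]
    congr 1
    field_simp
  rw [hup] at h
  have h2 : u ^ (p - 1) * v ≤ (p - 1) / p * u ^ p + v ^ p / p := by
    have : u ^ p / (p / (p - 1)) = (p - 1) / p * u ^ p := by
      field_simp
    linarith [h, this.symm.le, this.le]
  calc p * (u ^ (p - 1) * v) ≤ p * ((p - 1) / p * u ^ p + v ^ p / p) := by
        exact mul_le_mul_of_nonneg_left h2 hp0.le
    _ = (p - 1) * u ^ p + v ^ p := by field_simp

private lemma step_aux_s5 (p c : ℝ) (hp : 1 < p) (hc1 : 1 < c) (hcp : c ≤ p)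
    {L d x a b : ℝ} (hL : 0 < L) (hd : 0 < d) (hx : 0 < x) (ha : 0 < a) (hb : 0 < b)
    (hrec : (L + d) * b = L * a + d * x) :
    (c - 1) * (d * (L + d) ^ (p - c) * b ^ p) + (L + d) ^ (p - c + 1) * b ^ p
      ≤ p * (d * (L + d) ^ (p - c) * x * b ^ (p - 1)) + L ^ (p - c + 1) * a ^ p := by
  set q : ℝ := p - c with hq
  have hq0 : 0 ≤ q := sub_nonneg.mpr hcp
  have hp0 : (0:ℝ) < p := lt_trans one_pos hp
  have hp1 : (0:ℝ) < p - 1 := sub_pos.mpr hp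
  have hL' : 0 < L + d := by linarith
  -- basic rpow facts
  have hLq1 : (L + d) ^ (q + 1) = (L + d) ^ q * (L + d) :=
    Real.rpow_add_one (ne_of_gt hL') q
  have hbp : b ^ p = b * b ^ (p - 1) := by
    have : b ^ ((1:ℝ) + (p - 1)) = b ^ (1:ℝ) * b ^ (p - 1) := Real.rpow_add hb 1 (p - 1)
    simpa [Real.rpow_one] using this
  -- E1
  have E1 : p * (d * (L + d) ^ q * x * b ^ (p - 1))
      = p * ((L + d) ^ q * (L + d)) * b ^ p - p * ((L + d) ^ q * L * b ^ (p - 1) * a) := by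
    have hdx : d * x = (L + d) * b - L * a := by linarith
    rw [hbp]
    calc p * (d * (L + d) ^ q * x * b ^ (p - 1))
        = p * (L + d) ^ q * b ^ (p - 1) * (d * x) := by ring
      _ = p * (L + d) ^ q * b ^ (p - 1) * ((L + d) * b - L * a) := by rw [hdx]
      _ = p * ((L + d) ^ q * (L + d)) * (b * b ^ (p - 1))
            - p * ((L + d) ^ q * L * b ^ (p - 1) * a) := by ring
  -- Young's inequality with suitable u, v
  set u : ℝ := (L + d) ^ (q / (p - 1)) * L ^ ((c - 1) / (p * (p - 1))) * b with hu_def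
  set v : ℝ := L ^ ((q + 1) / p) * a with hv_def
  have hu0 : 0 ≤ u := by positivity
  have hv0 : 0 ≤ v := by positivity
  have hupow : ∀ r : ℝ, u ^ r = (L + d) ^ (q / (p - 1) * r) * L ^ ((c - 1) / (p * (p - 1)) * r) * b ^ r := by
    intro r
    rw [hu_def, Real.mul_rpow (by positivity) hb.le,
        Real.mul_rpow (by positivity) (by positivity),
        ← Real.rpow_mul hL'.le, ← Real.rpow_mul hL.le]
  have hup1 : u ^ (p - 1) = (L + d) ^ q * L ^ ((c - 1) / p) * b ^ (p - 1) := by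
    rw [hupow (p - 1)]
    congr 2
    · congr 1; field_simp
    · congr 1; field_simp
  have hupp : u ^ p = (L + d) ^ q * ((L + d) ^ (q / (p - 1)) * L ^ ((c - 1) / (p - 1))) * b ^ p := by
    rw [hupow p]
    have e1 : q / (p - 1) * p = q + q / (p - 1) := by field_simp; ring
    have e2 : (c - 1) / (p * (p - 1)) * p = (c - 1) / (p - 1) := by field_simp
    rw [e1, e2, Real.rpow_add hL']
    ring
  have hvp : v ^ p = L ^ (q + 1) * a ^ p := by
    rw [hv_def, Real.mul_rpow (by positivity) ha.le, ← Real.rpow_mul hL.le]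
    congr 2
    field_simp
  have huv : u ^ (p - 1) * v = (L + d) ^ q * L * b ^ (p - 1) * a := by
    rw [hup1, hv_def]
    have : L ^ ((c - 1) / p) * L ^ ((q + 1) / p) = L := by
      rw [← Real.rpow_add hL]
      have : (c - 1) / p + (q + 1) / p = 1 := by field_simp; ring
      rw [this, Real.rpow_one]
    calc (L + d) ^ q * L ^ ((c - 1) / p) * b ^ (p - 1) * (L ^ ((q + 1) / p) * a)
        = (L + d) ^ q * (L ^ ((c - 1) / p) * L ^ ((q + 1) / p)) * b ^ (p - 1) * a := by ring
      _ = (L + d) ^ q * L * b ^ (p - 1) * a := by rw [this]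
  have E2 : p * ((L + d) ^ q * L * b ^ (p - 1) * a) ≤ (p - 1) * u ^ p + L ^ (q + 1) * a ^ p := by
    have := young_aux_s5 hp hu0 hv0
    rwa [huv, hvp] at this
  -- AM-GM
  have hgm : (L + d) ^ (q / (p - 1)) * L ^ ((c - 1) / (p - 1))
      ≤ q / (p - 1) * (L + d) + (c - 1) / (p - 1) * L := by
    apply Real.geom_mean_le_arith_mean2_weighted
    · exact div_nonneg hq0 hp1.le
    · exact div_nonneg (by linarith) hp1.le
    · exact hL'.le
    · exact hL.le
    · field_simp
      rw [hq]; ring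
  have E3 : (p - 1) * u ^ p ≤ ((p - 1) * (L + d) - (c - 1) * d) * ((L + d) ^ q * b ^ p) := by
    rw [hupp]
    have hfac : (0:ℝ) ≤ (p - 1) * ((L + d) ^ q * b ^ p) := by positivity
    have h1 : (p - 1) * ((L + d) ^ q * ((L + d) ^ (q / (p - 1)) * L ^ ((c - 1) / (p - 1))) * b ^ p)
        ≤ (p - 1) * ((L + d) ^ q * (q / (p - 1) * (L + d) + (c - 1) / (p - 1) * L) * b ^ p) := by
      have := mul_le_mul_of_nonneg_left hgm hfac
      calc (p - 1) * ((L + d) ^ q * ((L + d) ^ (q / (p - 1)) * L ^ ((c - 1) / (p - 1))) * b ^ p)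
          = (p - 1) * ((L + d) ^ q * b ^ p) * ((L + d) ^ (q / (p - 1)) * L ^ ((c - 1) / (p - 1))) := by ring
        _ ≤ (p - 1) * ((L + d) ^ q * b ^ p) * (q / (p - 1) * (L + d) + (c - 1) / (p - 1) * L) := this
        _ = (p - 1) * ((L + d) ^ q * (q / (p - 1) * (L + d) + (c - 1) / (p - 1) * L) * b ^ p) := by ring
    have h2 : (p - 1) * ((L + d) ^ q * (q / (p - 1) * (L + d) + (c - 1) / (p - 1) * L) * b ^ p)
        = ((p - 1) * (L + d) - (c - 1) * d) * ((L + d) ^ q * b ^ p) := by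
      have : (p - 1) * (q / (p - 1) * (L + d) + (c - 1) / (p - 1) * L)
          = q * (L + d) + (c - 1) * L := by field_simp
      have hq' : q * (L + d) + (c - 1) * L = (p - 1) * (L + d) - (c - 1) * d := by
        rw [hq]; ring
      calc (p - 1) * ((L + d) ^ q * (q / (p - 1) * (L + d) + (c - 1) / (p - 1) * L) * b ^ p)
          = ((p - 1) * (q / (p - 1) * (L + d) + (c - 1) / (p - 1) * L)) * ((L + d) ^ q * b ^ p) := by ring
        _ = ((p - 1) * (L + d) - (c - 1) * d) * ((L + d) ^ q * b ^ p) := by rw [this, hq']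
    linarith
  -- combine
  have hfinal : (c - 1) * (d * (L + d) ^ q * b ^ p) + (L + d) ^ (q + 1) * b ^ p
      ≤ p * (d * (L + d) ^ q * x * b ^ (p - 1)) + L ^ (q + 1) * a ^ p := by
    rw [hLq1]
    nlinarith [E1, E2, E3]
  have hqc : p - c + 1 = q + 1 := by rw [hq]
  rw [hqc]
  exact hfinal

/-- inequality (1.8). -/
theorem stmt_5 (p c : ℝ) (hp : 1 < p) (hc1 : 1 < c) (hcp : c ≤ p)
    (l x : ℕ → ℝ) (hl : ∀ n, 1 ≤ n → 0 < l n) (hx : ∀ n, 1 ≤ n → 0 < x n)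
    (Λ : ℕ → ℝ) (hΛ : ∀ n, Λ n = ∑ k ∈ Finset.Icc 1 n, l k)
    (A : ℕ → ℝ) (hA : ∀ n, 1 ≤ n → A n = (1 / Λ n) * ∑ k ∈ Finset.Icc 1 n, l k * x k)
    (hs : Summable fun n : ℕ =>
      l (n + 1) * Λ (n + 1) ^ (p - c) * x (n + 1) * A (n + 1) ^ (p - 1)) :
    ∑' n : ℕ, ENNReal.ofReal (l (n + 1) * Λ (n + 1) ^ (p - c) * A (n + 1) ^ p)
      ≤ ENNReal.ofReal (p / (c - 1)) *
        ∑' n : ℕ, ENNReal.ofReal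
          (l (n + 1) * Λ (n + 1) ^ (p - c) * x (n + 1) * A (n + 1) ^ (p - 1)) := by
  have hc0 : (0:ℝ) < c - 1 := sub_pos.mpr hc1
  have hp0 : (0:ℝ) < p := lt_trans one_pos hp
  -- positivity of Λ and A
  have hΛpos : ∀ n, 1 ≤ n → 0 < Λ n := by
    intro n hn
    rw [hΛ n]
    apply Finset.sum_pos
    · intro k hk; exact hl k (Finset.mem_Icc.mp hk).1
    · exact Finset.nonempty_Icc.mpr hn
  have hΛA : ∀ n, 1 ≤ n → Λ n * A n = ∑ k ∈ Finset.Icc 1 n, l k * x k := by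
    intro n hn
    rw [hA n hn]
    field_simp [ne_of_gt (hΛpos n hn)]
  have hApos : ∀ n, 1 ≤ n → 0 < A n := by
    intro n hn
    rw [hA n hn]
    apply mul_pos
    · exact one_div_pos.mpr (hΛpos n hn)
    · apply Finset.sum_pos
      · intro k hk
        exact mul_pos (hl k (Finset.mem_Icc.mp hk).1) (hx k (Finset.mem_Icc.mp hk).1)
      · exact Finset.nonempty_Icc.mpr hn
  have hΛsucc : ∀ n, Λ (n + 1) = Λ n + l (n + 1) := by
    intro n
    rw [hΛ (n + 1), hΛ n, Finset.sum_Icc_succ_top (Nat.one_le_iff_ne_zero.mpr (Nat.succ_ne_zero n))]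
  have hrec : ∀ n, 1 ≤ n → (Λ n + l (n + 1)) * A (n + 1) = Λ n * A n + l (n + 1) * x (n + 1) := by
    intro n hn
    rw [← hΛsucc n, hΛA (n + 1) (Nat.le_succ_of_le hn), hΛA n hn,
        Finset.sum_Icc_succ_top (Nat.one_le_iff_ne_zero.mpr (Nat.succ_ne_zero n))]
  have hΛ0 : Λ 0 = 0 := by rw [hΛ 0]; simp
  have hA1 : A 1 = x 1 := by
    rw [hA 1 le_rfl, hΛ 1]
    simp only [Finset.Icc_self, Finset.sum_singleton]
    field_simp [ne_of_gt (hl 1 le_rfl)]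
  -- abbreviations
  set a : ℕ → ℝ := fun n => l (n + 1) * Λ (n + 1) ^ (p - c) * A (n + 1) ^ p with ha_def
  set b : ℕ → ℝ := fun n => l (n + 1) * Λ (n + 1) ^ (p - c) * x (n + 1) * A (n + 1) ^ (p - 1)
    with hb_def
  have ha_pos : ∀ n, 0 < a n := by
    intro n
    have h1 := hl (n + 1) (Nat.succ_le_succ (Nat.zero_le n))
    have h2 := hΛpos (n + 1) (Nat.succ_le_succ (Nat.zero_le n))
    have h3 := hApos (n + 1) (Nat.succ_le_succ (Nat.zero_le n))
    rw [ha_def]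
    positivity
  have hb_pos : ∀ n, 0 < b n := by
    intro n
    have h1 := hl (n + 1) (Nat.succ_le_succ (Nat.zero_le n))
    have h2 := hΛpos (n + 1) (Nat.succ_le_succ (Nat.zero_le n))
    have h3 := hApos (n + 1) (Nat.succ_le_succ (Nat.zero_le n))
    have h4 := hx (n + 1) (Nat.succ_le_succ (Nat.zero_le n))
    rw [hb_def]
    positivity
  -- key induction
  have key : ∀ N, (c - 1) * ∑ n ∈ Finset.range N, a n + Λ N ^ (p - c + 1) * A N ^ p
      ≤ p * ∑ n ∈ Finset.range N, b n := by
    intro N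
    induction N with
    | zero =>
      simp only [Finset.range_zero, Finset.sum_empty, mul_zero, zero_add]
      rw [hΛ0, Real.zero_rpow (by linarith : p - c + 1 ≠ 0)]
      simp
    | succ N ih =>
      rw [Finset.sum_range_succ, Finset.sum_range_succ]
      have hstep : (c - 1) * a N + Λ (N + 1) ^ (p - c + 1) * A (N + 1) ^ p
          ≤ p * b N + Λ N ^ (p - c + 1) * A N ^ p := by
        rcases Nat.eq_zero_or_pos N with hN | hN
        · subst hN
          rw [hΛ0, Real.zero_rpow (by linarith : p - c + 1 ≠ 0), zero_mul, add_zero]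
          have hΛ1 : Λ 1 = l 1 := by rw [hΛsucc 0, hΛ0, zero_add]
          have hl1 : 0 < l 1 := hl 1 le_rfl
          have hx1 : 0 < x 1 := hx 1 le_rfl
          have hA1p : x 1 * A 1 ^ (p - 1) = A 1 ^ p := by
            rw [hA1]
            have h := Real.rpow_add hx1 1 (p - 1)
            rw [show (1:ℝ) + (p - 1) = p by ring, Real.rpow_one] at h
            rw [h]
          show (c - 1) * a 0 + Λ 1 ^ (p - c + 1) * A 1 ^ p ≤ p * b 0
          rw [ha_def, hb_def]
          simp only
          rw [Real.rpow_add_one (ne_of_gt (hΛ1 ▸ hl1)) (p - c)]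
          have hM : 0 < l 1 * Λ 1 ^ (p - c) * A 1 ^ p := by
            have := hΛ1 ▸ hl1
            have hA1pos := hApos 1 le_rfl
            positivity
          calc (c - 1) * (l 1 * Λ 1 ^ (p - c) * A 1 ^ p) + Λ 1 ^ (p - c) * Λ 1 * A 1 ^ p
              = c * (l 1 * Λ 1 ^ (p - c) * A 1 ^ p) := by rw [hΛ1]; ring
            _ ≤ p * (l 1 * Λ 1 ^ (p - c) * A 1 ^ p) :=
                mul_le_mul_of_nonneg_right hcp hM.le
            _ = p * (l 1 * Λ 1 ^ (p - c) * x 1 * A 1 ^ (p - 1)) := by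
                rw [← hA1p]; ring
        · have hstep' := step_aux_s5 p c hp hc1 hcp (hΛpos N hN)
            (hl (N + 1) (Nat.le_succ_of_le hN)) (hx (N + 1) (Nat.le_succ_of_le hN))
            (hApos N hN) (hApos (N + 1) (Nat.le_succ_of_le hN)) (hrec N hN)
          rw [ha_def, hb_def]
          simp only
          rw [hΛsucc N]
          linarith [hstep']
      linarith
  have hTnonneg : ∀ N, 0 ≤ Λ N ^ (p - c + 1) * A N ^ p := by
    intro N
    rcases Nat.eq_zero_or_pos N with h | h
    · subst h; rw [hΛ0, Real.zero_rpow (by linarith : p - c + 1 ≠ 0), zero_mul]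
    · have := hΛpos N h
      have := hApos N h
      positivity
  have key2 : ∀ N, ∑ n ∈ Finset.range N, a n ≤ p / (c - 1) * ∑' n, b n := by
    intro N
    have h1 : (c - 1) * ∑ n ∈ Finset.range N, a n ≤ p * ∑ n ∈ Finset.range N, b n := by
      linarith [key N, hTnonneg N]
    have h2 : ∑ n ∈ Finset.range N, b n ≤ ∑' n, b n :=
      hs.sum_le_tsum (Finset.range N) (fun i _ => (hb_pos i).le)
    have h3 : p * ∑ n ∈ Finset.range N, b n ≤ p * ∑' n, b n :=
      mul_le_mul_of_nonneg_left h2 hp0.le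
    have h4 : (c - 1) * ∑ n ∈ Finset.range N, a n ≤ p * ∑' n, b n := le_trans h1 h3
    have h5 : ∑ n ∈ Finset.range N, a n ≤ p * (∑' n, b n) / (c - 1) := by
      rw [le_div_iff₀ hc0]
      nlinarith [h4]
    calc ∑ n ∈ Finset.range N, a n ≤ p * (∑' n, b n) / (c - 1) := h5
      _ = p / (c - 1) * ∑' n, b n := by ring
  -- transfer to ENNReal
  have hbsum : ENNReal.ofReal (∑' n, b n) = ∑' n, ENNReal.ofReal (b n) :=
    ENNReal.ofReal_tsum_of_nonneg (fun n => (hb_pos n).le) hs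
  rw [show (fun n : ℕ => ENNReal.ofReal
        (l (n + 1) * Λ (n + 1) ^ (p - c) * x (n + 1) * A (n + 1) ^ (p - 1)))
      = fun n => ENNReal.ofReal (b n) from rfl]
  rw [← hbsum, ← ENNReal.ofReal_mul (by positivity : (0:ℝ) ≤ p / (c - 1))]
  rw [show (fun n : ℕ => ENNReal.ofReal (l (n + 1) * Λ (n + 1) ^ (p - c) * A (n + 1) ^ p))
      = fun n => ENNReal.ofReal (a n) from rfl]
  rw [ENNReal.tsum_eq_iSup_sum]
  apply iSup_le
  intro s
  rw [← ENNReal.ofReal_sum_of_nonneg (fun i _ => (ha_pos i).le)]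
  apply ENNReal.ofReal_le_ofReal
  obtain ⟨N, hN⟩ := s.exists_nat_subset_range
  calc ∑ i ∈ s, a i ≤ ∑ i ∈ Finset.range N, a i :=
      Finset.sum_le_sum_of_subset_of_nonneg hN (fun i _ _ => (ha_pos i).le)
    _ ≤ p / (c - 1) * ∑' n, b n := key2 N
end

section
/- Let p>1 and let c be a real number with 0 ≤ c < 1. Let (λ_n)_{n≥1} be a positive real sequence with Λ_n = Σ_{k=1}^n λ_k, and let (x_n)_{n≥1} be a positive real sequence. Setting B_n = (1/Λ_n) Σ_{k=n}^∞ λ_k x_k and assuming the series on the right-hand side converges, one has Σ_{n=1}^∞ λ_n Λ_n^{p−c} B_n^p ≤ ( p/(1−c) ) Σ_{n=1}^∞ λ_n Λ_n^{p−c} x_n B_n^{p−1}. -/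
open Filter Topology

/-- inequality (1.90). -/
theorem stmt_6 (p c : ℝ) (hp : 1 < p) (hc0 : 0 ≤ c) (hc1 : c < 1)
    (l x : ℕ → ℝ) (hl : ∀ n, 1 ≤ n → 0 < l n) (hx : ∀ n, 1 ≤ n → 0 < x n)
    (Λ : ℕ → ℝ) (hΛ : ∀ n, Λ n = ∑ k ∈ Finset.Icc 1 n, l k)
    (hst : ∀ n, 1 ≤ n → Summable fun k : ℕ => l (n + k) * x (n + k))
    (B : ℕ → ℝ) (hB : ∀ n, 1 ≤ n → B n = (1 / Λ n) * ∑' k : ℕ, l (n + k) * x (n + k))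
    (hs : Summable fun n : ℕ =>
      l (n + 1) * Λ (n + 1) ^ (p - c) * x (n + 1) * B (n + 1) ^ (p - 1)) :
    ∑' n : ℕ, ENNReal.ofReal (l (n + 1) * Λ (n + 1) ^ (p - c) * B (n + 1) ^ p)
      ≤ ENNReal.ofReal (p / (1 - c)) *
        ∑' n : ℕ, ENNReal.ofReal
          (l (n + 1) * Λ (n + 1) ^ (p - c) * x (n + 1) * B (n + 1) ^ (p - 1)) := by
  have h1c : (0:ℝ) < 1 - c := by linarith
  set K : ℝ := p / (1 - c) with hK
  have hKpos : 0 < K := div_pos (by linarith) h1c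
  set T : ℕ → ℝ := fun n => ∑' k : ℕ, l (n + k) * x (n + k) with hT
  -- Λ facts
  have hΛ0 : Λ 0 = 0 := by simp [hΛ]
  have hΛsucc : ∀ n : ℕ, Λ (n + 1) = Λ n + l (n + 1) := fun n => by
    rw [hΛ, hΛ, Finset.sum_Icc_succ_top (Nat.le_add_left 1 n)]
  have hΛnonneg : ∀ n, 0 ≤ Λ n := fun n => by
    rw [hΛ]
    exact Finset.sum_nonneg fun k hk => (hl k (Finset.mem_Icc.1 hk).1).le
  have hΛlt : ∀ n : ℕ, Λ n < Λ (n + 1) := fun n => by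
    have := hl (n + 1) (by omega)
    rw [hΛsucc]; linarith
  have hΛpos : ∀ n, 1 ≤ n → 0 < Λ n := by
    intro n hn
    obtain ⟨m, rfl⟩ := Nat.exists_eq_add_of_le hn
    have h0 := hΛnonneg 0
    have : ∀ m : ℕ, 0 < Λ (m + 1) := by
      intro m
      induction m with
      | zero => have := hΛlt 0; linarith
      | succ k ih => have := hΛlt (k + 1); linarith
    simpa [Nat.add_comm] using this m
  have hΛmono : Monotone Λ := monotone_nat_of_le_succ fun n => (hΛlt n).le
  -- T facts
  have hTpos : ∀ n, 1 ≤ n → 0 < T n := fun n hn =>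
    Summable.tsum_pos (hst n hn)
      (fun k => mul_nonneg (hl _ (by omega)).le (hx _ (by omega)).le) 0
      (mul_pos (hl _ (by omega)) (hx _ (by omega)))
  have hTrec : ∀ n, 1 ≤ n → T n = l n * x n + T (n + 1) := by
    intro n hn
    have h := Summable.tsum_eq_zero_add (hst n hn)
    simp only [Nat.add_zero] at h
    rw [hT]
    simp only []
    rw [h]
    congr 1
    exact tsum_congr fun k => by rw [show n + (k + 1) = n + 1 + k from by omega]
  have hTanti : ∀ n, 1 ≤ n → T (n + 1) ≤ T n := by
    intro n hn
    have := hTrec n hn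
    have := mul_pos (hl n hn) (hx n hn)
    linarith
  -- B facts
  have hBT : ∀ n, 1 ≤ n → B n = T n / Λ n := by
    intro n hn
    rw [hB n hn, one_div, inv_mul_eq_div]
  have hBpos : ∀ n, 1 ≤ n → 0 < B n := fun n hn => by
    rw [hBT n hn]; exact div_pos (hTpos n hn) (hΛpos n hn)
  have hTsub : ∀ n, 1 ≤ n → l n * x n = T n - T (n + 1) := by
    intro n hn; have := hTrec n hn; linarith
  -- rewriting the two kinds of terms
  have ha : ∀ n, 1 ≤ n → l n * Λ n ^ (p - c) * B n ^ p = l n * Λ n ^ (-c) * T n ^ p := by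
    intro n hn
    have e : Λ n ^ (-c) = Λ n ^ (p - c) / Λ n ^ p := by
      rw [show (-c) = (p - c) - p by ring, Real.rpow_sub (hΛpos n hn)]
    rw [hBT n hn, Real.div_rpow (hTpos n hn).le (hΛnonneg n), e]
    ring
  have hb : ∀ n, 1 ≤ n → l n * Λ n ^ (p - c) * x n * B n ^ (p - 1)
      = Λ n ^ (1 - c) * ((T n - T (n + 1)) * T n ^ (p - 1)) := by
    intro n hn
    have e : Λ n ^ ((1:ℝ) - c) = Λ n ^ (p - c) / Λ n ^ (p - 1) := by
      rw [show (1:ℝ) - c = (p - c) - (p - 1) by ring, Real.rpow_sub (hΛpos n hn)]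
    rw [hBT n hn, Real.div_rpow (hTpos n hn).le (hΛnonneg n), e, ← hTsub n hn]
    ring
  -- key convexity inequality
  have key2 : ∀ a b : ℝ, 0 < b → b ≤ a → a ^ p - b ^ p ≤ p * ((a - b) * a ^ (p - 1)) := by
    intro a b hb0 hba
    have ha0 : 0 < a := lt_of_lt_of_le hb0 hba
    have hs1 : (-1 : ℝ) ≤ b / a - 1 := by
      have : 0 ≤ b / a := (div_pos hb0 ha0).le
      linarith
    have hber := one_add_mul_self_le_rpow_one_add hs1 hp.le
    rw [show 1 + (b / a - 1) = b / a by ring, Real.div_rpow hb0.le ha0.le] at hber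
    have hap : 0 < a ^ p := Real.rpow_pos_of_pos ha0 p
    have h2 : (1 + p * (b / a - 1)) * a ^ p ≤ b ^ p := by
      have := mul_le_mul_of_nonneg_right hber hap.le
      rwa [div_mul_cancel₀ _ hap.ne'] at this
    have hap1 : a ^ (p - 1) = a ^ p / a := by
      rw [Real.rpow_sub ha0, Real.rpow_one]
    rw [hap1]
    have hid : (1 + p * (b / a - 1)) * a ^ p = a ^ p - p * ((a - b) * (a ^ p / a)) := by
      field_simp
      ring
    rw [hid] at h2
    linarith
  -- key concavity inequality
  have key1 : ∀ a b : ℝ, 0 ≤ b → b < a →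
      (1 - c) * ((a - b) * a ^ (-c)) ≤ a ^ (1 - c) - b ^ (1 - c) := by
    intro a b hb0 hba
    have ha0 : 0 < a := lt_of_le_of_lt hb0 hba
    have hgm := Real.geom_mean_le_arith_mean2_weighted h1c.le hc0
      (div_nonneg hb0 ha0.le) zero_le_one (by ring)
    rw [Real.one_rpow, mul_one, Real.div_rpow hb0 ha0.le] at hgm
    have hap : 0 < a ^ (1 - c) := Real.rpow_pos_of_pos ha0 _
    have h2 : b ^ (1 - c) ≤ ((1 - c) * (b / a) + c * 1) * a ^ (1 - c) := by
      have := mul_le_mul_of_nonneg_right hgm hap.le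
      rwa [div_mul_cancel₀ _ hap.ne'] at this
    have hsplit : a ^ (1 - c) = a * a ^ (-c) := by
      rw [show (1 : ℝ) - c = 1 + (-c) by ring, Real.rpow_add ha0, Real.rpow_one]
    have h3 : b ^ (1 - c) ≤ (1 - c) * (b * a ^ (-c)) + c * (a * a ^ (-c)) := by
      refine h2.trans (le_of_eq ?_)
      rw [hsplit]
      field_simp
    have hid : (1 - c) * ((a - b) * a ^ (-c)) + ((1 - c) * (b * a ^ (-c)) + c * (a * a ^ (-c)))
        = a * a ^ (-c) := by ring
    rw [hsplit]
    linarith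
  -- per-step inequality
  have hstep : ∀ m : ℕ,
      l (m + 1) * Λ (m + 1) ^ (-c) * T (m + 1) ^ p + (1 / (1 - c)) * (Λ m ^ (1 - c) * T (m + 1) ^ p)
        ≤ K * (Λ (m + 1) ^ (1 - c) * ((T (m + 1) - T (m + 2)) * T (m + 1) ^ (p - 1)))
          + (1 / (1 - c)) * (Λ (m + 1) ^ (1 - c) * T (m + 2) ^ p) := by
    intro m
    have hT1 : 0 < T (m + 1) := hTpos _ (by omega)
    have hT2 : 0 < T (m + 2) := hTpos _ (by omega)
    have hT21 : T (m + 2) ≤ T (m + 1) := hTanti _ (by omega)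
    have hk2 := key2 (T (m + 1)) (T (m + 2)) hT2 hT21
    have hk1 := key1 (Λ (m + 1)) (Λ m) (hΛnonneg m) (hΛlt m)
    have hA1 : 0 < Λ (m + 1) ^ (1 - c) := Real.rpow_pos_of_pos (hΛpos _ (by omega)) _
    have hsub : Λ (m + 1) - Λ m = l (m + 1) := by rw [hΛsucc]; ring
    rw [hsub] at hk1
    -- from hk2 : T1^p - T2^p ≤ p * D
    have h4 : (1 / (1 - c)) * (Λ (m + 1) ^ (1 - c) * (T (m + 1) ^ p - T (m + 2) ^ p))
        ≤ K * (Λ (m + 1) ^ (1 - c) * ((T (m + 1) - T (m + 2)) * T (m + 1) ^ (p - 1))) := by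
      have hmul := mul_le_mul_of_nonneg_left hk2 hA1.le
      have hKp : K / p = 1 / (1 - c) := by
        rw [hK]; field_simp
      calc (1 / (1 - c)) * (Λ (m + 1) ^ (1 - c) * (T (m + 1) ^ p - T (m + 2) ^ p))
          = (K / p) * (Λ (m + 1) ^ (1 - c) * (T (m + 1) ^ p - T (m + 2) ^ p)) := by rw [hKp]
        _ ≤ (K / p) * (Λ (m + 1) ^ (1 - c) * (p * ((T (m + 1) - T (m + 2)) * T (m + 1) ^ (p - 1)))) := by
            apply mul_le_mul_of_nonneg_left _ (by positivity)
            exact mul_le_mul_of_nonneg_left hk2 hA1.le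
        _ = K * (Λ (m + 1) ^ (1 - c) * ((T (m + 1) - T (m + 2)) * T (m + 1) ^ (p - 1))) := by
            field_simp
    -- from hk1 : (1-c) * (l(m+1) * Λ(m+1)^(-c)) ≤ Λ(m+1)^(1-c) - Λ m^(1-c)
    have h5 : l (m + 1) * Λ (m + 1) ^ (-c) * T (m + 1) ^ p
        ≤ (1 / (1 - c)) * ((Λ (m + 1) ^ (1 - c) - Λ m ^ (1 - c)) * T (m + 1) ^ p) := by
      have hTp : 0 ≤ T (m + 1) ^ p := (Real.rpow_pos_of_pos hT1 p).le
      have := mul_le_mul_of_nonneg_right hk1 hTp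
      calc l (m + 1) * Λ (m + 1) ^ (-c) * T (m + 1) ^ p
          = (1 / (1 - c)) * ((1 - c) * (l (m + 1) * Λ (m + 1) ^ (-c)) * T (m + 1) ^ p) := by
            field_simp
        _ ≤ (1 / (1 - c)) * ((Λ (m + 1) ^ (1 - c) - Λ m ^ (1 - c)) * T (m + 1) ^ p) := by
            apply mul_le_mul_of_nonneg_left _ (by positivity)
            exact this
    nlinarith [h4, h5]
  -- Claim A
  have claimA : ∀ N : ℕ,
      ∑ m ∈ Finset.range N, l (m + 1) * Λ (m + 1) ^ (-c) * T (m + 1) ^ p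
        ≤ K * ∑ m ∈ Finset.range N,
            Λ (m + 1) ^ (1 - c) * ((T (m + 1) - T (m + 2)) * T (m + 1) ^ (p - 1))
          + (1 / (1 - c)) * (Λ N ^ (1 - c) * T (N + 1) ^ p) := by
    intro N
    induction N with
    | zero => simp [hΛ0, Real.zero_rpow h1c.ne']
    | succ n ih =>
      rw [Finset.sum_range_succ, Finset.sum_range_succ]
      have := hstep n
      rw [mul_add]
      linarith
  -- Claim C
  have claimC : ∀ N M : ℕ, N ≤ M →
      ∑ m ∈ Finset.range N, l (m + 1) * Λ (m + 1) ^ (-c) * T (m + 1) ^ p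
        ≤ K * ∑ m ∈ Finset.range M,
            Λ (m + 1) ^ (1 - c) * ((T (m + 1) - T (m + 2)) * T (m + 1) ^ (p - 1))
          + (1 / (1 - c)) * (Λ N ^ (1 - c) * T (M + 1) ^ p) := by
    intro N
    refine Nat.le_induction (claimA N) ?_
    intro M hNM ih
    rw [Finset.sum_range_succ, mul_add]
    have hT1 : 0 < T (M + 1) := hTpos _ (by omega)
    have hT2 : 0 < T (M + 2) := hTpos _ (by omega)
    have hT21 : T (M + 2) ≤ T (M + 1) := hTanti _ (by omega)
    have hk2 := key2 (T (M + 1)) (T (M + 2)) hT2 hT21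
    have hA1 : 0 < Λ (M + 1) ^ (1 - c) := Real.rpow_pos_of_pos (hΛpos _ (by omega)) _
    have hΛNM : Λ N ^ (1 - c) ≤ Λ (M + 1) ^ (1 - c) :=
      Real.rpow_le_rpow (hΛnonneg N) (hΛmono (by omega)) h1c.le
    have hKp : K / p = 1 / (1 - c) := by rw [hK]; field_simp
    have h4 : (1 / (1 - c)) * (Λ (M + 1) ^ (1 - c) * (T (M + 1) ^ p - T (M + 2) ^ p))
        ≤ K * (Λ (M + 1) ^ (1 - c) * ((T (M + 1) - T (M + 2)) * T (M + 1) ^ (p - 1))) := by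
      calc (1 / (1 - c)) * (Λ (M + 1) ^ (1 - c) * (T (M + 1) ^ p - T (M + 2) ^ p))
          = (K / p) * (Λ (M + 1) ^ (1 - c) * (T (M + 1) ^ p - T (M + 2) ^ p)) := by rw [hKp]
        _ ≤ (K / p) * (Λ (M + 1) ^ (1 - c) * (p * ((T (M + 1) - T (M + 2)) * T (M + 1) ^ (p - 1)))) := by
            apply mul_le_mul_of_nonneg_left _ (by positivity)
            exact mul_le_mul_of_nonneg_left hk2 hA1.le
        _ = K * (Λ (M + 1) ^ (1 - c) * ((T (M + 1) - T (M + 2)) * T (M + 1) ^ (p - 1))) := by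
            field_simp
    have hTdiff : 0 ≤ T (M + 1) ^ p - T (M + 2) ^ p := by
      have := Real.rpow_le_rpow hT2.le hT21 (by linarith : (0:ℝ) ≤ p)
      linarith
    have h6 : (1 / (1 - c)) * (Λ N ^ (1 - c) * (T (M + 1) ^ p - T (M + 2) ^ p))
        ≤ (1 / (1 - c)) * (Λ (M + 1) ^ (1 - c) * (T (M + 1) ^ p - T (M + 2) ^ p)) := by
      apply mul_le_mul_of_nonneg_left _ (by positivity)
      exact mul_le_mul_of_nonneg_right hΛNM hTdiff
    nlinarith [h4, h6, ih]
  -- real-valued total sum of the RHS series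
  set Sb : ℝ := ∑' n : ℕ, l (n + 1) * Λ (n + 1) ^ (p - c) * x (n + 1) * B (n + 1) ^ (p - 1) with hSb
  have hbnonneg : ∀ n : ℕ, 0 ≤ l (n + 1) * Λ (n + 1) ^ (p - c) * x (n + 1) * B (n + 1) ^ (p - 1) := by
    intro n
    have := hl (n + 1) (by omega)
    have := hx (n + 1) (by omega)
    have := hBpos (n + 1) (by omega)
    have := hΛpos (n + 1) (by omega)
    positivity
  have hanonneg : ∀ n : ℕ, 0 ≤ l (n + 1) * Λ (n + 1) ^ (p - c) * B (n + 1) ^ p := by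
    intro n
    have := hl (n + 1) (by omega)
    have := hBpos (n + 1) (by omega)
    have := hΛpos (n + 1) (by omega)
    positivity
  -- T (M+1) ^ p tends to 0
  have hTlim : Tendsto (fun M : ℕ => T (M + 1)) atTop (𝓝 0) := by
    have h0 := tendsto_sum_nat_add (fun k : ℕ => l (k + 1) * x (k + 1))
    refine h0.congr fun M => ?_
    exact tsum_congr fun k => by rw [show k + M + 1 = M + 1 + k from by omega]
  have hTp0 : Tendsto (fun M : ℕ => T (M + 1) ^ p) atTop (𝓝 0) := by
    have hcont : ContinuousAt (fun y : ℝ => y ^ p) 0 :=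
      Real.continuousAt_rpow_const 0 p (Or.inr (by linarith))
    have := hcont.tendsto.comp hTlim
    simpa [Function.comp_def, Real.zero_rpow (by linarith : p ≠ 0)] using this
  -- sums of the RHS converge to Sb
  have hblim : Tendsto (fun M : ℕ => ∑ m ∈ Finset.range M,
      Λ (m + 1) ^ (1 - c) * ((T (m + 1) - T (m + 2)) * T (m + 1) ^ (p - 1))) atTop (𝓝 Sb) := by
    have h1 := hs.hasSum.tendsto_sum_nat
    refine h1.congr fun M => Finset.sum_congr rfl fun m _ => hb (m + 1) (by omega)
  -- main real inequality
  have hmain : ∀ N : ℕ,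
      ∑ m ∈ Finset.range N, l (m + 1) * Λ (m + 1) ^ (p - c) * B (m + 1) ^ p ≤ K * Sb := by
    intro N
    have hrw : ∑ m ∈ Finset.range N, l (m + 1) * Λ (m + 1) ^ (p - c) * B (m + 1) ^ p
        = ∑ m ∈ Finset.range N, l (m + 1) * Λ (m + 1) ^ (-c) * T (m + 1) ^ p :=
      Finset.sum_congr rfl fun m _ => ha (m + 1) (by omega)
    rw [hrw]
    have hlim : Tendsto (fun M : ℕ => K * ∑ m ∈ Finset.range M,
        Λ (m + 1) ^ (1 - c) * ((T (m + 1) - T (m + 2)) * T (m + 1) ^ (p - 1))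
        + (1 / (1 - c)) * (Λ N ^ (1 - c) * T (M + 1) ^ p)) atTop
        (𝓝 (K * Sb + (1 / (1 - c)) * (Λ N ^ (1 - c) * 0))) := by
      exact ((hblim.const_mul K).add ((hTp0.const_mul (Λ N ^ (1 - c))).const_mul (1 / (1 - c))))
    rw [mul_zero, mul_zero, add_zero] at hlim
    refine ge_of_tendsto hlim ?_
    filter_upwards [eventually_ge_atTop N] with M hM
    exact claimC N M hM
  -- conclusion in ENNReal
  have hS0 : 0 ≤ Sb := tsum_nonneg hbnonneg
  rw [← ENNReal.ofReal_tsum_of_nonneg hbnonneg hs, ← ENNReal.ofReal_mul hKpos.le]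
  refine Summable.tsum_le_of_sum_le ENNReal.summable fun s => ?_
  obtain ⟨N, hN⟩ := s.exists_nat_subset_range
  calc ∑ n ∈ s, ENNReal.ofReal (l (n + 1) * Λ (n + 1) ^ (p - c) * B (n + 1) ^ p)
      ≤ ∑ n ∈ Finset.range N, ENNReal.ofReal (l (n + 1) * Λ (n + 1) ^ (p - c) * B (n + 1) ^ p) :=
        Finset.sum_le_sum_of_subset hN
    _ = ENNReal.ofReal (∑ n ∈ Finset.range N, l (n + 1) * Λ (n + 1) ^ (p - c) * B (n + 1) ^ p) :=
        (ENNReal.ofReal_sum_of_nonneg fun n _ => hanonneg n).symm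
    _ ≤ ENNReal.ofReal (K * Sb) := ENNReal.ofReal_le_ofReal (hmain N)
end

section
/- Let p>1 and let c be a real number with 0 ≤ c < 1. Let (λ_n)_{n≥1} be a positive real sequence whose sum converges, with tails Λ*_n = Σ_{k=n}^∞ λ_k, and let (x_n)_{n≥1} be a positive real sequence. Setting C_n = (1/Λ*_n) Σ_{k=1}^n λ_k x_k and assuming the series on the right-hand side converges, one has Σ_{n=1}^∞ λ_n (Λ*_n)^{p−c} C_n^p ≤ ( p/(1−c) ) Σ_{n=1}^∞ λ_n (Λ*_n)^{p−c} x_n C_n^{p−1}. -/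
/-- Bernoulli consequence: convexity of `t^p`, `p ≥ 1`. -/
lemma bern_conv {a b p : ℝ} (ha : 0 < a) (hb : 0 ≤ b) (hba : b ≤ a) (hp : 1 ≤ p) :
    a ^ p - b ^ p ≤ p * a ^ (p - 1) * (a - b) := by
  have hs : (-1 : ℝ) ≤ b / a - 1 := by
    have : 0 ≤ b / a := div_nonneg hb ha.le
    linarith
  have h := one_add_mul_self_le_rpow_one_add hs hp
  have h1 : (1 : ℝ) + (b / a - 1) = b / a := by ring
  rw [h1, Real.div_rpow hb ha.le] at h
  have hap : 0 < a ^ p := Real.rpow_pos_of_pos ha p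
  have h2 := mul_le_mul_of_nonneg_right h hap.le
  rw [div_mul_cancel₀ _ hap.ne'] at h2
  have h3 : a ^ (p - 1) = a ^ p / a := Real.rpow_sub_one ha.ne' p
  have hkey : (1 + p * (b / a - 1)) * a ^ p = a ^ p + p * a ^ (p - 1) * (b - a) := by
    rw [h3]; field_simp
  linarith [hkey ▸ h2]

/-- Bernoulli consequence: concavity of `t^(1-c)`, `0 ≤ c < 1`. -/
lemma bern_conc {a b c : ℝ} (ha : 0 < a) (hb : 0 ≤ b) (hba : b ≤ a) (hc0 : 0 ≤ c)
    (hc1 : c < 1) : (1 - c) * (a - b) * a ^ (-c) ≤ a ^ (1 - c) - b ^ (1 - c) := by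
  have hs : (-1 : ℝ) ≤ b / a - 1 := by
    have : 0 ≤ b / a := div_nonneg hb ha.le
    linarith
  have h := rpow_one_add_le_one_add_mul_self hs (p := 1 - c) (by linarith) (by linarith)
  have h1 : (1 : ℝ) + (b / a - 1) = b / a := by ring
  rw [h1, Real.div_rpow hb ha.le] at h
  have hap : 0 < a ^ (1 - c) := Real.rpow_pos_of_pos ha _
  have h2 := mul_le_mul_of_nonneg_right h hap.le
  rw [div_mul_cancel₀ _ hap.ne'] at h2
  have h3 : a ^ (-c) = a ^ (1 - c) / a := by
    rw [show -c = (1 - c) - 1 by ring, Real.rpow_sub_one ha.ne']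
  have hkey : (1 + (1 - c) * (b / a - 1)) * a ^ (1 - c)
      = a ^ (1 - c) + (1 - c) * (b - a) * a ^ (-c) := by
    rw [h3]; field_simp
  linarith [hkey ▸ h2]

/-- inequality (1.10). -/
theorem stmt_7 (p c : ℝ) (hp : 1 < p) (hc0 : 0 ≤ c) (hc1 : c < 1)
    (l x : ℕ → ℝ) (hl : ∀ n, 1 ≤ n → 0 < l n) (hx : ∀ n, 1 ≤ n → 0 < x n)
    (hlsum : Summable fun n : ℕ => l (n + 1))
    (Λs : ℕ → ℝ) (hΛs : ∀ n, 1 ≤ n → Λs n = ∑' k : ℕ, l (n + k))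
    (C : ℕ → ℝ) (hC : ∀ n, 1 ≤ n → C n = (1 / Λs n) * ∑ k ∈ Finset.Icc 1 n, l k * x k)
    (hs : Summable fun n : ℕ =>
      l (n + 1) * Λs (n + 1) ^ (p - c) * x (n + 1) * C (n + 1) ^ (p - 1)) :
    ∑' n : ℕ, ENNReal.ofReal (l (n + 1) * Λs (n + 1) ^ (p - c) * C (n + 1) ^ p)
      ≤ ENNReal.ofReal (p / (1 - c)) *
        ∑' n : ℕ, ENNReal.ofReal
          (l (n + 1) * Λs (n + 1) ^ (p - c) * x (n + 1) * C (n + 1) ^ (p - 1)) := by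
  have hc : (0 : ℝ) < 1 - c := by linarith
  -- partial sums S
  obtain ⟨S, hS0, hSsucc, hSnonneg, hCS⟩ :
      ∃ S : ℕ → ℝ, S 0 = 0 ∧ (∀ n, S (n + 1) = S n + l (n + 1) * x (n + 1)) ∧
        (∀ n, 0 ≤ S n) ∧ (∀ n, 1 ≤ n → C n = S n / Λs n) := by
    refine ⟨fun n => ∑ k ∈ Finset.Icc 1 n, l k * x k, by simp, ?_, ?_, ?_⟩
    · intro n
      exact Finset.sum_Icc_succ_top (Nat.le_add_left 1 n) _
    · intro n
      refine Finset.sum_nonneg fun k hk => ?_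
      have hk1 : 1 ≤ k := (Finset.mem_Icc.mp hk).1
      exact mul_nonneg (hl k hk1).le (hx k hk1).le
    · intro n hn
      rw [hC n hn]; ring
  -- summability of tails
  have hsum' : ∀ n, 1 ≤ n → Summable fun k : ℕ => l (n + k) := by
    intro n hn
    have h1 : Summable fun k : ℕ => l (k + (n - 1) + 1) :=
      (_root_.summable_nat_add_iff (f := fun k : ℕ => l (k + 1)) (n - 1)).mpr hlsum
    exact h1.congr fun k => by congr 1; omega
  have hΛpos : ∀ n, 1 ≤ n → 0 < Λs n := by
    intro n hn
    rw [hΛs n hn]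
    exact Summable.tsum_pos (hsum' n hn) (fun k => (hl _ (by omega)).le) 0 (hl _ (by omega))
  have hΛrec : ∀ n, 1 ≤ n → Λs n = l n + Λs (n + 1) := by
    intro n hn
    rw [hΛs n hn, hΛs (n + 1) (by omega), Summable.tsum_eq_zero_add (hsum' n hn), Nat.add_zero]
    exact congrArg (fun t => l n + t) (tsum_congr fun k => congrArg l (by omega))
  -- rewriting A and B
  have eqA : ∀ m, 1 ≤ m →
      l m * Λs m ^ (p - c) * C m ^ p = l m * Λs m ^ (-c) * S m ^ p := by
    intro m hm
    have hΛ := hΛpos m hm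
    rw [hCS m hm, Real.div_rpow (hSnonneg m) hΛ.le]
    have h4 : Λs m ^ (p - c) / Λs m ^ p = Λs m ^ (-c) := by
      rw [← Real.rpow_sub hΛ]; norm_num
    calc l m * Λs m ^ (p - c) * (S m ^ p / Λs m ^ p)
        = l m * (Λs m ^ (p - c) / Λs m ^ p) * S m ^ p := by ring
      _ = l m * Λs m ^ (-c) * S m ^ p := by rw [h4]
  have eqB : ∀ m, 1 ≤ m →
      l m * Λs m ^ (p - c) * x m * C m ^ (p - 1)
        = l m * x m * Λs m ^ (1 - c) * S m ^ (p - 1) := by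
    intro m hm
    have hΛ := hΛpos m hm
    rw [hCS m hm, Real.div_rpow (hSnonneg m) hΛ.le]
    have h4 : Λs m ^ (p - c) / Λs m ^ (p - 1) = Λs m ^ (1 - c) := by
      rw [← Real.rpow_sub hΛ]; norm_num
    calc l m * Λs m ^ (p - c) * x m * (S m ^ (p - 1) / Λs m ^ (p - 1))
        = l m * x m * (Λs m ^ (p - c) / Λs m ^ (p - 1)) * S m ^ (p - 1) := by ring
      _ = _ := by rw [h4]
  -- key induction
  have key : ∀ N : ℕ,
      (1 - c) * ∑ n ∈ Finset.range N, (l (n + 1) * Λs (n + 1) ^ (p - c) * C (n + 1) ^ p)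
        + Λs (N + 1) ^ (1 - c) * S N ^ p
      ≤ p * ∑ n ∈ Finset.range N,
          (l (n + 1) * Λs (n + 1) ^ (p - c) * x (n + 1) * C (n + 1) ^ (p - 1)) := by
    intro N
    induction N with
    | zero =>
      simp [hS0, Real.zero_rpow (by positivity : p ≠ 0)]
    | succ N ih =>
      rw [Finset.sum_range_succ, Finset.sum_range_succ]
      have hm : 1 ≤ N + 1 := Nat.le_add_left 1 N
      have hΛ1 := hΛpos (N + 1) hm
      have hΛ2 := hΛpos (N + 2) (by omega)
      have hΛr := hΛrec (N + 1) hm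
      have hlm := hl (N + 1) hm
      have hxm := hx (N + 1) hm
      have hSm : 0 < S (N + 1) := by
        rw [hSsucc N]; have := hSnonneg N; nlinarith
      have hSle : S N ≤ S (N + 1) := by rw [hSsucc N]; nlinarith
      -- concavity step
      have hb2 := bern_conc (a := Λs (N + 1)) (b := Λs (N + 2)) hΛ1 hΛ2.le
        (by linarith) hc0 hc1
      have P1 : (1 - c) * (l (N + 1) * Λs (N + 1) ^ (-c) * S (N + 1) ^ p)
          ≤ (Λs (N + 1) ^ (1 - c) - Λs (N + 2) ^ (1 - c)) * S (N + 1) ^ p := by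
        have h5 := mul_le_mul_of_nonneg_right hb2 (Real.rpow_nonneg (hSnonneg (N + 1)) p)
        have hld : Λs (N + 1) - Λs (N + 2) = l (N + 1) := by linarith
        rw [hld] at h5
        nlinarith [h5]
      -- convexity step
      have hb1 := bern_conv (a := S (N + 1)) (b := S N) hSm (hSnonneg N) hSle hp.le
      have P2 : Λs (N + 1) ^ (1 - c) * (S (N + 1) ^ p - S N ^ p)
          ≤ p * (l (N + 1) * x (N + 1) * Λs (N + 1) ^ (1 - c) * S (N + 1) ^ (p - 1)) := by
        have h6 := mul_le_mul_of_nonneg_left hb1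
          (Real.rpow_nonneg hΛ1.le (1 - c))
        have hSd : S (N + 1) - S N = l (N + 1) * x (N + 1) := by rw [hSsucc N]; ring
        rw [hSd] at h6
        nlinarith [h6]
      rw [eqA (N + 1) hm, eqB (N + 1) hm]
      nlinarith [ih, P1, P2]
  -- pass to partial sums, then ENNReal
  have key2 : ∀ N : ℕ,
      ∑ n ∈ Finset.range N, (l (n + 1) * Λs (n + 1) ^ (p - c) * C (n + 1) ^ p)
        ≤ (p / (1 - c)) * ∑ n ∈ Finset.range N,
            (l (n + 1) * Λs (n + 1) ^ (p - c) * x (n + 1) * C (n + 1) ^ (p - 1)) := by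
    intro N
    have h := key N
    have hT : 0 ≤ Λs (N + 1) ^ (1 - c) * S N ^ p :=
      mul_nonneg (Real.rpow_nonneg (hΛpos (N + 1) (by omega)).le _)
        (Real.rpow_nonneg (hSnonneg N) _)
    rw [div_mul_eq_mul_div, le_div_iff₀ hc, mul_comm _ (1 - c)]
    linarith
  have hAnn : ∀ n : ℕ, 0 ≤ l (n + 1) * Λs (n + 1) ^ (p - c) * C (n + 1) ^ p := by
    intro n
    rw [eqA (n + 1) (by omega)]
    exact mul_nonneg (mul_nonneg (hl (n + 1) (by omega)).le
      (Real.rpow_nonneg (hΛpos (n + 1) (by omega)).le _)) (Real.rpow_nonneg (hSnonneg _) _)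
  have hBnn : ∀ n : ℕ,
      0 ≤ l (n + 1) * Λs (n + 1) ^ (p - c) * x (n + 1) * C (n + 1) ^ (p - 1) := by
    intro n
    rw [eqB (n + 1) (by omega)]
    exact mul_nonneg (mul_nonneg (mul_nonneg (hl (n + 1) (by omega)).le
      (hx (n + 1) (by omega)).le)
      (Real.rpow_nonneg (hΛpos (n + 1) (by omega)).le _)) (Real.rpow_nonneg (hSnonneg _) _)
  rw [ENNReal.tsum_eq_iSup_nat]
  refine iSup_le fun N => ?_
  calc ∑ n ∈ Finset.range N,
        ENNReal.ofReal (l (n + 1) * Λs (n + 1) ^ (p - c) * C (n + 1) ^ p)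
      = ENNReal.ofReal (∑ n ∈ Finset.range N,
          (l (n + 1) * Λs (n + 1) ^ (p - c) * C (n + 1) ^ p)) :=
        (ENNReal.ofReal_sum_of_nonneg fun n _ => hAnn n).symm
    _ ≤ ENNReal.ofReal ((p / (1 - c)) * ∑ n ∈ Finset.range N,
          (l (n + 1) * Λs (n + 1) ^ (p - c) * x (n + 1) * C (n + 1) ^ (p - 1))) :=
        ENNReal.ofReal_le_ofReal (key2 N)
    _ = ENNReal.ofReal (p / (1 - c)) * ENNReal.ofReal (∑ n ∈ Finset.range N,
          (l (n + 1) * Λs (n + 1) ^ (p - c) * x (n + 1) * C (n + 1) ^ (p - 1))) :=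
        ENNReal.ofReal_mul (by positivity)
    _ = ENNReal.ofReal (p / (1 - c)) * ∑ n ∈ Finset.range N,
          ENNReal.ofReal (l (n + 1) * Λs (n + 1) ^ (p - c) * x (n + 1) * C (n + 1) ^ (p - 1)) := by
        rw [ENNReal.ofReal_sum_of_nonneg fun n _ => hBnn n]
    _ ≤ _ := mul_le_mul_right (ENNReal.sum_le_tsum _) _
end

section
/- Let p>1 and let c be a real number with 1 < c ≤ p. Let (λ_n)_{n≥1} be a positive real sequence whose sum converges, with tails Λ*_n = Σ_{k=n}^∞ λ_k, and let (x_n)_{n≥1} be a positive real sequence. Setting A*_n = (1/Λ*_n) Σ_{k=n}^∞ λ_k x_k and assuming the series on the right-hand side converges, one has Σ_{n=1}^∞ λ_n (Λ*_n)^{p−c} (A*_n)^p ≤ ( p/(c−1) ) Σ_{n=1}^∞ λ_n (Λ*_n)^{p−c} x_n (A*_n)^{p−1}. -/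
open Filter Finset Real

lemma stmt8_amgm {p c u v : ℝ} (hp : 1 < p) (hc1 : 1 < c) (hcp : c ≤ p)
    (hu : 0 < u) (hv : 0 < v) :
    p * v ≤ u ^ (1 - c) * v ^ p + (c - 1) * u + (p - c) := by
  have hp0 : (0:ℝ) < p := by linarith
  have h := Real.geom_mean_le_arith_mean3_weighted
    (by positivity : (0:ℝ) ≤ 1 / p)
    (by have : (0:ℝ) ≤ c - 1 := by linarith
        positivity : (0:ℝ) ≤ (c - 1) / p)
    (by have : (0:ℝ) ≤ p - c := by linarith
        positivity : (0:ℝ) ≤ (p - c) / p)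
    (by positivity : (0:ℝ) ≤ u ^ (1 - c) * v ^ p)
    hu.le (zero_le_one)
    (by field_simp; ring)
  have hg : (u ^ (1 - c) * v ^ p) ^ (1 / p) * u ^ ((c - 1) / p) * (1:ℝ) ^ ((p - c) / p) = v := by
    rw [Real.one_rpow, mul_one,
      Real.mul_rpow (by positivity) (by positivity),
      ← Real.rpow_mul hu.le, ← Real.rpow_mul hv.le]
    rw [show p * (1 / p) = 1 by field_simp, Real.rpow_one]
    rw [mul_comm (u ^ _) v, mul_assoc, ← Real.rpow_add hu]
    rw [show (1 - c) * (1 / p) + (c - 1) / p = 0 by field_simp; ring, Real.rpow_zero, mul_one]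
  rw [hg] at h
  have h2 := mul_le_mul_of_nonneg_left h hp0.le
  calc p * v ≤ p * (1 / p * (u ^ (1 - c) * v ^ p) + (c - 1) / p * u + (p - c) / p * 1) := h2
    _ = u ^ (1 - c) * v ^ p + (c - 1) * u + (p - c) := by field_simp

lemma stmt8_step (p c : ℝ) (hp : 1 < p) (hc1 : 1 < c) (hcp : c ≤ p)
    {a s lam y : ℝ} (hlam : 0 < lam) (hy : 0 < y) (hb : 0 < a - lam) (ht : 0 < s - lam * y) :
    (c - 1) * (lam * a ^ (-c) * s ^ p)
      ≤ p * (lam * y * a ^ (1 - c) * s ^ (p - 1))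
        + ((a - lam) ^ (1 - c) * (s - lam * y) ^ p - a ^ (1 - c) * s ^ p) := by
  have ha : 0 < a := by linarith
  have hs : 0 < s := by nlinarith
  have hp0 : (0:ℝ) < p := by linarith
  have h0 := stmt8_amgm (u := (a - lam) / a) (v := (s - lam * y) / s) hp hc1 hcp
    (by positivity) (by positivity)
  have hAS : (0:ℝ) ≤ a ^ (1 - c) * s ^ p := by positivity
  have h1 := mul_le_mul_of_nonneg_right h0 hAS
  have ha1 : a ^ (1 - c) = a * a ^ (-c) := by
    rw [show (1:ℝ) - c = 1 + (-c) by ring, Real.rpow_add ha, Real.rpow_one]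
  have hs1 : s ^ p = s * s ^ (p - 1) := by
    rw [show p = 1 + (p - 1) by ring, Real.rpow_add hs, Real.rpow_one]
    ring_nf
  have hane : a ^ (1 - c) ≠ 0 := ne_of_gt (Real.rpow_pos_of_pos ha _)
  have hsne : s ^ p ≠ 0 := ne_of_gt (Real.rpow_pos_of_pos hs _)
  have eL : (p * ((s - lam * y) / s)) * (a ^ (1 - c) * s ^ p)
      = p * ((s - lam * y) * (a ^ (1 - c) * s ^ (p - 1))) := by
    rw [hs1]; field_simp
  have eR1 : ((a - lam) / a) ^ (1 - c) * ((s - lam * y) / s) ^ p * (a ^ (1 - c) * s ^ p)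
      = (a - lam) ^ (1 - c) * (s - lam * y) ^ p := by
    rw [Real.div_rpow hb.le ha.le, Real.div_rpow ht.le hs.le]
    field_simp
  have eR2 : ((c - 1) * ((a - lam) / a)) * (a ^ (1 - c) * s ^ p)
      = (c - 1) * ((a - lam) * (a ^ (-c) * s ^ p)) := by
    rw [ha1]; field_simp
  rw [add_mul, add_mul, eL, eR1, eR2] at h1
  -- h1 : p * ((s - lam*y) * (a^(1-c) * s^(p-1))) ≤ B*T + (c-1)*((a-lam)*(a^(-c)*s^p)) + (p-c)*(a^(1-c)*s^p)
  rw [ha1, hs1] at h1 ⊢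
  ring_nf at h1 ⊢
  linarith [h1]

lemma stmt8_rpow_diff {p s t : ℝ} (hp : 1 < p) (ht : 0 < t) (hts : t ≤ s) :
    s ^ p - t ^ p ≤ p * s ^ (p - 1) * (s - t) := by
  have hs : 0 < s := lt_of_lt_of_le ht hts
  have hsp : s ^ p = s * s ^ (p - 1) := by
    rw [show p = 1 + (p - 1) by ring, Real.rpow_add hs, Real.rpow_one]
    ring_nf
  have hdiv : (0:ℝ) ≤ t / s := by positivity
  have hb := one_add_mul_self_le_rpow_one_add (s := t / s - 1) (by linarith) hp.le
  rw [show (1:ℝ) + (t / s - 1) = t / s by ring] at hb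
  rw [Real.div_rpow ht.le hs.le] at hb
  have hspos : (0:ℝ) < s ^ p := Real.rpow_pos_of_pos hs p
  have h2 := mul_le_mul_of_nonneg_right hb hspos.le
  rw [div_mul_cancel₀ _ (ne_of_gt hspos)] at h2
  have e : (1 + p * (t / s - 1)) * s ^ p = s ^ p + p * (t * s ^ (p - 1)) - p * s ^ p := by
    rw [hsp]; field_simp; ring
  rw [e] at h2
  have e2 : p * s ^ (p - 1) * (s - t) = p * s ^ p - p * (t * s ^ (p - 1)) := by
    rw [hsp]; ring
  linarith

open Filter Finset in
lemma stmt8_core (p c : ℝ) (hp : 1 < p) (hc1 : 1 < c) (hcp : c ≤ p)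
    (L X Lam T : ℕ → ℝ)
    (hL : ∀ m, 0 < L m) (hX : ∀ m, 0 < X m)
    (hLam : ∀ m, 0 < Lam m) (hT : ∀ m, 0 < T m)
    (hLrec : ∀ m, Lam m - L m = Lam (m + 1))
    (hTrec : ∀ m, T m - L m * X m = T (m + 1))
    (hT0 : Tendsto T atTop (nhds 0))
    (G : ℕ → ℝ) (hGdef : ∀ m, G m = L m * X m * Lam m ^ (1 - c) * T m ^ (p - 1))
    (hsG : Summable G) :
    Summable (fun m => L m * Lam m ^ (-c) * T m ^ p) ∧
      ∑' m, L m * Lam m ^ (-c) * T m ^ p ≤ p / (c - 1) * ∑' m, G m := by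
  have hp0 : (0:ℝ) < p := by linarith
  have hc0 : (0:ℝ) < c - 1 := by linarith
  set F : ℕ → ℝ := fun m => L m * Lam m ^ (-c) * T m ^ p with hFdef
  set H : ℕ → ℝ := fun m => Lam m ^ (1 - c) * T m ^ p with hHdef
  have hF0 : ∀ m, 0 ≤ F m := fun m => by
    have := hL m; have := hLam m; have := hT m; positivity
  have hG0 : ∀ m, 0 ≤ G m := fun m => by
    rw [hGdef m]
    have := hL m; have := hX m; have := hLam m; have := hT m; positivity
  have hH0 : ∀ m, 0 ≤ H m := fun m => by
    have := hLam m; have := hT m; positivity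
  -- the one-step inequality
  have hstep : ∀ m, (c - 1) * F m ≤ p * G m + (H (m + 1) - H m) := by
    intro m
    have h := stmt8_step p c hp hc1 hcp (hL m) (hX m)
      (a := Lam m) (s := T m)
      (by rw [hLrec m]; exact hLam (m + 1))
      (by rw [hTrec m]; exact hT (m + 1))
    rw [hLrec m, hTrec m] at h
    rw [hGdef m]
    simp only [hFdef, hHdef]
    linarith [h]
  -- partial sums
  have hpartial : ∀ N, (c - 1) * ∑ m ∈ range N, F m
      ≤ p * ∑ m ∈ range N, G m + (H N - H 0) := by
    intro N
    calc (c - 1) * ∑ m ∈ range N, F m = ∑ m ∈ range N, (c - 1) * F m := by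
          rw [Finset.mul_sum]
      _ ≤ ∑ m ∈ range N, (p * G m + (H (m + 1) - H m)) :=
          Finset.sum_le_sum fun m _ => hstep m
      _ = p * ∑ m ∈ range N, G m + (H N - H 0) := by
          rw [Finset.sum_add_distrib, Finset.sum_range_sub, ← Finset.mul_sum]
  -- tails of G
  have hsGtail : ∀ N, Summable fun k => G (N + k) := fun N =>
    ((summable_nat_add_iff N).2 hsG).congr fun k => by rw [Nat.add_comm]
  have htail_le : ∀ N, ∑' k, G (N + k) ≤ ∑' m, G m := fun N =>
    Summable.tsum_le_tsum_of_inj (fun k => N + k) (add_right_injective N)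
      (fun i _ => hG0 i) (fun k => le_rfl) (hsGtail N) hsG
  have htail0 : Tendsto (fun N => ∑' k, G (N + k)) atTop (nhds 0) := by
    refine (tendsto_sum_nat_add G).congr fun N => ?_
    exact tsum_congr fun k => by rw [Nat.add_comm]
  -- antitonicity of Lam
  have hanti : ∀ n k, Lam (n + k) ≤ Lam n := by
    intro n k
    induction k with
    | zero => exact le_rfl
    | succ k ih =>
      have h2 := hLrec (n + k)
      have h3 := hL (n + k)
      have : Lam (n + (k + 1)) = Lam (n + k + 1) := by rw [show n + (k + 1) = n + k + 1 from by omega]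
      rw [this, ← h2]
      linarith
  -- T is antitone-ish and positive
  have hTle : ∀ m, T (m + 1) ≤ T m := fun m => by
    have := hTrec m; have := hL m; have := hX m; nlinarith
  -- pointwise bound for the boundary term
  have hpoint : ∀ N k, Lam N ^ (1 - c) * (T (N + k) ^ p - T (N + k + 1) ^ p) ≤ p * G (N + k) := by
    intro N k
    have hd := stmt8_rpow_diff hp (hT (N + k + 1)) (hTle (N + k))
    have hd0 : 0 ≤ T (N + k) ^ p - T (N + k + 1) ^ p := by
      have := Real.rpow_le_rpow (hT (N + k + 1)).le (hTle (N + k)) hp0.le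
      linarith
    have hLle : Lam N ^ (1 - c) ≤ Lam (N + k) ^ (1 - c) :=
      Real.rpow_le_rpow_of_nonpos (hLam (N + k)) (hanti N k) (by linarith)
    have hsub : T (N + k) - T (N + k + 1) = L (N + k) * X (N + k) := by
      have := hTrec (N + k); linarith
    calc Lam N ^ (1 - c) * (T (N + k) ^ p - T (N + k + 1) ^ p)
        ≤ Lam (N + k) ^ (1 - c) * (T (N + k) ^ p - T (N + k + 1) ^ p) :=
          mul_le_mul_of_nonneg_right hLle hd0
      _ ≤ Lam (N + k) ^ (1 - c) * (p * T (N + k) ^ (p - 1) * (T (N + k) - T (N + k + 1))) :=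
          mul_le_mul_of_nonneg_left hd (Real.rpow_nonneg (hLam (N + k)).le _)
      _ = p * G (N + k) := by rw [hGdef (N + k), hsub]; ring
  -- boundary bound : H N ≤ p * tail N
  have hHb : ∀ N, H N ≤ p * ∑' k, G (N + k) := by
    intro N
    have hstepK : ∀ K, H N ≤ p * ∑' k, G (N + k) + Lam N ^ (1 - c) * T (N + K) ^ p := by
      intro K
      have tele : ∑ k ∈ range K, (Lam N ^ (1 - c) * (T (N + k) ^ p - T (N + k + 1) ^ p))
          = Lam N ^ (1 - c) * (T (N + 0) ^ p - T (N + K) ^ p) := by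
        rw [← Finset.mul_sum]
        congr 1
        exact Finset.sum_range_sub' (fun k => T (N + k) ^ p) K
      have hsum1 : ∑ k ∈ range K, (Lam N ^ (1 - c) * (T (N + k) ^ p - T (N + k + 1) ^ p))
          ≤ p * ∑' k, G (N + k) := by
        calc ∑ k ∈ range K, (Lam N ^ (1 - c) * (T (N + k) ^ p - T (N + k + 1) ^ p))
            ≤ ∑ k ∈ range K, p * G (N + k) := Finset.sum_le_sum fun k _ => hpoint N k
          _ = p * ∑ k ∈ range K, G (N + k) := by rw [Finset.mul_sum]
          _ ≤ p * ∑' k, G (N + k) := by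
              refine mul_le_mul_of_nonneg_left ?_ hp0.le
              exact Summable.sum_le_tsum (range K) (fun i _ => hG0 _) (hsGtail N)
      rw [tele] at hsum1
      simp only [hHdef, Nat.add_zero] at hsum1 ⊢
      nlinarith [hsum1]
    have hTK : Tendsto (fun K => T (N + K)) atTop (nhds 0) := by
      refine (hT0.comp (tendsto_add_atTop_nat N)).congr fun K => ?_
      simp [Nat.add_comm]
    have hTKp : Tendsto (fun K => Lam N ^ (1 - c) * T (N + K) ^ p) atTop (nhds 0) := by
      have h1 := hTK.rpow_const (p := p) (Or.inr hp0.le)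
      rw [Real.zero_rpow hp0.ne'] at h1
      simpa using h1.const_mul (Lam N ^ (1 - c))
    have hlim : Tendsto (fun K => p * ∑' k, G (N + k) + Lam N ^ (1 - c) * T (N + K) ^ p)
        atTop (nhds (p * ∑' k, G (N + k) + 0)) := tendsto_const_nhds.add hTKp
    have := ge_of_tendsto' hlim hstepK
    linarith
  -- summability of F
  have hFbound : ∀ N, ∑ m ∈ range N, F m ≤ (p * ∑' m, G m + p * ∑' m, G m) / (c - 1) := by
    intro N
    rw [le_div_iff₀ hc0]
    have h1 := hpartial N
    have h2 := hHb N
    have h3 := htail_le N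
    have h4 : ∑ m ∈ range N, G m ≤ ∑' m, G m := Summable.sum_le_tsum (range N) (fun i _ => hG0 _) hsG
    have h5 := hH0 0
    nlinarith
  have hsF : Summable F := summable_of_sum_range_le hF0 hFbound
  refine ⟨hsF, ?_⟩
  -- limit argument
  have h1 : Tendsto (fun N => (c - 1) * ∑ m ∈ range N, F m) atTop
      (nhds ((c - 1) * ∑' m, F m)) := (hsF.hasSum.tendsto_sum_nat).const_mul _
  have h2 : Tendsto (fun N => p * ∑' m, G m + p * ∑' k, G (N + k)) atTop
      (nhds (p * ∑' m, G m + p * 0)) := tendsto_const_nhds.add (htail0.const_mul p)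
  have h3 : ∀ N, (c - 1) * ∑ m ∈ range N, F m ≤ p * ∑' m, G m + p * ∑' k, G (N + k) := by
    intro N
    have ha := hpartial N
    have hb := hHb N
    have hcc : ∑ m ∈ range N, G m ≤ ∑' m, G m := Summable.sum_le_tsum (range N) (fun i _ => hG0 _) hsG
    have hd := hH0 0
    nlinarith
  have h4 := le_of_tendsto_of_tendsto' h1 h2 h3
  rw [mul_zero, add_zero] at h4
  rw [div_mul_eq_mul_div, le_div_iff₀ hc0]
  linarith

open Filter Finset in
/-- inequality (1.11). -/
theorem stmt_8 (p c : ℝ) (hp : 1 < p) (hc1 : 1 < c) (hcp : c ≤ p)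
    (l x : ℕ → ℝ) (hl : ∀ n, 1 ≤ n → 0 < l n) (hx : ∀ n, 1 ≤ n → 0 < x n)
    (hlsum : Summable fun n : ℕ => l (n + 1))
    (Λs : ℕ → ℝ) (hΛs : ∀ n, 1 ≤ n → Λs n = ∑' k : ℕ, l (n + k))
    (hst : ∀ n, 1 ≤ n → Summable fun k : ℕ => l (n + k) * x (n + k))
    (As : ℕ → ℝ) (hAs : ∀ n, 1 ≤ n → As n = (1 / Λs n) * ∑' k : ℕ, l (n + k) * x (n + k))
    (hs : Summable fun n : ℕ =>
      l (n + 1) * Λs (n + 1) ^ (p - c) * x (n + 1) * As (n + 1) ^ (p - 1)) :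
    ∑' n : ℕ, ENNReal.ofReal (l (n + 1) * Λs (n + 1) ^ (p - c) * As (n + 1) ^ p)
      ≤ ENNReal.ofReal (p / (c - 1)) *
        ∑' n : ℕ, ENNReal.ofReal
          (l (n + 1) * Λs (n + 1) ^ (p - c) * x (n + 1) * As (n + 1) ^ (p - 1)) := by
  have hp0 : (0:ℝ) < p := by linarith
  have hc0 : (0:ℝ) < c - 1 := by linarith
  -- basic summability
  have hsl : Summable l := (summable_nat_add_iff 1).1 hlsum
  have hsum : ∀ n : ℕ, Summable fun k => l (n + k) := fun n =>
    ((summable_nat_add_iff n).2 hsl).congr fun k => by rw [Nat.add_comm]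
  have hslx : Summable (fun j => l j * x j) :=
    (summable_nat_add_iff 1).1 ((hst 1 le_rfl).congr fun k => by rw [Nat.add_comm 1 k])
  have hsumlx : ∀ n : ℕ, Summable fun k => l (n + k) * x (n + k) := fun n =>
    ((summable_nat_add_iff n).2 hslx).congr fun k => by rw [Nat.add_comm]
  -- the tail sum of l * x
  set Tt : ℕ → ℝ := fun n => ∑' k : ℕ, l (n + k) * x (n + k) with hTtdef
  -- basic positivity
  have hΛpos : ∀ m : ℕ, 0 < Λs (m + 1) := by
    intro m
    rw [hΛs (m + 1) (by omega)]
    exact Summable.tsum_pos (hsum (m + 1)) (fun k => (hl _ (by omega)).le) 0 (hl _ (by omega))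
  have hTpos : ∀ m : ℕ, 0 < Tt (m + 1) := by
    intro m
    exact Summable.tsum_pos (hsumlx (m + 1))
      (fun k => (mul_pos (hl _ (by omega)) (hx _ (by omega))).le) 0
      (mul_pos (hl _ (by omega)) (hx _ (by omega)))
  -- recurrences
  have hΛrec : ∀ m : ℕ, Λs (m + 1) - l (m + 1) = Λs (m + 2) := by
    intro m
    rw [hΛs (m + 1) (by omega), hΛs (m + 2) (by omega)]
    rw [Summable.tsum_eq_zero_add (hsum (m + 1))]
    have e : ∑' k : ℕ, l (m + 1 + (k + 1)) = ∑' k : ℕ, l (m + 2 + k) :=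
      tsum_congr fun k => congrArg l (by omega)
    rw [e]
    exact add_sub_cancel_left _ _
  have hTrec : ∀ m : ℕ, Tt (m + 1) - l (m + 1) * x (m + 1) = Tt (m + 2) := by
    intro m
    simp only [hTtdef]
    rw [Summable.tsum_eq_zero_add (hsumlx (m + 1))]
    have e : ∑' k : ℕ, l (m + 1 + (k + 1)) * x (m + 1 + (k + 1))
        = ∑' k : ℕ, l (m + 2 + k) * x (m + 2 + k) :=
      tsum_congr fun k => by rw [show m + 1 + (k + 1) = m + 2 + k from by omega]
    rw [e]
    exact add_sub_cancel_left _ _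
  -- As in terms of Tt
  have hAseq : ∀ m : ℕ, As (m + 1) = Tt (m + 1) / Λs (m + 1) := by
    intro m
    rw [hAs (m + 1) (by omega), one_div_mul_eq_div]
  -- T tends to zero
  have hTt0 : Tendsto (fun m => Tt (m + 1)) atTop (nhds 0) := by
    refine ((tendsto_sum_nat_add (fun j => l j * x j)).comp
      (tendsto_add_atTop_nat 1)).congr fun m => ?_
    exact tsum_congr fun k => by rw [Nat.add_comm]
  -- identify statement terms
  have hFeq : ∀ n : ℕ, l (n + 1) * Λs (n + 1) ^ (p - c) * As (n + 1) ^ p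
      = l (n + 1) * Λs (n + 1) ^ (-c) * Tt (n + 1) ^ p := by
    intro n
    rw [hAseq n, Real.div_rpow (hTpos n).le (hΛpos n).le]
    have e : Λs (n + 1) ^ (p - c) = Λs (n + 1) ^ (-c) * Λs (n + 1) ^ p := by
      rw [← Real.rpow_add (hΛpos n), neg_add_eq_sub]
    rw [e]
    have hne : Λs (n + 1) ^ p ≠ 0 := ne_of_gt (Real.rpow_pos_of_pos (hΛpos n) _)
    field_simp
  have hGeq : ∀ n : ℕ, l (n + 1) * Λs (n + 1) ^ (p - c) * x (n + 1) * As (n + 1) ^ (p - 1)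
      = l (n + 1) * x (n + 1) * Λs (n + 1) ^ (1 - c) * Tt (n + 1) ^ (p - 1) := by
    intro n
    rw [hAseq n, Real.div_rpow (hTpos n).le (hΛpos n).le]
    have e : Λs (n + 1) ^ (p - c) = Λs (n + 1) ^ (1 - c) * Λs (n + 1) ^ (p - 1) := by
      rw [← Real.rpow_add (hΛpos n)]
      ring_nf
    rw [e]
    have hne : Λs (n + 1) ^ (p - 1) ≠ 0 := ne_of_gt (Real.rpow_pos_of_pos (hΛpos n) _)
    field_simp
  -- apply the core lemma
  have hcore := stmt8_core p c hp hc1 hcp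
    (fun m => l (m + 1)) (fun m => x (m + 1)) (fun m => Λs (m + 1)) (fun m => Tt (m + 1))
    (fun m => hl (m + 1) (by omega)) (fun m => hx (m + 1) (by omega))
    hΛpos hTpos
    (fun m => hΛrec m) (fun m => hTrec m)
    hTt0
    (fun n => l (n + 1) * Λs (n + 1) ^ (p - c) * x (n + 1) * As (n + 1) ^ (p - 1))
    (fun m => hGeq m)
    hs
  obtain ⟨hsF, hmain⟩ := hcore
  -- nonnegativity
  have hG0 : ∀ n : ℕ, 0 ≤ l (n + 1) * Λs (n + 1) ^ (p - c) * x (n + 1) * As (n + 1) ^ (p - 1) := by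
    intro n
    rw [hGeq n]
    have := hl (n + 1) (by omega); have := hx (n + 1) (by omega)
    have := hΛpos n; have := hTpos n
    positivity
  have hF0 : ∀ n : ℕ, 0 ≤ l (n + 1) * Λs (n + 1) ^ (-c) * Tt (n + 1) ^ p := by
    intro n
    have := hl (n + 1) (by omega); have := hΛpos n; have := hTpos n
    positivity
  calc ∑' n : ℕ, ENNReal.ofReal (l (n + 1) * Λs (n + 1) ^ (p - c) * As (n + 1) ^ p)
      = ∑' n : ℕ, ENNReal.ofReal (l (n + 1) * Λs (n + 1) ^ (-c) * Tt (n + 1) ^ p) :=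
        tsum_congr fun n => by rw [hFeq n]
    _ = ENNReal.ofReal (∑' n : ℕ, l (n + 1) * Λs (n + 1) ^ (-c) * Tt (n + 1) ^ p) :=
        (ENNReal.ofReal_tsum_of_nonneg hF0 hsF).symm
    _ ≤ ENNReal.ofReal (p / (c - 1) *
          ∑' n : ℕ, l (n + 1) * Λs (n + 1) ^ (p - c) * x (n + 1) * As (n + 1) ^ (p - 1)) :=
        ENNReal.ofReal_le_ofReal hmain
    _ = ENNReal.ofReal (p / (c - 1)) *
          ENNReal.ofReal (∑' n : ℕ, l (n + 1) * Λs (n + 1) ^ (p - c) * x (n + 1) * As (n + 1) ^ (p - 1)) :=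
        ENNReal.ofReal_mul (by positivity)
    _ = ENNReal.ofReal (p / (c - 1)) *
          ∑' n : ℕ, ENNReal.ofReal
            (l (n + 1) * Λs (n + 1) ^ (p - c) * x (n + 1) * As (n + 1) ^ (p - 1)) := by
        rw [ENNReal.ofReal_tsum_of_nonneg hG0 hs]
end

section
/- Let p>1 and 0<L<p. Let (λ_n)_{n≥1} be a positive real sequence with Λ_n = Σ_{k=1}^n λ_k. Suppose that for every integer n≥1 one has Σ_{k=1}^n (λ_k/Λ_n) · Π_{i=k}^n ( (Λ_{i+1}/λ_{i+1} − L/p) / (Λ_i/λ_i) )^{1/(p−1)} ≤ p/(p−L). Then for every nonnegative real sequence (x_n)_{n≥1} with Σ_{n=1}^∞ x_n^p < ∞, one has Σ_{n=1}^∞ ( (1/Λ_n) Σ_{k=1}^n λ_k x_k )^p ≤ (p/(p−L))^p Σ_{n=1}^∞ x_n^p. -/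
lemma sum_shift_aux {M : Type*} [AddCommMonoid M] (f : ℕ → M) (N : ℕ) :
    ∑ n ∈ Finset.range N, f (n + 1) = ∑ m ∈ Finset.Icc 1 N, f m := by
  rw [← Finset.Ico_add_one_right_eq_Icc, Finset.sum_Ico_eq_sum_range]
  exact Finset.sum_congr (by norm_num) fun i _ => by rw [Nat.add_comm]

/-- Theorem 3.1 on l^p norms of weighted mean matrices. -/
theorem stmt_11 (p L : ℝ) (hp : 1 < p) (hL0 : 0 < L) (hLp : L < p)
    (l : ℕ → ℝ) (hl : ∀ n, 1 ≤ n → 0 < l n)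
    (Λ : ℕ → ℝ) (hΛ : ∀ n, Λ n = ∑ k ∈ Finset.Icc 1 n, l k)
    (hcond : ∀ n, 1 ≤ n →
      ∑ k ∈ Finset.Icc 1 n, (l k / Λ n) *
        ∏ i ∈ Finset.Icc k n, ((Λ (i + 1) / l (i + 1) - L / p) / (Λ i / l i)) ^ (1 / (p - 1))
      ≤ p / (p - L))
    (x : ℕ → ℝ) (hx : ∀ n, 1 ≤ n → 0 ≤ x n)
    (hxsum : Summable fun n : ℕ => x (n + 1) ^ p) :
    ∑' n : ℕ, ENNReal.ofReal (((1 / Λ (n + 1)) * ∑ k ∈ Finset.Icc 1 (n + 1), l k * x k) ^ p)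
      ≤ ENNReal.ofReal ((p / (p - L)) ^ p) * ∑' n : ℕ, ENNReal.ofReal (x (n + 1) ^ p) := by
  classical
  have hp0 : 0 < p := lt_trans one_pos hp
  have hp1 : (0:ℝ) < p - 1 := sub_pos.2 hp
  have hpL : 0 < p - L := sub_pos.2 hLp
  set C := p / (p - L) with hCdef
  have hC0 : 0 < C := div_pos hp0 hpL
  have hΛpos : ∀ n, 1 ≤ n → 0 < Λ n := by
    intro n hn
    rw [hΛ]
    exact Finset.sum_pos (fun i hi => hl i (Finset.mem_Icc.mp hi).1)
      ⟨1, Finset.mem_Icc.mpr ⟨le_rfl, hn⟩⟩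
  have hΛsucc : ∀ n : ℕ, Λ (n + 1) = Λ n + l (n + 1) := by
    intro n
    rw [hΛ, hΛ, Finset.sum_Icc_succ_top (Nat.le_add_left 1 n)]
  have hdpos : ∀ i, 1 ≤ i → 0 < Λ (i + 1) / l (i + 1) - L / p := by
    intro i hi
    have hli := hl (i + 1) (by omega)
    have h1 : 1 < Λ (i + 1) / l (i + 1) := by
      rw [lt_div_iff₀ hli, hΛsucc]
      have := hΛpos i hi; linarith
    have h2 : L / p < 1 := (div_lt_one hp0).2 hLp
    linarith
  set g : ℕ → ℝ := fun i => (Λ i / l i) / (Λ (i + 1) / l (i + 1) - L / p) with hgdef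
  have hgpos : ∀ i, 1 ≤ i → 0 < g i := fun i hi =>
    div_pos (div_pos (hΛpos i hi) (hl i hi)) (hdpos i hi)
  set Q : ℕ → ℕ → ℝ := fun k n => ∏ i ∈ Finset.Icc k n, g i with hQdef
  have hQpos : ∀ k n, 1 ≤ k → 0 < Q k n := fun k n hk =>
    Finset.prod_pos fun i hi => hgpos i (le_trans hk (Finset.mem_Icc.mp hi).1)
  -- core telescoping identity
  have core : ∀ a b c : ℝ, 0 < a → 0 < b → 0 < c →
      ((a / b) / ((a + c) / c - L / p)) / a
        = C / b - C * ((a / b) / ((a + c) / c - L / p)) / c := by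
    intro a b c ha hb hc
    have he : (a + c) / c - L / p = ((a + c) * p - c * L) / (c * p) := by field_simp
    have hnum : 0 < (a + c) * p - c * L := by nlinarith
    rw [he, hCdef]
    field_simp
    ring
  have CI : ∀ m, 1 ≤ m → g m / Λ m = C / l m - C * g m / l (m + 1) := by
    intro m hm
    have h := core (Λ m) (l m) (l (m + 1)) (hΛpos m hm) (hl m hm) (hl (m + 1) (by omega))
    rw [← hΛsucc m] at h
    simpa only [hgdef] using h
  -- telescoping sum
  have E : ∀ k, 1 ≤ k → ∀ N, k ≤ N →
      ∑ n ∈ Finset.Icc k N, Q k n / Λ n = C / l k - C * Q k N / l (N + 1) := by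
    intro k hk N hN
    induction N, hN using Nat.le_induction with
    | base =>
      rw [Finset.Icc_self, Finset.sum_singleton]
      have h1 : Q k k = g k := by simp [hQdef]
      rw [h1]
      exact CI k hk
    | succ N hkN ih =>
      rw [Finset.sum_Icc_succ_top (by omega : k ≤ N + 1), ih]
      have hQs : Q k (N + 1) = Q k N * g (N + 1) := by
        simp only [hQdef]
        rw [Finset.prod_Icc_succ_top (by omega : k ≤ N + 1)]
      have hci := CI (N + 1) (by omega)
      rw [hQs]
      linear_combination (Q k N) * hci
  have S2 : ∀ k, 1 ≤ k → ∀ N : ℕ, l k * ∑ n ∈ Finset.Icc k N, Q k n / Λ n ≤ C := by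
    intro k hk N
    rcases le_or_gt k N with h | h
    · rw [E k hk N h]
      have h1 : 0 < C * Q k N / l (N + 1) :=
        div_pos (mul_pos hC0 (hQpos k N hk)) (hl (N + 1) (by omega))
      have h2 := hl k hk
      have h3 : l k * (C / l k) = C := by field_simp
      nlinarith
    · rw [Finset.Icc_eq_empty (by omega : ¬ k ≤ N)]
      simp [hC0.le]
  -- nonnegativity of the averages
  have hA0 : ∀ n, 1 ≤ n → 0 ≤ (1 / Λ n) * ∑ k ∈ Finset.Icc 1 n, l k * x k := by
    intro n hn
    exact mul_nonneg (one_div_nonneg.mpr (hΛpos n hn).le)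
      (Finset.sum_nonneg fun k hk => mul_nonneg (hl k (Finset.mem_Icc.mp hk).1).le
        (hx k (Finset.mem_Icc.mp hk).1))
  -- Step 1 : Jensen per row
  have S1 : ∀ n, 1 ≤ n →
      ((1 / Λ n) * ∑ k ∈ Finset.Icc 1 n, l k * x k) ^ p
        ≤ C ^ (p - 1) * ∑ k ∈ Finset.Icc 1 n, (l k / Λ n) * Q k n * x k ^ p := by
    intro n hn
    have hΛn := hΛpos n hn
    set W : ℕ → ℝ := fun k =>
      ∏ i ∈ Finset.Icc k n, ((Λ (i + 1) / l (i + 1) - L / p) / (Λ i / l i)) ^ (1 / (p - 1))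
      with hWdef
    have hWpos : ∀ k, 1 ≤ k → 0 < W k := by
      intro k hk
      apply Finset.prod_pos
      intro i hi
      have hi1 : 1 ≤ i := le_trans hk (Finset.mem_Icc.mp hi).1
      exact Real.rpow_pos_of_pos
        (div_pos (hdpos i hi1) (div_pos (hΛpos i hi1) (hl i hi1))) _
    have hWQ : ∀ k, 1 ≤ k → W k ^ (1 - p) = Q k n := by
      intro k hk
      have hQp := hQpos k n hk
      have h1 : W k = ((Q k n)⁻¹) ^ (1 / (p - 1)) := by
        rw [hWdef]
        simp only
        rw [Real.finset_prod_rpow _ _ (fun i hi => ?_) _]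
        · congr 1
          rw [hQdef]
          simp only
          rw [← Finset.prod_inv_distrib]
          exact Finset.prod_congr rfl fun i hi => by
            simp only [hgdef, inv_div]
        · have hi1 : 1 ≤ i := le_trans hk (Finset.mem_Icc.mp hi).1
          exact (div_pos (hdpos i hi1) (div_pos (hΛpos i hi1) (hl i hi1))).le
      rw [h1, ← Real.rpow_mul (inv_nonneg.mpr hQp.le)]
      have he : 1 / (p - 1) * (1 - p) = -1 := by
        field_simp
        ring
      rw [he, Real.rpow_neg_one, inv_inv]
    have hσC : (∑ k ∈ Finset.Icc 1 n, (l k / Λ n) * W k) ≤ C := by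
      have h := hcond n hn
      simp only [hWdef]
      exact h
    have hσpos : 0 < ∑ k ∈ Finset.Icc 1 n, (l k / Λ n) * W k := by
      apply Finset.sum_pos
      · intro k hk
        exact mul_pos (div_pos (hl k (Finset.mem_Icc.mp hk).1) hΛn)
          (hWpos k (Finset.mem_Icc.mp hk).1)
      · exact ⟨1, Finset.mem_Icc.mpr ⟨le_rfl, hn⟩⟩
    set σ := ∑ k ∈ Finset.Icc 1 n, (l k / Λ n) * W k with hσdef
    have hxk : ∀ k ∈ Finset.Icc 1 n, 0 ≤ x k / W k := fun k hk =>
      div_nonneg (hx k (Finset.mem_Icc.mp hk).1) (hWpos k (Finset.mem_Icc.mp hk).1).le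
    have J := Real.rpow_arith_mean_le_arith_mean_rpow (Finset.Icc 1 n)
      (fun k => (l k / Λ n) * W k / σ) (fun k => x k / W k)
      (fun k hk => div_nonneg (mul_nonneg (div_nonneg (hl k (Finset.mem_Icc.mp hk).1).le hΛn.le)
        (hWpos k (Finset.mem_Icc.mp hk).1).le) hσpos.le)
      (by rw [← Finset.sum_div, ← hσdef]; exact div_self hσpos.ne')
      hxk hp.le
    have key1 : σ * ∑ k ∈ Finset.Icc 1 n, ((l k / Λ n) * W k / σ) * (x k / W k)
        = (1 / Λ n) * ∑ k ∈ Finset.Icc 1 n, l k * x k := by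
      rw [Finset.mul_sum, Finset.mul_sum]
      apply Finset.sum_congr rfl
      intro k hk
      obtain ⟨hk1, -⟩ := Finset.mem_Icc.mp hk
      have hW := (hWpos k hk1).ne'
      have hΛ' := hΛn.ne'
      have hσ' := hσpos.ne'
      field_simp
    calc ((1 / Λ n) * ∑ k ∈ Finset.Icc 1 n, l k * x k) ^ p
        = σ ^ p * (∑ k ∈ Finset.Icc 1 n, ((l k / Λ n) * W k / σ) * (x k / W k)) ^ p := by
          rw [← key1, Real.mul_rpow hσpos.le (Finset.sum_nonneg fun k hk =>
            mul_nonneg (div_nonneg (mul_nonneg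
              (div_nonneg (hl k (Finset.mem_Icc.mp hk).1).le hΛn.le)
              (hWpos k (Finset.mem_Icc.mp hk).1).le) hσpos.le) (hxk k hk))]
      _ ≤ σ ^ p * ∑ k ∈ Finset.Icc 1 n, ((l k / Λ n) * W k / σ) * (x k / W k) ^ p :=
          mul_le_mul_of_nonneg_left J (Real.rpow_nonneg hσpos.le p)
      _ = σ ^ (p - 1) * ∑ k ∈ Finset.Icc 1 n, (l k / Λ n) * Q k n * x k ^ p := by
          have hσp : σ ^ p = σ ^ (p - 1) * σ := by
            rw [← Real.rpow_add_one hσpos.ne' (p - 1)]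
            norm_num
          rw [hσp, mul_assoc, Finset.mul_sum]
          congr 1
          apply Finset.sum_congr rfl
          intro k hk
          obtain ⟨hk1, -⟩ := Finset.mem_Icc.mp hk
          have hWp := hWpos k hk1
          rw [Real.div_rpow (hx k hk1) hWp.le, ← hWQ k hk1,
            Real.rpow_sub hWp 1 p, Real.rpow_one]
          have h1 := hσpos.ne'
          have h2 := hΛn.ne'
          have h3 := (Real.rpow_pos_of_pos hWp p).ne'
          field_simp
      _ ≤ C ^ (p - 1) * ∑ k ∈ Finset.Icc 1 n, (l k / Λ n) * Q k n * x k ^ p := by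
          apply mul_le_mul_of_nonneg_right
            (Real.rpow_le_rpow hσpos.le hσC (by linarith))
          apply Finset.sum_nonneg
          intro k hk
          obtain ⟨hk1, -⟩ := Finset.mem_Icc.mp hk
          exact mul_nonneg (mul_nonneg (div_nonneg (hl k hk1).le hΛn.le)
            (hQpos k n hk1).le) (Real.rpow_nonneg (hx k hk1) p)
  -- Step 3 : finite version of the theorem
  have S3 : ∀ N : ℕ,
      ∑ n ∈ Finset.Icc 1 N, ((1 / Λ n) * ∑ k ∈ Finset.Icc 1 n, l k * x k) ^ p
        ≤ C ^ p * ∑ k ∈ Finset.Icc 1 N, x k ^ p := by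
    intro N
    calc ∑ n ∈ Finset.Icc 1 N, ((1 / Λ n) * ∑ k ∈ Finset.Icc 1 n, l k * x k) ^ p
        ≤ ∑ n ∈ Finset.Icc 1 N, C ^ (p - 1) *
            ∑ k ∈ Finset.Icc 1 n, (l k / Λ n) * Q k n * x k ^ p :=
          Finset.sum_le_sum fun n hn => S1 n (Finset.mem_Icc.mp hn).1
      _ = C ^ (p - 1) * ∑ n ∈ Finset.Icc 1 N,
            ∑ k ∈ Finset.Icc 1 n, (l k / Λ n) * Q k n * x k ^ p :=
          (Finset.mul_sum _ _ _).symm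
      _ = C ^ (p - 1) * ∑ k ∈ Finset.Icc 1 N,
            ∑ n ∈ Finset.Icc k N, (l k / Λ n) * Q k n * x k ^ p := by
          congr 1
          exact Finset.sum_comm' (fun n k => by simp only [Finset.mem_Icc]; omega)
      _ ≤ C ^ (p - 1) * ∑ k ∈ Finset.Icc 1 N, C * x k ^ p := by
          apply mul_le_mul_of_nonneg_left ?_ (Real.rpow_nonneg hC0.le _)
          apply Finset.sum_le_sum
          intro k hk
          obtain ⟨hk1, -⟩ := Finset.mem_Icc.mp hk
          have hxp : 0 ≤ x k ^ p := Real.rpow_nonneg (hx k hk1) p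
          calc ∑ n ∈ Finset.Icc k N, (l k / Λ n) * Q k n * x k ^ p
              = x k ^ p * (l k * ∑ n ∈ Finset.Icc k N, Q k n / Λ n) := by
                rw [Finset.mul_sum, Finset.mul_sum]
                exact Finset.sum_congr rfl fun n _ => by ring
            _ ≤ x k ^ p * C := mul_le_mul_of_nonneg_left (S2 k hk1 N) hxp
            _ = C * x k ^ p := mul_comm _ _
      _ = C ^ p * ∑ k ∈ Finset.Icc 1 N, x k ^ p := by
          rw [← Finset.mul_sum, ← mul_assoc]
          congr 1
          rw [← Real.rpow_add_one hC0.ne' (p - 1)]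
          norm_num
  -- Step 4 : pass to the infinite sums
  rw [ENNReal.tsum_eq_iSup_sum]
  refine iSup_le fun s => ?_
  set N := s.sup id + 1 with hN
  have hsub : s ⊆ Finset.range N := fun n hn =>
    Finset.mem_range.mpr (Nat.lt_succ_of_le (Finset.le_sup (f := id) hn))
  calc ∑ n ∈ s, ENNReal.ofReal (((1 / Λ (n + 1)) * ∑ k ∈ Finset.Icc 1 (n + 1), l k * x k) ^ p)
      ≤ ∑ n ∈ Finset.range N,
          ENNReal.ofReal (((1 / Λ (n + 1)) * ∑ k ∈ Finset.Icc 1 (n + 1), l k * x k) ^ p) :=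
        Finset.sum_le_sum_of_subset hsub
    _ = ENNReal.ofReal (∑ n ∈ Finset.range N,
          ((1 / Λ (n + 1)) * ∑ k ∈ Finset.Icc 1 (n + 1), l k * x k) ^ p) :=
        (ENNReal.ofReal_sum_of_nonneg fun n _ =>
          Real.rpow_nonneg (hA0 (n + 1) (by omega)) p).symm
    _ ≤ ENNReal.ofReal (C ^ p * ∑ k ∈ Finset.Icc 1 N, x k ^ p) := by
        apply ENNReal.ofReal_le_ofReal
        rw [sum_shift_aux (fun m => ((1 / Λ m) * ∑ k ∈ Finset.Icc 1 m, l k * x k) ^ p) N]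
        exact S3 N
    _ = ENNReal.ofReal (C ^ p) * ENNReal.ofReal (∑ k ∈ Finset.Icc 1 N, x k ^ p) :=
        ENNReal.ofReal_mul (Real.rpow_nonneg hC0.le p)
    _ = ENNReal.ofReal (C ^ p) * ∑ k ∈ Finset.Icc 1 N, ENNReal.ofReal (x k ^ p) := by
        rw [ENNReal.ofReal_sum_of_nonneg
          (fun k hk => Real.rpow_nonneg (hx k (Finset.mem_Icc.mp hk).1) p)]
    _ = ENNReal.ofReal (C ^ p) * ∑ n ∈ Finset.range N, ENNReal.ofReal (x (n + 1) ^ p) := by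
        rw [sum_shift_aux (fun m => ENNReal.ofReal (x m ^ p)) N]
    _ ≤ ENNReal.ofReal (C ^ p) * ∑' n : ℕ, ENNReal.ofReal (x (n + 1) ^ p) :=
        mul_le_mul_right (ENNReal.sum_le_tsum _) _
end

section
/- Let p>1 and 0<L<p. Let (λ_n)_{n≥1} be a positive real sequence with Λ_n = Σ_{k=1}^n λ_k. Suppose that for every integer n≥1 one has Λ_{n+1}/λ_{n+1} ≤ (Λ_n/λ_n)·(1 − Lλ_n/(pΛ_n))^{1−p} + L/p. Then for every nonnegative real sequence (x_n)_{n≥1} with Σ_{n=1}^∞ x_n^p < ∞, one has Σ_{n=1}^∞ ( (1/Λ_n) Σ_{k=1}^n λ_k x_k )^p ≤ (p/(p−L))^p Σ_{n=1}^∞ x_n^p. -/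
/-- Tangent line inequality for rpow: convexity of `x ^ p` for `p ≥ 1`. -/
lemma stmt12_tangent {p : ℝ} (hp : 1 ≤ p) {x y : ℝ} (hx : 0 ≤ x) (hy : 0 < y) :
    y ^ p + p * y ^ (p - 1) * (x - y) ≤ x ^ p := by
  have hs : (-1 : ℝ) ≤ x / y - 1 := by
    have : 0 ≤ x / y := div_nonneg hx hy.le
    linarith
  have hB := one_add_mul_self_le_rpow_one_add hs hp
  have h1 : (1 : ℝ) + (x / y - 1) = x / y := by ring
  rw [h1, Real.div_rpow hx hy.le] at hB
  have hyp : (0 : ℝ) < y ^ p := Real.rpow_pos_of_pos hy p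
  have key := mul_le_mul_of_nonneg_right hB hyp.le
  rw [div_mul_cancel₀ _ hyp.ne'] at key
  have e : y ^ p + p * y ^ (p - 1) * (x - y) = (1 + p * (x / y - 1)) * y ^ p := by
    rw [Real.rpow_sub hy p 1, Real.rpow_one]
    field_simp
  rw [e]; exact key

/-- The core pointwise inequality: exact minimization of
`U^p X^p + U(μ-1)B^p` over admissible `B` gives `U μ^p (μ-c)^(1-p) A^p`. -/
lemma stmt12_core {p c : ℝ} (hp : 1 < p) (hc0 : 0 < c) (hc1 : c < 1)
    {μ A B : ℝ} (hμ : 1 ≤ μ) (hA : 0 ≤ A) (hB : 0 ≤ B)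
    (hX : 0 ≤ μ * A - (μ - 1) * B) :
    (1 - c)⁻¹ * μ ^ p * (μ - c) ^ (1 - p) * A ^ p ≤
      ((1 - c)⁻¹) ^ p * (μ * A - (μ - 1) * B) ^ p + (1 - c)⁻¹ * (μ - 1) * B ^ p := by
  have ht : (0:ℝ) < 1 - c := by linarith
  have hd : (0:ℝ) < μ - c := by linarith
  have hμ0 : (0:ℝ) < μ := by linarith
  have hk : (0:ℝ) ≤ μ - 1 := by linarith
  have hpne : p ≠ 0 := by positivity
  rcases hA.eq_or_lt with h0 | hApos
  · -- A = 0
    have hA0 : A = 0 := h0.symm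
    subst hA0
    have h1 : (μ - 1) * B = 0 :=
      le_antisymm (by linarith [hX]) (mul_nonneg hk hB)
    have hXz : μ * (0:ℝ) - (μ - 1) * B = 0 := by rw [h1]; ring
    rw [hXz, Real.zero_rpow hpne]
    have : (0:ℝ) ≤ (1 - c)⁻¹ * (μ - 1) * B ^ p :=
      mul_nonneg (mul_nonneg (inv_nonneg.mpr ht.le) hk) (Real.rpow_nonneg hB p)
    nlinarith
  · set X := μ * A - (μ - 1) * B with hXdef
    set b := μ / (μ - c) * A with hbdef
    have hbpos : 0 < b := mul_pos (div_pos hμ0 hd) hApos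
    set z := (1 - c) * b with hzdef
    have hzpos : 0 < z := mul_pos ht hbpos
    have h1 := stmt12_tangent hp.le hX hzpos
    have h2 := stmt12_tangent hp.le hB hbpos
    have htp : (0:ℝ) < (1 - c) ^ p := Real.rpow_pos_of_pos ht p
    have hdp : (0:ℝ) < (μ - c) ^ p := Real.rpow_pos_of_pos hd p
    have key1 := mul_le_mul_of_nonneg_left h1 (inv_nonneg.mpr htp.le)
    have key2 := mul_le_mul_of_nonneg_left h2 (mul_nonneg (inv_nonneg.mpr ht.le) hk)
    have hzp : z ^ p = (1 - c) ^ p * b ^ p := by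
      rw [hzdef]; exact Real.mul_rpow ht.le hbpos.le
    have hzp1 : z ^ (p - 1) = (1 - c) ^ (p - 1) * b ^ (p - 1) := by
      rw [hzdef]; exact Real.mul_rpow ht.le hbpos.le
    have htp1 : (1 - c) ^ (p - 1) = (1 - c) ^ p / (1 - c) := by
      rw [Real.rpow_sub ht, Real.rpow_one]
    have hbp : b ^ p = μ ^ p * A ^ p / (μ - c) ^ p := by
      rw [hbdef, Real.mul_rpow (div_nonneg hμ0.le hd.le) hApos.le,
        Real.div_rpow hμ0.le hd.le]
      ring
    have hd1p : (μ - c) ^ (1 - p) = (μ - c) / (μ - c) ^ p := by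
      rw [Real.rpow_sub hd, Real.rpow_one]
    have eqkey : ((1 - c) ^ p)⁻¹ * (z ^ p + p * z ^ (p - 1) * (X - z)) +
        ((1 - c)⁻¹ * (μ - 1)) * (b ^ p + p * b ^ (p - 1) * (B - b)) =
        (1 - c)⁻¹ * μ ^ p * (μ - c) ^ (1 - p) * A ^ p := by
      rw [hzp, hzp1, htp1, hbp, hd1p, hzdef, hXdef, hbdef]
      field_simp
      ring
    have hfin : (1 - c)⁻¹ * μ ^ p * (μ - c) ^ (1 - p) * A ^ p ≤
        ((1 - c) ^ p)⁻¹ * X ^ p + ((1 - c)⁻¹ * (μ - 1)) * B ^ p := by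
      rw [← eqkey]; exact add_le_add key1 key2
    calc (1 - c)⁻¹ * μ ^ p * (μ - c) ^ (1 - p) * A ^ p
        ≤ ((1 - c) ^ p)⁻¹ * X ^ p + ((1 - c)⁻¹ * (μ - 1)) * B ^ p := hfin
      _ = ((1 - c)⁻¹) ^ p * (μ * A - (μ - 1) * B) ^ p + (1 - c)⁻¹ * (μ - 1) * B ^ p := by
          rw [Real.inv_rpow ht.le, hXdef]

/-- Corollary (Theorem 1.2 of [G5]) on l^p norms of weighted mean matrices. -/
theorem stmt_12 (p L : ℝ) (hp : 1 < p) (hL0 : 0 < L) (hLp : L < p)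
    (l : ℕ → ℝ) (hl : ∀ n, 1 ≤ n → 0 < l n)
    (Λ : ℕ → ℝ) (hΛ : ∀ n, Λ n = ∑ k ∈ Finset.Icc 1 n, l k)
    (hcond : ∀ n, 1 ≤ n →
      Λ (n + 1) / l (n + 1)
        ≤ (Λ n / l n) * (1 - L * l n / (p * Λ n)) ^ (1 - p) + L / p)
    (x : ℕ → ℝ) (hx : ∀ n, 1 ≤ n → 0 ≤ x n)
    (hxsum : Summable fun n : ℕ => x (n + 1) ^ p) :
    ∑' n : ℕ, ENNReal.ofReal (((1 / Λ (n + 1)) * ∑ k ∈ Finset.Icc 1 (n + 1), l k * x k) ^ p)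
      ≤ ENNReal.ofReal ((p / (p - L)) ^ p) * ∑' n : ℕ, ENNReal.ofReal (x (n + 1) ^ p) := by
  have hp0 : (0:ℝ) < p := lt_trans one_pos hp
  have hpL : (0:ℝ) < p - L := by linarith
  set c : ℝ := L / p with hcdef
  have hc0 : 0 < c := div_pos hL0 hp0
  have hc1 : c < 1 := (div_lt_one hp0).mpr hLp
  have ht : (0:ℝ) < 1 - c := by linarith
  have hUeq : p / (p - L) = (1 - c)⁻¹ := by
    have h1 : 1 - c = (p - L) / p := by rw [hcdef]; field_simp
    rw [h1, inv_div]
  -- positivity facts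
  have hΛpos : ∀ n, 1 ≤ n → 0 < Λ n := by
    intro n hn
    rw [hΛ]
    apply Finset.sum_pos
    · intro i hi; exact hl i (Finset.mem_Icc.mp hi).1
    · exact ⟨1, Finset.mem_Icc.mpr ⟨le_refl 1, hn⟩⟩
  have hμge : ∀ n, 1 ≤ n → 1 ≤ Λ n / l n := by
    intro n hn
    rw [le_div_iff₀ (hl n hn), one_mul, hΛ]
    exact Finset.single_le_sum (f := l)
      (fun i hi => (hl i (Finset.mem_Icc.mp hi).1).le)
      (Finset.mem_Icc.mpr ⟨hn, le_refl n⟩)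
  set S : ℕ → ℝ := fun n => ∑ k ∈ Finset.Icc 1 n, l k * x k with hSdef
  set A : ℕ → ℝ := fun n => S n / Λ n with hAdef
  have hSnn : ∀ n, 0 ≤ S n := by
    intro n
    simp only [hSdef]
    exact Finset.sum_nonneg fun i hi =>
      mul_nonneg (hl i (Finset.mem_Icc.mp hi).1).le (hx i (Finset.mem_Icc.mp hi).1)
  have hAnn : ∀ n, 1 ≤ n → 0 ≤ A n := by
    intro n hn
    simp only [hAdef]
    exact div_nonneg (hSnn n) (hΛpos n hn).le
  have hΛrec : ∀ n, 1 ≤ n → Λ (n + 1) = Λ n + l (n + 1) := by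
    intro n hn
    rw [hΛ, hΛ]
    exact Finset.sum_Icc_succ_top (by omega) _
  have hSrec : ∀ n, S (n + 1) = S n + l (n + 1) * x (n + 1) := by
    intro n
    simp only [hSdef]
    exact Finset.sum_Icc_succ_top (by omega) _
  have hxid : ∀ n, 1 ≤ n →
      Λ (n + 1) / l (n + 1) * A (n + 1) - (Λ (n + 1) / l (n + 1) - 1) * A n = x (n + 1) := by
    intro n hn
    have h1 := hΛpos n hn
    have h3 := hl (n + 1) (by omega)
    simp only [hAdef]
    rw [hSrec n, hΛrec n hn]
    have h4 : (0:ℝ) < Λ n + l (n + 1) := by linarith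
    field_simp
    ring
  -- rewrite of the hypothesis
  have hstep : ∀ n, 1 ≤ n →
      Λ (n + 1) / l (n + 1) - c ≤ (Λ n / l n) ^ p * (Λ n / l n - c) ^ (1 - p) := by
    intro n hn
    have hμ := hμge n hn
    have hμpos : (0:ℝ) < Λ n / l n := lt_of_lt_of_le one_pos hμ
    have hdpos : (0:ℝ) < Λ n / l n - c := by linarith
    have e1 : 1 - L * l n / (p * Λ n) = (Λ n / l n - c) / (Λ n / l n) := by
      rw [hcdef]
      have h1 := (hΛpos n hn).ne'
      have h2 := (hl n hn).ne'
      field_simp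
    have e2 : Λ n / l n * ((Λ n / l n - c) / (Λ n / l n)) ^ (1 - p)
        = (Λ n / l n) ^ p * (Λ n / l n - c) ^ (1 - p) := by
      have key : Λ n / l n / (Λ n / l n) ^ (1 - p) = (Λ n / l n) ^ p := by
        rw [div_eq_iff (Real.rpow_pos_of_pos hμpos (1 - p)).ne', ← Real.rpow_add hμpos]
        norm_num
      rw [Real.div_rpow hdpos.le hμpos.le, ← key]
      ring
    have hc := hcond n hn
    rw [e1, e2] at hc
    linarith
  -- consequence of the condition used in the induction
  have hcond2 : ∀ n, 1 ≤ n →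
      (1 - c)⁻¹ * (Λ (n + 1) / l (n + 1) - 1)
        ≤ (1 - c)⁻¹ * ((Λ n / l n) ^ p * (Λ n / l n - c) ^ (1 - p)) - 1 := by
    intro n hn
    have h := mul_le_mul_of_nonneg_left (hstep n hn) (inv_nonneg.mpr ht.le)
    have hU1 : (1 - c)⁻¹ * (1 - c) = 1 := inv_mul_cancel₀ ht.ne'
    have expand : (1 - c)⁻¹ * (Λ (n + 1) / l (n + 1) - 1)
        = (1 - c)⁻¹ * (Λ (n + 1) / l (n + 1) - c) - (1 - c)⁻¹ * (1 - c) := by ring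
    rw [expand, hU1]
    linarith
  -- the invariant weight is at least 1
  have hone : ∀ n, 1 ≤ n →
      1 ≤ (1 - c)⁻¹ * ((Λ n / l n) ^ p * (Λ n / l n - c) ^ (1 - p)) := by
    intro n hn
    have hμ := hμge n hn
    have hμpos : (0:ℝ) < Λ n / l n := lt_of_lt_of_le one_pos hμ
    have hdpos : (0:ℝ) < Λ n / l n - c := by linarith
    have h1 : (Λ n / l n) ^ (1 - p) ≤ (Λ n / l n - c) ^ (1 - p) :=
      Real.rpow_le_rpow_of_nonpos hdpos (by linarith) (by linarith)
    have h2 : (Λ n / l n) ^ p * (Λ n / l n) ^ (1 - p) = Λ n / l n := by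
      rw [← Real.rpow_add hμpos]; norm_num
    have hμp : (0:ℝ) < (Λ n / l n) ^ p := Real.rpow_pos_of_pos hμpos p
    have hU1 : 1 ≤ (1 - c)⁻¹ := by
      rw [le_inv_comm₀ one_pos ht]
      linarith
    have h3 : 1 ≤ (Λ n / l n) ^ p * (Λ n / l n - c) ^ (1 - p) := by
      calc (1:ℝ) ≤ Λ n / l n := hμ
        _ = (Λ n / l n) ^ p * (Λ n / l n) ^ (1 - p) := h2.symm
        _ ≤ (Λ n / l n) ^ p * (Λ n / l n - c) ^ (1 - p) :=
            mul_le_mul_of_nonneg_left h1 hμp.le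
    calc (1:ℝ) ≤ (Λ n / l n) ^ p * (Λ n / l n - c) ^ (1 - p) := h3
      _ ≤ (1 - c)⁻¹ * ((Λ n / l n) ^ p * (Λ n / l n - c) ^ (1 - p)) :=
          le_mul_of_one_le_left (by linarith) hU1
  -- main induction
  have main : ∀ N, 1 ≤ N →
      (∑ i ∈ Finset.range N, A (i + 1) ^ p)
          + (1 - c)⁻¹ * ((Λ N / l N) ^ p * (Λ N / l N - c) ^ (1 - p)) * A N ^ p
        ≤ ((1 - c)⁻¹) ^ p * (∑ i ∈ Finset.range N, x (i + 1) ^ p) + A N ^ p := by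
    intro N hN
    induction N, hN using Nat.le_induction with
    | base =>
      simp only [Finset.sum_range_one, Nat.zero_add]
      have hΛ1 : Λ 1 = l 1 := by rw [hΛ]; simp
      have hA1 : A 1 = x 1 := by
        simp only [hAdef, hSdef]
        rw [hΛ1]
        simp [mul_div_cancel_left₀ _ (hl 1 le_rfl).ne']
      have hμ1 : Λ 1 / l 1 = 1 := by rw [hΛ1]; exact div_self (hl 1 le_rfl).ne'
      rw [hA1, hμ1, Real.one_rpow]
      have htp : (0:ℝ) < (1 - c) ^ p := Real.rpow_pos_of_pos ht p
      have hid : (1 - c)⁻¹ * ((1:ℝ) * (1 - c) ^ (1 - p)) = ((1 - c)⁻¹) ^ p := by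
        rw [one_mul, Real.inv_rpow ht.le, Real.rpow_sub ht, Real.rpow_one]
        field_simp
      rw [hid]
      linarith
    | succ N hN ih =>
      rw [Finset.sum_range_succ, Finset.sum_range_succ]
      have hN1 : 1 ≤ N + 1 := by omega
      have hμ' := hμge (N + 1) hN1
      have hXnn : 0 ≤ Λ (N + 1) / l (N + 1) * A (N + 1)
          - (Λ (N + 1) / l (N + 1) - 1) * A N := by
        rw [hxid N hN]; exact hx (N + 1) hN1
      have hcore := stmt12_core hp hc0 hc1 hμ' (hAnn (N + 1) hN1) (hAnn N hN) hXnn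
      rw [hxid N hN] at hcore
      have hmul := mul_le_mul_of_nonneg_right (hcond2 N hN) (Real.rpow_nonneg (hAnn N hN) p)
      nlinarith [ih, hcore, hmul]
  -- drop the invariant term
  have final : ∀ N : ℕ,
      ∑ i ∈ Finset.range N, A (i + 1) ^ p
        ≤ ((1 - c)⁻¹) ^ p * ∑ i ∈ Finset.range N, x (i + 1) ^ p := by
    intro N
    rcases Nat.eq_zero_or_pos N with h0 | h1
    · subst h0; simp
    · have h := main N h1
      have h2 := hone N h1
      have h3 : 0 ≤ A N ^ p := Real.rpow_nonneg (hAnn N h1) p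
      have h4 : 0 ≤ ((1 - c)⁻¹ * ((Λ N / l N) ^ p * (Λ N / l N - c) ^ (1 - p)) - 1) * A N ^ p :=
        mul_nonneg (by linarith) h3
      nlinarith [h, h4]
  -- pass to the ENNReal tsum
  have hAgoal : ∀ n : ℕ,
      1 / Λ (n + 1) * ∑ k ∈ Finset.Icc 1 (n + 1), l k * x k = A (n + 1) := by
    intro n
    simp only [hAdef, hSdef]
    rw [one_div_mul_eq_div]
  have hUp : (p / (p - L)) ^ p = ((1 - c)⁻¹) ^ p := by rw [hUeq]
  simp only [hAgoal, hUp]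
  rw [ENNReal.tsum_eq_iSup_sum]
  refine iSup_le fun s => ?_
  obtain ⟨N, hN⟩ := s.exists_nat_subset_range
  have hUpnn : (0:ℝ) ≤ ((1 - c)⁻¹) ^ p := Real.rpow_nonneg (inv_nonneg.mpr ht.le) p
  calc ∑ i ∈ s, ENNReal.ofReal (A (i + 1) ^ p)
      ≤ ∑ i ∈ Finset.range N, ENNReal.ofReal (A (i + 1) ^ p) :=
        Finset.sum_le_sum_of_subset hN
    _ = ENNReal.ofReal (∑ i ∈ Finset.range N, A (i + 1) ^ p) :=
        (ENNReal.ofReal_sum_of_nonneg fun i _ =>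
          Real.rpow_nonneg (hAnn (i + 1) (by omega)) p).symm
    _ ≤ ENNReal.ofReal (((1 - c)⁻¹) ^ p * ∑ i ∈ Finset.range N, x (i + 1) ^ p) :=
        ENNReal.ofReal_le_ofReal (final N)
    _ = ENNReal.ofReal (((1 - c)⁻¹) ^ p)
          * ENNReal.ofReal (∑ i ∈ Finset.range N, x (i + 1) ^ p) :=
        ENNReal.ofReal_mul hUpnn
    _ = ENNReal.ofReal (((1 - c)⁻¹) ^ p)
          * ∑ i ∈ Finset.range N, ENNReal.ofReal (x (i + 1) ^ p) := by
        rw [ENNReal.ofReal_sum_of_nonneg fun i _ => Real.rpow_nonneg (hx (i + 1) (by omega)) p]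
    _ ≤ ENNReal.ofReal (((1 - c)⁻¹) ^ p) * ∑' n : ℕ, ENNReal.ofReal (x (n + 1) ^ p) :=
        mul_le_mul_right (ENNReal.sum_le_tsum _) _
end

section
/- Let p>1 and let (λ_n)_{n≥1} be a positive real sequence with Λ_n = Σ_{k=1}^n λ_k. Suppose L = sup_{n≥1} ( Λ_{n+1}/λ_{n+1} − Λ_n/λ_n ) satisfies L < p. Then for every nonnegative real sequence (x_n)_{n≥1} with Σ_{n=1}^∞ x_n^p < ∞, one has Σ_{n=1}^∞ ( (1/Λ_n) Σ_{k=1}^n λ_k x_k )^p ≤ (p/(p−L))^p Σ_{n=1}^∞ x_n^p. -/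
/-- Cartlidge's theorem. -/
theorem stmt_13 (p : ℝ) (hp : 1 < p)
    (l : ℕ → ℝ) (hl : ∀ n, 1 ≤ n → 0 < l n)
    (Λ : ℕ → ℝ) (hΛ : ∀ n, Λ n = ∑ k ∈ Finset.Icc 1 n, l k)
    (L : ℝ)
    (hL : IsLUB (Set.range fun n : ℕ => Λ (n + 2) / l (n + 2) - Λ (n + 1) / l (n + 1)) L)
    (hLp : L < p)
    (x : ℕ → ℝ) (hx : ∀ n, 1 ≤ n → 0 ≤ x n)
    (hxsum : Summable fun n : ℕ => x (n + 1) ^ p) :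
    ∑' n : ℕ, ENNReal.ofReal (((1 / Λ (n + 1)) * ∑ k ∈ Finset.Icc 1 (n + 1), l k * x k) ^ p)
      ≤ ENNReal.ofReal ((p / (p - L)) ^ p) * ∑' n : ℕ, ENNReal.ofReal (x (n + 1) ^ p) := by
  have hp0 : (0:ℝ) < p := lt_trans one_pos hp
  have hp1 : (0:ℝ) < p - 1 := sub_pos.2 hp
  have hpL : (0:ℝ) < p - L := sub_pos.2 hLp
  set C : ℝ := p / (p - L) with hCdef
  have hC0 : 0 < C := div_pos hp0 hpL
  have hCpL : C * (p - L) = p := div_mul_cancel₀ _ hpL.ne'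
  -- Λ facts
  have hΛ0 : Λ 0 = 0 := by simp [hΛ]
  have hΛrec : ∀ n : ℕ, Λ (n+1) = Λ n + l (n+1) := by
    intro n
    rw [hΛ, hΛ, ← Finset.sum_Icc_succ_top (by omega : 1 ≤ n+1)]
  have hΛpos : ∀ n, 1 ≤ n → 0 < Λ n := by
    intro n hn
    rw [hΛ]
    apply Finset.sum_pos
    · intro k hk; exact hl k (Finset.mem_Icc.1 hk).1
    · exact ⟨1, Finset.mem_Icc.2 ⟨le_refl 1, hn⟩⟩
  -- w facts
  set w : ℕ → ℝ := fun n => Λ n / l n with hwdef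
  have hw1 : ∀ n, 1 ≤ n → 1 ≤ w n := by
    intro n hn
    have hln : 0 < l n := hl n hn
    rw [hwdef]
    rw [le_div_iff₀ hln, one_mul, hΛ]
    exact Finset.single_le_sum (fun k hk => (hl k (Finset.mem_Icc.1 hk).1).le)
      (Finset.mem_Icc.2 ⟨hn, le_refl n⟩)
  have hwdiff : ∀ n : ℕ, w (n+2) - w (n+1) ≤ L := fun n => hL.1 ⟨n, rfl⟩
  -- T and A
  set T : ℕ → ℝ := fun n => ∑ k ∈ Finset.Icc 1 n, l k * x k with hTdef
  have hT0 : T 0 = 0 := by simp [hTdef]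
  have hTrec : ∀ n : ℕ, T (n+1) = T n + l (n+1) * x (n+1) := by
    intro n
    rw [hTdef]
    exact Finset.sum_Icc_succ_top (by omega : 1 ≤ n+1) _
  have hTnn : ∀ n, 0 ≤ T n := by
    intro n
    apply Finset.sum_nonneg
    intro k hk
    exact mul_nonneg (hl k (Finset.mem_Icc.1 hk).1).le (hx k (Finset.mem_Icc.1 hk).1)
  set A : ℕ → ℝ := fun n => T n / Λ n with hAdef
  have hA0 : A 0 = 0 := by simp [hAdef, hΛ0]
  have hAnn : ∀ n, 0 ≤ A n := by
    intro n
    rcases Nat.eq_zero_or_pos n with h | h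
    · rw [h, hA0]
    · exact div_nonneg (hTnn n) (hΛpos n h).le
  have hTA : ∀ n, T n = Λ n * A n := by
    intro n
    rcases Nat.eq_zero_or_pos n with h | h
    · rw [h, hT0, hA0, mul_zero]
    · simp only [hAdef]
      rw [mul_comm]
      exact (div_mul_cancel₀ (T n) (hΛpos n h).ne').symm
  -- x identity
  have hxid : ∀ n : ℕ, x (n+1) = w (n+1) * A (n+1) - (w (n+1) - 1) * A n := by
    intro n
    have hln : l (n+1) ≠ 0 := (hl (n+1) (by omega)).ne'
    have h1 : l (n+1) * x (n+1) = Λ (n+1) * A (n+1) - Λ n * A n := by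
      rw [← hTA, ← hTA, hTrec]; ring
    have h2 : Λ n = Λ (n+1) - l (n+1) := by rw [hΛrec]; ring
    have h3 : w (n+1) * A (n+1) - (w (n+1) - 1) * A n
        = (Λ (n+1) * A (n+1) - Λ n * A n) / l (n+1) := by
      simp only [hwdef]
      rw [h2]
      field_simp
    rw [h3, ← h1, mul_div_cancel_left₀ _ hln]
  -- D
  set D : ℕ → ℝ := fun n => C * (w n - 1) / p with hDdef
  have hDnn : ∀ n, 0 ≤ D (n+1) := by
    intro n
    exact div_nonneg (mul_nonneg hC0.le (sub_nonneg.2 (hw1 (n+1) (by omega)))) hp0.le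
  -- conjugate exponent
  have hpq : p.HolderConjugate (p / (p-1)) := Real.HolderConjugate.conjExponent hp
  -- key step inequality
  have hkey : ∀ n : ℕ, (1 + D (n+2)) * A (n+1) ^ p
      ≤ C * x (n+1) * A (n+1) ^ (p-1) + D (n+1) * A n ^ p := by
    intro n
    set a : ℝ := A n with ha
    set b : ℝ := A (n+1) with hb
    have hann : 0 ≤ a := hAnn n
    have hbnn : 0 ≤ b := hAnn (n+1)
    have hbp : b ^ (p-1) * b = b ^ p := by
      rcases eq_or_lt_of_le hbnn with h | h
      · rw [← h, Real.zero_rpow hp0.ne', Real.zero_rpow hp1.ne', zero_mul]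
      · rw [← Real.rpow_add_one h.ne']; ring_nf
    -- Young
    have hY : a * b ^ (p-1) ≤ a ^ p / p + (p-1)/p * b ^ p := by
      have := Real.young_inequality_of_nonneg hann (Real.rpow_nonneg hbnn (p-1)) hpq
      have heq : (b ^ (p-1)) ^ (p/(p-1)) = b ^ p := by
        rw [← Real.rpow_mul hbnn]
        congr 1
        field_simp
      rw [heq] at this
      calc a * b ^ (p-1) ≤ a ^ p / p + b ^ p / (p/(p-1)) := this
        _ = a ^ p / p + (p-1)/p * b ^ p := by
            rw [div_div_eq_mul_div]; ring
    -- coefficient inequality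
    have hco : p ≤ C * (w (n+1) + p - w (n+2)) := by
      have h1 : p - L ≤ w (n+1) + p - w (n+2) := by
        have := hwdiff n; linarith
      calc p = C * (p - L) := hCpL.symm
        _ ≤ C * (w (n+1) + p - w (n+2)) := by
            exact mul_le_mul_of_nonneg_left h1 hC0.le
    have hcoef : 1 + C * (w (n+2) - 1) / p ≤ C * w (n+1) - C * (w (n+1) - 1) * ((p-1)/p) := by
      rw [← sub_nonneg]
      have hrw : C * w (n+1) - C * (w (n+1) - 1) * ((p-1)/p) - (1 + C * (w (n+2) - 1) / p)
          = (C * (w (n+1) + p - w (n+2)) - p) / p := by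
        field_simp
        ring
      rw [hrw]
      exact div_nonneg (by linarith) hp0.le
    have hCw : 0 ≤ C * (w (n+1) - 1) :=
      mul_nonneg hC0.le (sub_nonneg.2 (hw1 (n+1) (by omega)))
    have hexpand : C * x (n+1) * b ^ (p-1)
        = C * w (n+1) * b ^ p - C * (w (n+1) - 1) * (a * b ^ (p-1)) := by
      rw [hxid n, ← hb, ← ha, ← hbp]; ring
    have hYmul : C * (w (n+1) - 1) * (a * b ^ (p-1))
        ≤ C * (w (n+1) - 1) * (a ^ p / p + (p-1)/p * b ^ p) :=
      mul_le_mul_of_nonneg_left hY hCw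
    have hbpnn : 0 ≤ b ^ p := Real.rpow_nonneg hbnn p
    have hcoefmul : (1 + C * (w (n+2) - 1) / p) * b ^ p
        ≤ (C * w (n+1) - C * (w (n+1) - 1) * ((p-1)/p)) * b ^ p :=
      mul_le_mul_of_nonneg_right hcoef hbpnn
    have hDval1 : D (n+1) = C * (w (n+1) - 1) / p := rfl
    have hDval2 : D (n+2) = C * (w (n+2) - 1) / p := rfl
    rw [hDval1, hDval2, hexpand]
    have h0 : 0 ≤ C * (w (n+1) - 1) * (a ^ p / p + (p-1)/p * b ^ p)
        - C * (w (n+1) - 1) * (a * b ^ (p-1)) := sub_nonneg.2 hYmul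
    calc (1 + C * (w (n+2) - 1) / p) * b ^ p
        ≤ (C * w (n+1) - C * (w (n+1) - 1) * ((p-1)/p)) * b ^ p := hcoefmul
      _ = (C * w (n+1) * b ^ p - C * (w (n+1) - 1) * (a * b ^ (p-1))
            + C * (w (n+1) - 1) / p * a ^ p)
          - (C * (w (n+1) - 1) * (a ^ p / p + (p-1)/p * b ^ p)
            - C * (w (n+1) - 1) * (a * b ^ (p-1))) := by ring
      _ ≤ C * w (n+1) * b ^ p - C * (w (n+1) - 1) * (a * b ^ (p-1))
            + C * (w (n+1) - 1) / p * a ^ p := by linarith [h0]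
  -- induction
  have hmain : ∀ N : ℕ, (∑ n ∈ Finset.range N, A (n+1) ^ p) + D (N+1) * A N ^ p
      ≤ C * ∑ n ∈ Finset.range N, x (n+1) * A (n+1) ^ (p-1) := by
    intro N
    induction N with
    | zero => simp [hA0, Real.zero_rpow hp0.ne']
    | succ N ih =>
        rw [Finset.sum_range_succ, Finset.sum_range_succ, mul_add]
        have := hkey N
        linarith
  have hS : ∀ N : ℕ, (∑ n ∈ Finset.range N, A (n+1) ^ p)
      ≤ C * ∑ n ∈ Finset.range N, x (n+1) * A (n+1) ^ (p-1) := by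
    intro N
    have h1 := hmain N
    have h2 : 0 ≤ D (N+1) * A N ^ p := by
      rcases Nat.eq_zero_or_pos N with h | h
      · rw [h, hA0, Real.zero_rpow hp0.ne', mul_zero]
      · obtain ⟨M, rfl⟩ := Nat.exists_eq_add_of_lt h
        exact mul_nonneg (hDnn _) (Real.rpow_nonneg (hAnn _) p)
    linarith
  -- X
  set X : ℝ := ∑' n : ℕ, x (n+1) ^ p with hXdef
  have hxnn : ∀ n : ℕ, 0 ≤ x (n+1) ^ p := fun n => Real.rpow_nonneg (hx (n+1) (by omega)) p
  have hX0 : 0 ≤ X := tsum_nonneg hxnn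
  have hpart : ∀ N : ℕ, ∑ n ∈ Finset.range N, x (n+1) ^ p ≤ X :=
    fun N => Summable.sum_le_tsum (Finset.range N) (fun n _ => hxnn n) hxsum
  -- main finite bound
  have hbound : ∀ N : ℕ, (∑ n ∈ Finset.range N, A (n+1) ^ p) ≤ C ^ p * X := by
    intro N
    set S : ℝ := ∑ n ∈ Finset.range N, A (n+1) ^ p with hSdef
    have hSnn : 0 ≤ S :=
      Finset.sum_nonneg fun n _ => Real.rpow_nonneg (hAnn (n+1)) p
    -- Hölder
    have hHolder : ∑ n ∈ Finset.range N, x (n+1) * A (n+1) ^ (p-1)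
        ≤ (∑ n ∈ Finset.range N, x (n+1) ^ p) ^ (1/p) * S ^ (1/(p/(p-1))) := by
      have h := Real.inner_le_Lp_mul_Lq_of_nonneg (s := Finset.range N)
        (f := fun n => x (n+1)) (g := fun n => A (n+1) ^ (p-1)) hpq
        (fun n _ => hx (n+1) (by omega))
        (fun n _ => Real.rpow_nonneg (hAnn (n+1)) (p-1))
      have heq : ∀ n : ℕ, (A (n+1) ^ (p-1)) ^ (p/(p-1)) = A (n+1) ^ p := by
        intro n
        rw [← Real.rpow_mul (hAnn (n+1))]
        congr 1
        field_simp
      calc ∑ n ∈ Finset.range N, x (n+1) * A (n+1) ^ (p-1)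
          ≤ (∑ n ∈ Finset.range N, x (n+1) ^ p) ^ (1/p)
            * (∑ n ∈ Finset.range N, (A (n+1) ^ (p-1)) ^ (p/(p-1))) ^ (1/(p/(p-1))) := h
        _ = (∑ n ∈ Finset.range N, x (n+1) ^ p) ^ (1/p) * S ^ (1/(p/(p-1))) := by
            rw [hSdef]
            congr 2
            exact Finset.sum_congr rfl fun n _ => heq n
    have hSle : S ≤ C * X ^ (1/p) * S ^ (1/(p/(p-1))) := by
      have hxp : (∑ n ∈ Finset.range N, x (n+1) ^ p) ^ (1/p) ≤ X ^ (1/p) :=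
        Real.rpow_le_rpow (Finset.sum_nonneg fun n _ => hxnn n) (hpart N)
          (by positivity)
      have h2 : ∑ n ∈ Finset.range N, x (n+1) * A (n+1) ^ (p-1)
          ≤ X ^ (1/p) * S ^ (1/(p/(p-1))) :=
        le_trans hHolder (mul_le_mul_of_nonneg_right hxp (Real.rpow_nonneg hSnn _))
      calc S ≤ C * ∑ n ∈ Finset.range N, x (n+1) * A (n+1) ^ (p-1) := hS N
        _ ≤ C * (X ^ (1/p) * S ^ (1/(p/(p-1)))) := mul_le_mul_of_nonneg_left h2 hC0.le
        _ = C * X ^ (1/p) * S ^ (1/(p/(p-1))) := by ring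
    rcases eq_or_lt_of_le hSnn with h | hSpos
    · rw [← h]
      positivity
    · -- S > 0
      have hq : 1/p + 1/(p/(p-1)) = 1 := by
        rw [one_div, one_div]; exact hpq.inv_add_inv_eq_one
      have hSsplit : S = S ^ (1/p) * S ^ (1/(p/(p-1))) := by
        rw [← Real.rpow_add hSpos, hq, Real.rpow_one]
      have hSq : 0 < S ^ (1/(p/(p-1))) := Real.rpow_pos_of_pos hSpos _
      have h3 : S ^ (1/p) ≤ C * X ^ (1/p) := by
        have := hSle
        rw [hSsplit] at this
        exact le_of_mul_le_mul_right (by linarith) hSq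
      have h4 : (S ^ (1/p)) ^ p ≤ (C * X ^ (1/p)) ^ p :=
        Real.rpow_le_rpow (Real.rpow_nonneg hSnn _) h3 hp0.le
      have h5 : (S ^ (1/p)) ^ p = S := by
        rw [← Real.rpow_mul hSnn, one_div, inv_mul_cancel₀ hp0.ne', Real.rpow_one]
      have h6 : (C * X ^ (1/p)) ^ p = C ^ p * X := by
        rw [Real.mul_rpow hC0.le (Real.rpow_nonneg hX0 _), ← Real.rpow_mul hX0,
          one_div, inv_mul_cancel₀ hp0.ne', Real.rpow_one]
      rw [h5, h6] at h4
      exact h4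
  -- ENNReal conclusion
  have hgoal_eq : ∀ n : ℕ,
      (1 / Λ (n+1)) * ∑ k ∈ Finset.Icc 1 (n+1), l k * x k = A (n+1) := by
    intro n
    rw [hAdef, hTdef, one_div, inv_mul_eq_div]
  have hRHS : ∑' n : ℕ, ENNReal.ofReal (x (n+1) ^ p) = ENNReal.ofReal X := by
    rw [hXdef, ENNReal.ofReal_tsum_of_nonneg hxnn hxsum]
  calc ∑' n : ℕ, ENNReal.ofReal (((1 / Λ (n + 1)) * ∑ k ∈ Finset.Icc 1 (n + 1), l k * x k) ^ p)
      = ∑' n : ℕ, ENNReal.ofReal (A (n+1) ^ p) := by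
        apply tsum_congr
        intro n
        rw [hgoal_eq n]
    _ ≤ ENNReal.ofReal (C ^ p * X) := by
        rw [ENNReal.tsum_eq_iSup_sum]
        apply iSup_le
        intro s
        obtain ⟨N, hN⟩ := Finset.exists_nat_subset_range s
        calc ∑ n ∈ s, ENNReal.ofReal (A (n+1) ^ p)
            ≤ ∑ n ∈ Finset.range N, ENNReal.ofReal (A (n+1) ^ p) :=
              Finset.sum_le_sum_of_subset hN
          _ = ENNReal.ofReal (∑ n ∈ Finset.range N, A (n+1) ^ p) :=
              (ENNReal.ofReal_sum_of_nonneg fun n _ => Real.rpow_nonneg (hAnn (n+1)) p).symm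
          _ ≤ ENNReal.ofReal (C ^ p * X) := ENNReal.ofReal_le_ofReal (hbound N)
    _ = ENNReal.ofReal (C ^ p) * ENNReal.ofReal X :=
        ENNReal.ofReal_mul (Real.rpow_nonneg hC0.le p)
    _ = ENNReal.ofReal ((p / (p - L)) ^ p) * ∑' n : ℕ, ENNReal.ofReal (x (n+1) ^ p) := by
        rw [hRHS, hCdef]
end
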